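/- arXiv:1810.02963 — 5 statements merged into one kernel-verified Lean document; each statement's English description precedes it below -/
import Mathlib

section
/- Let G be a finite simple graph and let V(G) = V_1 ∪ V_2 ∪ ⋯ ∪ V_r be a partition of its vertex set into r ≥ 2 parts. Then lbox(G) ≤ (r − 1) · max over all pairs 1 ≤ i < j ≤ r of lbox(G[V_i ∪ V_j]), where G[V_i ∪ V_j] is the subgraph of G induced on V_i ∪ V_j. -/
open Classical

/-- A finite simple graph is an interval graph if each vertex can be assigned a
closed real interval so that distinct vertices are adjacent iff their intervals
intersect. -/
def IsIntervalGraph {V : Type} (I : SimpleGraph V) : Prop :=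
  ∃ l r : V → ℝ, ∀ u v : V, u ≠ v →
    (I.Adj u v ↔ (Set.Icc (l u) (r u) ∩ Set.Icc (l v) (r v)).Nonempty)

/-- A vertex is universal if it is adjacent to every other vertex. -/
def IsUniversal {V : Type} (I : SimpleGraph V) (v : V) : Prop :=
  ∀ u : V, u ≠ v → I.Adj v u

/-- `G` has a local box representation where every vertex is non-universal in at
most `t` of the interval graphs. -/
def LocalBoxRep {V : Type} (G : SimpleGraph V) (t : ℕ) : Prop :=
  ∃ (k : ℕ) (I : Fin k → SimpleGraph V),
    (∀ i, IsIntervalGraph (I i)) ∧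
    (∀ u v : V, u ≠ v → (G.Adj u v ↔ ∀ i, (I i).Adj u v)) ∧
    (∀ v : V, {i : Fin k | ¬ IsUniversal (I i) v}.ncard ≤ t)

/-- Local boxicity of a graph. -/
noncomputable def lbox {V : Type} (G : SimpleGraph V) : ℕ :=
  sInf {t : ℕ | LocalBoxRep G t}

/-- Iterated base-2 logarithm: the number of times `logb 2` must be applied
before the result becomes at most 1. -/
noncomputable def logStar (x : ℝ) : ℕ :=
  sInf {n : ℕ | (Real.logb 2)^[n] x ≤ 1}

/-- A graph is claw-free if it has no induced `K_{1,3}`. -/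
def ClawFree {V : Type} (G : SimpleGraph V) : Prop :=
  ∀ v a b c : V, a ≠ b → a ≠ c → b ≠ c →
    ¬ (G.Adj v a ∧ G.Adj v b ∧ G.Adj v c ∧ ¬ G.Adj a b ∧ ¬ G.Adj a c ∧ ¬ G.Adj b c)

/-- Comparability graph of a poset. -/
def compGraph (α : Type) [PartialOrder α] : SimpleGraph α where
  Adj x y := x ≠ y ∧ (x ≤ y ∨ y ≤ x)
  symm := by
    constructor
    intro x y h
    exact ⟨h.1.symm, h.2.symm⟩
  loopless := by
    constructor
    intro x h
    exact h.1 rfl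

/-- A partial linear extension of a poset, given as a duplicate-free list
(ordered by position) which extends the partial order on its elements. -/
def IsPLE {α : Type} [PartialOrder α] [DecidableEq α] (L : List α) : Prop :=
  L.Nodup ∧ ∀ x ∈ L, ∀ y ∈ L, x ≤ y → L.idxOf x ≤ L.idxOf y

/-- `x` appears below `y` in the list `L`. -/
def Below {α : Type} [DecidableEq α] (L : List α) (x y : α) : Prop :=
  x ∈ L ∧ y ∈ L ∧ L.idxOf x < L.idxOf y

/-- A local realizer of a poset: a family of ple's such that every strict
relation is witnessed, and every incomparable pair is reversed twice. -/
def IsLocalRealizer {α : Type} [PartialOrder α] [DecidableEq α] {k : ℕ}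
    (L : Fin k → List α) : Prop :=
  (∀ i, IsPLE (L i)) ∧
  (∀ x y : α, x < y → ∃ i, Below (L i) x y) ∧
  (∀ x y : α, ¬ x ≤ y → ¬ y ≤ x →
    (∃ i, Below (L i) x y) ∧ (∃ i, Below (L i) y x))

/-- Local dimension of a poset: the least `t` such that some local realizer has
every element in at most `t` ple's. -/
noncomputable def ldim (α : Type) [PartialOrder α] [DecidableEq α] : ℕ :=
  sInf {t : ℕ | ∃ (k : ℕ) (L : Fin k → List α), IsLocalRealizer L ∧
    ∀ x : α, {i : Fin k | x ∈ L i}.ncard ≤ t}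

/-- Product dimension of a graph. -/
noncomputable def prodDim {V : Type} (G : SimpleGraph V) : ℕ :=
  sInf {k : ℕ | 0 < k ∧ ∃ f : V → Fin k → ℕ,
    ∀ u v : V, u ≠ v → (G.Adj u v ↔ ∀ i, f u i ≠ f v i)}

/-- A poset has height at most 2: every chain has at most 2 elements. -/
def HeightAtMostTwo (α : Type) [Preorder α] : Prop :=
  ∀ x y z : α, x ≤ y → y ≤ z → x = y ∨ y = z

-- interval graph from a representation
noncomputable def igraph {V : Type} (l r : V → ℝ) : SimpleGraph V where
  Adj u v := u ≠ v ∧ (Set.Icc (l u) (r u) ∩ Set.Icc (l v) (r v)).Nonempty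
  symm := by constructor; rintro u v ⟨h1, h2⟩; exact ⟨h1.symm, by rwa [Set.inter_comm]⟩
  loopless := ⟨fun v h => h.1 rfl⟩

lemma igraph_interval {V : Type} (l r : V → ℝ) : IsIntervalGraph (igraph l r) :=
  ⟨l, r, fun u v h => ⟨fun a => a.2, fun a => ⟨h, a⟩⟩⟩

lemma icc_ne {a b c d : ℝ} :
    (Set.Icc a b ∩ Set.Icc c d).Nonempty ↔ max a c ≤ min b d := by
  rw [Set.Icc_inter_Icc, Set.nonempty_Icc]

-- every finite graph has some local box representation
lemma rep_nonempty {W : Type} [Fintype W] (H : SimpleGraph W) :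
    ∃ t, LocalBoxRep H t := by
  classical
  set k := Fintype.card (W × W) with hk
  let e : Fin k ≃ W × W := Fintype.equivFin (W × W) |>.symm
  let L : W × W → (W → ℝ) := fun p w =>
    if ¬ H.Adj p.1 p.2 ∧ p.1 ≠ p.2 then (if w = p.1 then 0 else if w = p.2 then 2 else 0) else 0
  let R : W × W → (W → ℝ) := fun p w =>
    if ¬ H.Adj p.1 p.2 ∧ p.1 ≠ p.2 then (if w = p.1 then 1 else 3) else 1
  refine ⟨k, k, fun i => igraph (L (e i)) (R (e i)), fun i => igraph_interval _ _, ?_, ?_⟩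
  · intro u v huv
    constructor
    · intro hadj i
      refine ⟨huv, ?_⟩
      rw [icc_ne]
      set p := e i with hp
      by_cases hsep : ¬ H.Adj p.1 p.2 ∧ p.1 ≠ p.2
      · simp only [L, R, if_pos hsep]
        by_cases hu1 : u = p.1
        · have hv2 : v ≠ p.2 := by
            rintro rfl; exact hsep.1 (hu1 ▸ hadj)
          by_cases hv1 : v = p.1
          · exact absurd (hu1.trans hv1.symm) huv
          · simp [hu1, hv1, hv2, hsep.2]
        · by_cases hu2 : u = p.2
          · have hv1 : v ≠ p.1 := by
              rintro rfl; exact hsep.1 (hu2 ▸ hadj.symm)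
            by_cases hv2 : v = p.2
            · exact absurd (hu2.trans hv2.symm) huv
            · simp [hu1, hu2, hv1, hv2, hsep.2.symm]; norm_num
          · by_cases hv1 : v = p.1
            · simp [hu1, hu2, hv1]
            · by_cases hv2 : v = p.2
              · simp [hu1, hu2, hv1, hv2, Ne.symm hsep.2]; norm_num
              · simp [hu1, hu2, hv1, hv2]
      · simp [L, R, if_neg hsep]
    · intro hall
      by_contra hna
      have := (hall (e.symm (u, v))).2
      rw [icc_ne] at this
      have hpe : e (e.symm (u,v)) = (u,v) := e.apply_symm_apply _
      rw [hpe] at this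
      have hsep : ¬ H.Adj (u,v).1 (u,v).2 ∧ (u,v).1 ≠ (u,v).2 := ⟨hna, huv⟩
      simp only [L, R, if_pos hsep] at this
      simp [huv, huv.symm] at this
  · intro v
    refine le_trans (Set.ncard_le_ncard (Set.subset_univ _) (Set.finite_univ)) ?_
    simp [Set.ncard_univ]

/-- Extension of a graph on a subset to the whole vertex set, making outside
vertices universal. -/
def extGraph {V : Type} (S : Set V) (I : SimpleGraph S) : SimpleGraph V where
  Adj u v := u ≠ v ∧ ∀ (hu : u ∈ S) (hv : v ∈ S), I.Adj ⟨u, hu⟩ ⟨v, hv⟩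
  symm := by constructor; rintro u v ⟨h1, h2⟩; exact ⟨h1.symm, fun hv hu => (h2 hu hv).symm⟩
  loopless := ⟨fun v h => h.1 rfl⟩

lemma extGraph_interval {V : Type} [Fintype V] (S : Set V) (I : SimpleGraph S)
    (hI : IsIntervalGraph I) : IsIntervalGraph (extGraph S I) := by
  classical
  obtain ⟨l, r, hlr⟩ := hI
  let e : V → ℝ := fun v => ((Fintype.equivFin V v : ℕ) : ℝ)
  have he_inj : Function.Injective e := fun a b h => by
    have : (Fintype.equivFin V a : ℕ) = (Fintype.equivFin V b : ℕ) := Nat.cast_injective h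
    exact (Fintype.equivFin V).injective (Fin.ext this)
  have he0 : ∀ v, 0 ≤ e v := fun v => Nat.cast_nonneg _
  have heN : ∀ v, e v ≤ Fintype.card V := fun v => by
    have := (Fintype.equivFin V v).2
    simp only [e]
    exact_mod_cast this.le
  set R : ℝ := ∑ v : V, (if h : v ∈ S then |l ⟨v, h⟩| + |r ⟨v, h⟩| else 0) with hR
  have hterm : ∀ v : V, (0:ℝ) ≤ (if h : v ∈ S then |l ⟨v, h⟩| + |r ⟨v, h⟩| else 0) := by
    intro v; split
    · positivity
    · exact le_refl 0
  have hR0 : (0:ℝ) ≤ R := Finset.sum_nonneg (fun v _ => hterm v)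
  have hbound : ∀ s : S, |l s| + |r s| ≤ R := by
    intro s
    have h1 := Finset.single_le_sum (f := fun v : V => (if h : v ∈ S then |l ⟨v, h⟩| + |r ⟨v, h⟩| else 0))
      (fun v _ => hterm v) (Finset.mem_univ (s : V))
    have h2 : (if h : (s : V) ∈ S then |l ⟨(s : V), h⟩| + |r ⟨(s : V), h⟩| else 0) = |l s| + |r s| := by
      simp only [dif_pos s.2, Subtype.coe_eta]
    rw [hR, ← h2]
    exact h1
  have hlb : ∀ s : S, -R ≤ l s := fun s => by
    have := hbound s; have := abs_nonneg (r s); have := neg_abs_le (l s); linarith [hbound s]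
  have hla : ∀ s : S, l s ≤ R := fun s => by
    have := le_abs_self (l s); have := abs_nonneg (r s); linarith [hbound s]
  have hrb : ∀ s : S, r s ≤ R := fun s => by
    have := le_abs_self (r s); have := abs_nonneg (l s); linarith [hbound s]
  have hrlb : ∀ s : S, -R ≤ r s := fun s => by
    have := neg_abs_le (r s); have := abs_nonneg (l s); linarith [hbound s]
  set C : ℝ := R + 1 + Fintype.card V with hC
  set l' : V → ℝ := fun v =>
    if h : v ∈ S then (if l ⟨v, h⟩ ≤ r ⟨v, h⟩ then l ⟨v, h⟩ else R + 1 + e v) else -R with hl'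
  set r' : V → ℝ := fun v =>
    if h : v ∈ S then (if l ⟨v, h⟩ ≤ r ⟨v, h⟩ then r ⟨v, h⟩ else R + 1 + e v) else C with hr'
  have H1 : ∀ v, l' v ≤ r' v := by
    intro v; simp only [hl', hr']
    split
    · split
      · assumption
      · exact le_refl _
    · simp only [hC]; have := he0 v; have : (0:ℝ) ≤ (Fintype.card V : ℝ) := Nat.cast_nonneg _
      linarith
  have H2 : ∀ v, -R ≤ l' v := by
    intro v; simp only [hl']
    split
    · split
      · exact hlb _
      · have := he0 v; linarith
    · exact le_refl _
  have H3 : ∀ v, r' v ≤ C := by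
    intro v; simp only [hr', hC]
    split
    · split
      · have : (0:ℝ) ≤ (Fintype.card V : ℝ) := Nat.cast_nonneg _
        have := hrb ⟨v, ‹_›⟩; linarith
      · have := heN v; linarith
    · exact le_refl _
  refine ⟨l', r', ?_⟩
  intro u v huv
  by_cases hu : u ∈ S
  · by_cases hv : v ∈ S
    · -- both in S
      have hadj : (extGraph S I).Adj u v ↔ I.Adj ⟨u, hu⟩ ⟨v, hv⟩ := by
        constructor
        · intro h; exact h.2 hu hv
        · intro h; exact ⟨huv, fun hu' hv' => h⟩
      have hne : (⟨u, hu⟩ : S) ≠ ⟨v, hv⟩ := fun h => huv (congrArg Subtype.val h)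
      rw [hadj, hlr _ _ hne]
      by_cases hEu : l ⟨u, hu⟩ ≤ r ⟨u, hu⟩
      · by_cases hEv : l ⟨v, hv⟩ ≤ r ⟨v, hv⟩
        · simp only [hl', hr', dif_pos hu, dif_pos hv, if_pos hEu, if_pos hEv]
        · -- v empty
          rw [Set.Icc_eq_empty hEv, Set.inter_empty]
          simp only [hl', hr', dif_pos hu, dif_pos hv, if_pos hEu, if_neg hEv]
          constructor
          · intro h; exact (Set.not_nonempty_empty h).elim
          · rintro ⟨x, ⟨hx1, hx2⟩, ⟨hx3, hx4⟩⟩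
            have := hrb ⟨u, hu⟩; have := he0 v
            exfalso; linarith
      · -- u empty
        rw [Set.Icc_eq_empty hEu, Set.empty_inter]
        by_cases hEv : l ⟨v, hv⟩ ≤ r ⟨v, hv⟩
        · simp only [hl', hr', dif_pos hu, dif_pos hv, if_neg hEu, if_pos hEv]
          constructor
          · intro h; exact (Set.not_nonempty_empty h).elim
          · rintro ⟨x, ⟨hx1, hx2⟩, ⟨hx3, hx4⟩⟩
            have := hrb ⟨v, hv⟩; have := he0 u
            exfalso; linarith
        · simp only [hl', hr', dif_pos hu, dif_pos hv, if_neg hEu, if_neg hEv]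
          constructor
          · intro h; exact (Set.not_nonempty_empty h).elim
          · rintro ⟨x, ⟨hx1, hx2⟩, ⟨hx3, hx4⟩⟩
            have h1 : e u ≤ e v := by linarith
            have h2 : e v ≤ e u := by linarith
            exact (huv (he_inj (le_antisymm h1 h2))).elim
    · -- v outside : adjacency holds, intersection nonempty
      have hrv : r' v = C := by simp only [hr', dif_neg hv]
      have hlv : l' v = -R := by simp only [hl', dif_neg hv]
      constructor
      · intro _
        exact ⟨l' u, ⟨le_refl _, H1 u⟩, by rw [hlv, hrv]; exact ⟨H2 u, le_trans (H1 u) (H3 u)⟩⟩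
      · intro _
        exact ⟨huv, fun hu' hv' => absurd hv' hv⟩
  · -- u outside
    have hru : r' u = C := by simp only [hr', dif_neg hu]
    have hlu : l' u = -R := by simp only [hl', dif_neg hu]
    constructor
    · intro _
      exact ⟨l' v, by rw [hlu, hru]; exact ⟨H2 v, le_trans (H1 v) (H3 v)⟩, ⟨le_refl _, H1 v⟩⟩
    · intro _
      exact ⟨huv, fun hu' hv' => absurd hu' hu⟩

lemma extGraph_nonuniv {V : Type} (S : Set V) (I : SimpleGraph S) (v : V)
    (h : ¬ IsUniversal (extGraph S I) v) :
    ∃ hv : v ∈ S, ¬ IsUniversal I ⟨v, hv⟩ := by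
  by_cases hv : v ∈ S
  · refine ⟨hv, fun huniv => h ?_⟩
    intro u hu
    refine ⟨Ne.symm hu, fun hv' hu' => ?_⟩
    have : (⟨u, hu'⟩ : S) ≠ ⟨v, hv⟩ := fun hh => hu (congrArg Subtype.val hh)
    exact huniv ⟨u, hu'⟩ this
  · exfalso; apply h
    intro u hu
    exact ⟨Ne.symm hu, fun hv' _ => absurd hv' hv⟩

lemma extGraph_adj {V : Type} (S : Set V) (I : SimpleGraph S) (u v : V)
    (hu : u ∈ S) (hv : v ∈ S) (huv : u ≠ v) :
    (extGraph S I).Adj u v ↔ I.Adj ⟨u, hu⟩ ⟨v, hv⟩ :=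
  ⟨fun h => h.2 hu hv, fun h => ⟨huv, fun _ _ => h⟩⟩

lemma LocalBoxRep.mono {V : Type} {G : SimpleGraph V} {t t' : ℕ}
    (h : LocalBoxRep G t) (ht : t ≤ t') : LocalBoxRep G t' := by
  obtain ⟨k, I, h1, h2, h3⟩ := h
  exact ⟨k, I, h1, h2, fun v => le_trans (h3 v) ht⟩

lemma ncard_filter {α : Type} [Fintype α] (p : α → Prop) [DecidablePred p] :
    (Finset.univ.filter p).card = {x | p x}.ncard := by
  have h : {x | p x} = ↑(Finset.univ.filter p) := by ext x; simp
  rw [h, Set.ncard_coe_finset]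

lemma pair_exists {r : ℕ} (hr : 2 ≤ r) (a b : Fin r) :
    ∃ q : {p : Fin r × Fin r // p.1 < p.2}, (a = q.1.1 ∨ a = q.1.2) ∧ (b = q.1.1 ∨ b = q.1.2) := by
  rcases lt_trichotomy a b with h | h | h
  · exact ⟨⟨(a, b), h⟩, Or.inl rfl, Or.inr rfl⟩
  · subst h
    obtain ⟨c, hc⟩ : ∃ c : Fin r, c ≠ a := by
      have h1 : 1 < Fintype.card (Fin r) := by simpa using (by omega : 1 < r)
      exact Fintype.exists_ne_of_one_lt_card h1 a
    rcases lt_or_gt_of_ne hc with h' | h'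
    · exact ⟨⟨(c, a), h'⟩, Or.inr rfl, Or.inr rfl⟩
    · exact ⟨⟨(a, c), h'⟩, Or.inl rfl, Or.inl rfl⟩
  · exact ⟨⟨(b, a), h⟩, Or.inr rfl, Or.inl rfl⟩

lemma Qa_card {r : ℕ} (a : Fin r) :
    (Finset.univ.filter
      (fun q : {p : Fin r × Fin r // p.1 < p.2} => q.1.1 = a ∨ q.1.2 = a)).card ≤ r - 1 := by
  classical
  have hmaps : ∀ q ∈ Finset.univ.filter
      (fun q : {p : Fin r × Fin r // p.1 < p.2} => q.1.1 = a ∨ q.1.2 = a),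
      (if q.1.1 = a then q.1.2 else q.1.1) ∈ Finset.univ.erase a := by
    intro q hq
    rw [Finset.mem_filter] at hq
    rw [Finset.mem_erase]
    refine ⟨?_, Finset.mem_univ _⟩
    split
    · rename_i h1
      intro h
      have := q.2
      rw [h1, h] at this
      exact absurd this (lt_irrefl a)
    · rename_i h1
      rcases hq.2 with h | h
      · exact absurd h h1
      · intro h2
        have := q.2
        rw [h2, h] at this
        exact absurd this (lt_irrefl a)
  have hinj : Set.InjOn (fun q : {p : Fin r × Fin r // p.1 < p.2} =>
      if q.1.1 = a then q.1.2 else q.1.1)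
      (Finset.univ.filter
        (fun q : {p : Fin r × Fin r // p.1 < p.2} => q.1.1 = a ∨ q.1.2 = a)) := by
    intro q hq q' hq' heq
    simp only [Finset.coe_filter, Set.mem_setOf_eq] at hq hq'
    simp only at heq
    apply Subtype.ext
    by_cases h1 : q.1.1 = a
    · by_cases h1' : q'.1.1 = a
      · rw [if_pos h1, if_pos h1'] at heq
        exact Prod.ext (h1.trans h1'.symm) heq
      · rw [if_pos h1, if_neg h1'] at heq
        have h2' : q'.1.2 = a := hq'.2.resolve_left h1'
        have : q'.1.1 < q'.1.1 := by
          calc q'.1.1 < q'.1.2 := q'.2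
          _ = a := h2'
          _ = q.1.1 := h1.symm
          _ < q.1.2 := q.2
          _ = q'.1.1 := heq
        exact absurd this (lt_irrefl _)
    · by_cases h1' : q'.1.1 = a
      · rw [if_neg h1, if_pos h1'] at heq
        have h2 : q.1.2 = a := hq.2.resolve_left h1
        have : q.1.1 < q.1.1 := by
          calc q.1.1 < q.1.2 := q.2
          _ = a := h2
          _ = q'.1.1 := h1'.symm
          _ < q'.1.2 := q'.2
          _ = q.1.1 := heq.symm
        exact absurd this (lt_irrefl _)
      · rw [if_neg h1, if_neg h1'] at heq
        have h2 : q.1.2 = a := hq.2.resolve_left h1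
        have h2' : q'.1.2 = a := hq'.2.resolve_left h1'
        exact Prod.ext heq (h2.trans h2'.symm)
  have := Finset.card_le_card_of_injOn _ hmaps hinj
  calc _ ≤ (Finset.univ.erase a).card := this
  _ = r - 1 := by
      rw [Finset.card_erase_of_mem (Finset.mem_univ a), Finset.card_univ, Fintype.card_fin]

/-- if V(G) is partitioned into r ≥ 2 parts then
lbox(G) ≤ (r-1) · max over pairs i < j of lbox(G[V_i ∪ V_j]). -/
theorem stmt1 {V : Type} [Fintype V] (G : SimpleGraph V) (r : ℕ) (hr : 2 ≤ r)
    (P : Fin r → Finset V)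
    (hdisj : ∀ i j : Fin r, i ≠ j → Disjoint (P i) (P j))
    (hcover : ∀ v : V, ∃ i : Fin r, v ∈ P i)
    (M : ℕ)
    (hM : ∀ i j : Fin r, i < j → lbox (G.induce (↑(P i ∪ P j) : Set V)) ≤ M) :
    lbox G ≤ (r - 1) * M := by
  classical
  let PT := {p : Fin r × Fin r // p.1 < p.2}
  let Sq : PT → Set V := fun q => (↑(P q.1.1 ∪ P q.1.2) : Set V)
  have key : ∀ q : PT, LocalBoxRep (G.induce (Sq q)) M := by
    intro q
    have h1 : LocalBoxRep (G.induce (Sq q)) (lbox (G.induce (Sq q))) :=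
      Nat.sInf_mem (rep_nonempty _)
    exact h1.mono (hM q.1.1 q.1.2 q.2)
  choose k I hprop using key
  have hint : ∀ q s, IsIntervalGraph (I q s) := fun q => (hprop q).1
  have hadj : ∀ q, ∀ a b : Sq q, a ≠ b →
      ((G.induce (Sq q)).Adj a b ↔ ∀ s, (I q s).Adj a b) := fun q => (hprop q).2.1
  have hcount : ∀ q, ∀ w : Sq q, {s : Fin (k q) | ¬ IsUniversal (I q s) w}.ncard ≤ M :=
    fun q => (hprop q).2.2
  let T := (q : PT) × Fin (k q)
  let e : Fin (Fintype.card T) ≃ T := (Fintype.equivFin T).symm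
  let J : T → SimpleGraph V := fun t => extGraph (Sq t.1) (I t.1 t.2)
  have hmemS : ∀ (q : PT) (w : V) (i : Fin r), w ∈ P i → (i = q.1.1 ∨ i = q.1.2) → w ∈ Sq q := by
    intro q w i hw hi
    show w ∈ (↑(P q.1.1 ∪ P q.1.2) : Set V)
    rw [Finset.mem_coe, Finset.mem_union]
    rcases hi with h | h
    · exact Or.inl (h ▸ hw)
    · exact Or.inr (h ▸ hw)
  apply Nat.sInf_le
  refine ⟨Fintype.card T, fun i => J (e i), fun i => extGraph_interval _ _ (hint _ _), ?_, ?_⟩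
  · -- adjacency
    intro u v huv
    constructor
    · intro hGadj i
      refine ⟨huv, fun hu hv => ?_⟩
      have hne : (⟨u, hu⟩ : Sq (e i).1) ≠ ⟨v, hv⟩ := fun h => huv (congrArg Subtype.val h)
      have := (hadj (e i).1 ⟨u, hu⟩ ⟨v, hv⟩ hne).mp
      exact this hGadj (e i).2
    · intro hall
      obtain ⟨a, ha⟩ := hcover u
      obtain ⟨b, hb⟩ := hcover v
      obtain ⟨q, hqa, hqb⟩ := pair_exists hr a b
      have hu : u ∈ Sq q := hmemS q u a ha (by tauto)
      have hv : v ∈ Sq q := hmemS q v b hb (by tauto)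
      have hne : (⟨u, hu⟩ : Sq q) ≠ ⟨v, hv⟩ := fun h => huv (congrArg Subtype.val h)
      have := (hadj q ⟨u, hu⟩ ⟨v, hv⟩ hne).mpr
      exact this (fun s => by
        have h2 : (J (e (e.symm ⟨q, s⟩))).Adj u v := hall (e.symm ⟨q, s⟩)
        rw [e.apply_symm_apply] at h2
        exact h2.2 hu hv)
  · -- counting
    intro v
    obtain ⟨a, ha⟩ := hcover v
    have himg : {i : Fin (Fintype.card T) | ¬ IsUniversal (J (e i)) v}
        = e.symm '' {t : T | ¬ IsUniversal (J t) v} := by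
      ext i
      simp only [Set.mem_image, Set.mem_setOf_eq]
      constructor
      · intro h; exact ⟨e i, h, e.symm_apply_apply i⟩
      · rintro ⟨t, ht, rfl⟩; rwa [e.apply_symm_apply]
    rw [himg, Set.ncard_image_of_injective _ e.symm.injective]
    set Qa : Finset PT := Finset.univ.filter (fun q : PT => q.1.1 = a ∨ q.1.2 = a) with hQa
    set Bad : ∀ q : PT, Finset (Fin (k q)) :=
      fun q => Finset.univ.filter (fun s => ¬ IsUniversal (J ⟨q, s⟩) v) with hBad
    have hsub : Finset.univ.filter (fun t : T => ¬ IsUniversal (J t) v) ⊆ Qa.sigma Bad := by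
      intro t ht
      rw [Finset.mem_filter] at ht
      rw [Finset.mem_sigma]
      obtain ⟨hvS, hnu⟩ := extGraph_nonuniv _ _ _ ht.2
      constructor
      · rw [hQa, Finset.mem_filter]
        refine ⟨Finset.mem_univ _, ?_⟩
        have : v ∈ P t.1.1.1 ∨ v ∈ P t.1.1.2 := by
          rw [show (v ∈ Sq t.1) = (v ∈ (↑(P t.1.1.1 ∪ P t.1.1.2) : Set V)) from rfl,
            Finset.mem_coe, Finset.mem_union] at hvS
          exact hvS
        rcases this with h | h
        · left
          by_contra hne
          exact (Finset.disjoint_left.mp (hdisj _ _ hne) h) ha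
        · right
          by_contra hne
          exact (Finset.disjoint_left.mp (hdisj _ _ hne) h) ha
      · rw [hBad, Finset.mem_filter]
        refine ⟨Finset.mem_univ _, ?_⟩
        have : (⟨t.1, t.2⟩ : T) = t := rfl
        rw [this]
        exact ht.2
    calc {t : T | ¬ IsUniversal (J t) v}.ncard
        = (Finset.univ.filter (fun t : T => ¬ IsUniversal (J t) v)).card := (ncard_filter _).symm
      _ ≤ (Qa.sigma Bad).card := Finset.card_le_card hsub
      _ = ∑ q ∈ Qa, (Bad q).card := Finset.card_sigma _ _
      _ ≤ ∑ _q ∈ Qa, M := by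
          apply Finset.sum_le_sum
          intro q hq
          rw [hQa, Finset.mem_filter] at hq
          have hvq : v ∈ Sq q := hmemS q v a ha (by tauto)
          have hsub2 : Bad q ⊆ Finset.univ.filter
              (fun s => ¬ IsUniversal (I q s) ⟨v, hvq⟩) := by
            intro s hs
            rw [hBad, Finset.mem_filter] at hs
            rw [Finset.mem_filter]
            refine ⟨Finset.mem_univ _, ?_⟩
            obtain ⟨hv', hnu⟩ := extGraph_nonuniv _ _ _ hs.2
            exact hnu
          calc (Bad q).card ≤ _ := Finset.card_le_card hsub2
            _ = _ := ncard_filter _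
            _ ≤ M := hcount q ⟨v, hvq⟩
      _ = Qa.card * M := by rw [Finset.sum_const, smul_eq_mul]
      _ ≤ (r - 1) * M := Nat.mul_le_mul_right M (Qa_card a)
end

section
/- There exists a constant c > 0 such that for every sufficiently large integer Δ there is a finite simple graph G with maximum degree at most Δ and local boxicity lbox(G) ≥ c · Δ / log₂ Δ. -/
open Classical

-- basic lemmas
lemma icc_inter_nonempty (a b c d : ℝ) :
    (Set.Icc a b ∩ Set.Icc c d).Nonempty ↔ (a ≤ b ∧ c ≤ d ∧ a ≤ d ∧ c ≤ b) := by
  rw [Set.Icc_inter_Icc, Set.nonempty_Icc]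
  constructor
  · intro h
    rcases max_le_iff.mp h with ⟨h1, h2⟩
    rcases le_min_iff.mp h1 with ⟨h3, h4⟩
    rcases le_min_iff.mp h2 with ⟨h5, h6⟩
    exact ⟨h3, h6, h4, h5⟩
  · rintro ⟨h1, h2, h3, h4⟩
    exact max_le (le_min h1 h3) (le_min h4 h2)

lemma lbr_mono {V : Type} {G : SimpleGraph V} {s t : ℕ} (h : LocalBoxRep G s) (hst : s ≤ t) :
    LocalBoxRep G t := by
  obtain ⟨k, I, h1, h2, h3⟩ := h
  exact ⟨k, I, h1, h2, fun v => (h3 v).trans hst⟩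

lemma top_interval {V : Type} : IsIntervalGraph (⊤ : SimpleGraph V) := by
  refine ⟨fun _ => 0, fun _ => 1, fun u v huv => ?_⟩
  simp only [SimpleGraph.top_adj, icc_inter_nonempty]
  norm_num [huv]

/-- the graph whose only non-edge is {a,b} -/
def oneNonEdge {V : Type} (a b : V) : SimpleGraph V where
  Adj u v := u ≠ v ∧ ¬(u = a ∧ v = b) ∧ ¬(u = b ∧ v = a)
  symm := by constructor; rintro u v ⟨h1, h2, h3⟩; exact ⟨h1.symm, fun ⟨x, y⟩ => h3 ⟨y, x⟩, fun ⟨x, y⟩ => h2 ⟨y, x⟩⟩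
  loopless := by constructor; rintro u ⟨h1, _⟩; exact h1 rfl

lemma oneNonEdge_interval {V : Type} {a b : V} (hab : a ≠ b) : IsIntervalGraph (oneNonEdge a b) := by
  classical
  refine ⟨fun v => if v = a then 0 else if v = b then 2 else 0,
          fun v => if v = a then 1 else if v = b then 3 else 3, fun u v huv => ?_⟩
  have key : ∀ w : V, w ≠ a → w ≠ b →
      (if w = a then (0:ℝ) else if w = b then 2 else 0) = 0 ∧
      (if w = a then (1:ℝ) else if w = b then 3 else 3) = 3 := by
    intro w h1 h2; simp [h1, h2]
  show (u ≠ v ∧ _ ∧ _) ↔ _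
  rw [icc_inter_nonempty]
  constructor
  · rintro ⟨h1, h2, h3⟩
    by_cases hua : u = a <;> by_cases hub : u = b <;> by_cases hva : v = a <;> by_cases hvb : v = b <;>
      subst_vars <;> simp_all <;> try norm_num
  · rintro ⟨h1, h2, h3, h4⟩
    refine ⟨huv, ?_, ?_⟩
    · rintro ⟨rfl, rfl⟩; simp only [if_pos rfl, hab, hab.symm, if_neg, if_false] at h3 h4; norm_num at h3 h4
    · rintro ⟨rfl, rfl⟩; simp only [if_pos rfl, hab, hab.symm, if_neg, if_false] at h3 h4; norm_num at h3

section Rank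
variable {n : ℕ} (J : SimpleGraph (Fin n)) (l r : Fin n → ℝ)

/-- endpoint value -/
noncomputable def ep (e : Fin n × Bool) : ℝ := if e.2 then r e.1 else l e.1

/-- rank of a real among relevant endpoints -/
noncomputable def rk (x : ℝ) : ℕ :=
  (Finset.univ.filter fun e : Fin n × Bool => ¬ IsUniversal J e.1 ∧ ep l r e < x).card

lemma rk_lt (e : Fin n × Bool) (he : ¬ IsUniversal J e.1) : rk J l r (ep l r e) < 2 * n := by
  have h1 : (Finset.univ.filter fun e' : Fin n × Bool =>
      ¬ IsUniversal J e'.1 ∧ ep l r e' < ep l r e) ⊂ Finset.univ := by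
    refine Finset.ssubset_univ_iff.mpr ?_
    intro h
    have := h ▸ Finset.mem_univ e
    rw [Finset.mem_filter] at this
    exact absurd this.2.2 (lt_irrefl _)
  have h2 := Finset.card_lt_card h1
  have h3 : (Finset.univ : Finset (Fin n × Bool)).card = 2 * n := by
    simp [Fintype.card_prod, mul_comm]
  rw [rk]; omega

lemma rk_le_rk_iff (e₁ e₂ : Fin n × Bool) (h₁ : ¬ IsUniversal J e₁.1) (h₂ : ¬ IsUniversal J e₂.1) :
    rk J l r (ep l r e₁) ≤ rk J l r (ep l r e₂) ↔ ep l r e₁ ≤ ep l r e₂ := by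
  constructor
  · intro h
    by_contra hc
    push_neg at hc
    have hsub : (Finset.univ.filter fun e : Fin n × Bool =>
        ¬ IsUniversal J e.1 ∧ ep l r e < ep l r e₂) ⊂
        (Finset.univ.filter fun e : Fin n × Bool =>
        ¬ IsUniversal J e.1 ∧ ep l r e < ep l r e₁) := by
      constructor
      · intro e he
        rw [Finset.mem_filter] at *
        exact ⟨he.1, he.2.1, he.2.2.trans hc⟩
      · intro hs
        have := hs (Finset.mem_filter.mpr ⟨Finset.mem_univ e₂, h₂, hc⟩)
        rw [Finset.mem_filter] at this
        exact absurd this.2.2 (lt_irrefl _)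
    have := Finset.card_lt_card hsub
    rw [rk, rk] at h
    omega
  · intro h
    apply Finset.card_le_card
    intro e he
    rw [Finset.mem_filter] at *
    exact ⟨he.1, he.2.1, lt_of_lt_of_le he.2.2 h⟩

end Rank

/-- An abstract "piece": for each vertex either nothing (universal) or a pair of
endpoint ranks. -/
def Piece (n : ℕ) : Type := Fin n → Option (Fin (2*n) × Fin (2*n))

def pAdj {n : ℕ} (p : Piece n) (u v : Fin n) : Prop :=
  ∀ a ∈ p u, ∀ b ∈ p v, a.1 ≤ a.2 ∧ b.1 ≤ b.2 ∧ a.1 ≤ b.2 ∧ b.1 ≤ a.2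

noncomputable def wt {n : ℕ} (p : Piece n) : ℕ :=
  (Finset.univ.filter fun v => (p v).isSome).card

noncomputable def pieceOf {n : ℕ} (J : SimpleGraph (Fin n)) (l r : Fin n → ℝ) : Piece n :=
  fun v => if h : ¬ IsUniversal J v then
    some (⟨rk J l r (l v), by simpa [ep] using rk_lt J l r (v, false) h⟩,
          ⟨rk J l r (r v), by simpa [ep] using rk_lt J l r (v, true) h⟩)
  else none

lemma pieceOf_adj {n : ℕ} (J : SimpleGraph (Fin n)) (l r : Fin n → ℝ)
    (hspec : ∀ u v : Fin n, u ≠ v →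
      (J.Adj u v ↔ (Set.Icc (l u) (r u) ∩ Set.Icc (l v) (r v)).Nonempty))
    (u v : Fin n) (huv : u ≠ v) :
    pAdj (pieceOf J l r) u v ↔ J.Adj u v := by
  by_cases hu : IsUniversal J u
  · have hpu : pieceOf J l r u = none := by simp [pieceOf, hu]
    have : J.Adj u v := hu v (Ne.symm huv)
    simp [pAdj, hpu, this]
  · by_cases hv : IsUniversal J v
    · have hpv : pieceOf J l r v = none := by simp [pieceOf, hv]
      have : J.Adj u v := (hv u huv).symm
      simp [pAdj, hpv, this]
    · have hpu : pieceOf J l r u = some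
        (⟨rk J l r (l u), by simpa [ep] using rk_lt J l r (u, false) hu⟩,
         ⟨rk J l r (r u), by simpa [ep] using rk_lt J l r (u, true) hu⟩) := by
        simp [pieceOf, hu]
      have hpv : pieceOf J l r v = some
        (⟨rk J l r (l v), by simpa [ep] using rk_lt J l r (v, false) hv⟩,
         ⟨rk J l r (r v), by simpa [ep] using rk_lt J l r (v, true) hv⟩) := by
        simp [pieceOf, hv]
      have e1 := rk_le_rk_iff J l r (u, false) (u, true) hu hu
      have e2 := rk_le_rk_iff J l r (v, false) (v, true) hv hv
      have e3 := rk_le_rk_iff J l r (u, false) (v, true) hu hv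
      have e4 := rk_le_rk_iff J l r (v, false) (u, true) hv hu
      simp only [ep, Bool.false_eq_true, if_false, if_true] at e1 e2 e3 e4
      rw [hspec u v huv, icc_inter_nonempty]
      simp only [pAdj, hpu, hpv, Option.mem_def, Option.some.injEq, forall_eq', Fin.mk_le_mk]
      rw [e1, e2, e3, e4]

lemma sum_image_le {α β : Type} [DecidableEq β] (s : Finset α) (g : α → β) (f : β → ℕ) :
    ∑ b ∈ s.image g, f b ≤ ∑ a ∈ s, f (g a) := by
  induction s using Finset.cons_induction with
  | empty => simp
  | cons a s ha ih =>
    rw [Finset.cons_eq_insert, Finset.image_insert, Finset.sum_insert ha]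
    by_cases hg : g a ∈ s.image g
    · rw [Finset.insert_eq_self.mpr hg]
      omega
    · rw [Finset.sum_insert hg]
      omega

lemma exists_pieces {n t : ℕ} {G : SimpleGraph (Fin n)} (h : LocalBoxRep G t) :
    ∃ P : Finset (Piece n),
      (∀ u v : Fin n, u ≠ v → (G.Adj u v ↔ ∀ p ∈ P, pAdj p u v)) ∧
      ∑ p ∈ P, wt p ≤ t * n := by
  classical
  obtain ⟨k, I, hint, hadj, hloc⟩ := h
  choose l r hspec using hint
  set P : Finset (Piece n) := Finset.univ.image (fun i => pieceOf (I i) (l i) (r i)) with hP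
  refine ⟨P, ?_, ?_⟩
  · intro u v huv
    rw [hadj u v huv]
    constructor
    · intro h p hp
      obtain ⟨i, _, rfl⟩ := Finset.mem_image.mp hp
      exact (pieceOf_adj (I i) (l i) (r i) (hspec i) u v huv).mpr (h i)
    · intro h i
      exact (pieceOf_adj (I i) (l i) (r i) (hspec i) u v huv).mp
        (h _ (Finset.mem_image_of_mem _ (Finset.mem_univ i)))
  · calc ∑ p ∈ P, wt p ≤ ∑ i : Fin k, wt (pieceOf (I i) (l i) (r i)) :=
          sum_image_le _ _ _
    _ = ∑ i : Fin k, (Finset.univ.filter fun v => ¬ IsUniversal (I i) v).card := by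
          apply Finset.sum_congr rfl
          intro i _
          unfold wt
          congr 1
          apply Finset.filter_congr
          intro v _
          by_cases hv : IsUniversal (I i) v <;> simp [pieceOf, hv]
    _ = ∑ v : Fin n, (Finset.univ.filter fun i => ¬ IsUniversal (I i) v).card := by
          simp only [Finset.card_filter]
          rw [Finset.sum_comm]
    _ ≤ ∑ _v : Fin n, t := by
          apply Finset.sum_le_sum
          intro v _
          have := hloc v
          have heq : {i : Fin k | ¬ IsUniversal (I i) v}.ncard
              = (Finset.univ.filter fun i => ¬ IsUniversal (I i) v).card := by
            rw [← Set.ncard_coe_finset]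
            congr 1
            ext i
            simp
          omega
    _ = t * n := by simp [mul_comm]

section Lists
variable {α β : Type}

lemma filterMap_pair_eq (l : List α) (hl : l.Nodup) (p q : α → Option β)
    (h : (l.filterMap fun v => (p v).map fun x => (v, x))
       = (l.filterMap fun v => (q v).map fun x => (v, x))) :
    ∀ v ∈ l, p v = q v := by
  induction l with
  | nil => simp
  | cons a l ih =>
    have hal : a ∉ l := (List.nodup_cons.mp hl).1
    have hnd : l.Nodup := (List.nodup_cons.mp hl).2
    have key : p a = q a ∧ (l.filterMap fun v => (p v).map fun x => (v, x))
       = (l.filterMap fun v => (q v).map fun x => (v, x)) := by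
      rw [List.filterMap_cons, List.filterMap_cons] at h
      cases hpa : p a with
      | none => cases hqa : q a with
        | none => rw [hpa, hqa] at h; simpa using h
        | some y =>
          rw [hpa, hqa] at h
          simp only [Option.map_none, Option.map_some] at h
          exfalso
          have : (a, y) ∈ l.filterMap fun v => (p v).map fun x => (v, x) := by
            rw [h]; exact List.mem_cons_self
          obtain ⟨u, hu, hmap⟩ := List.mem_filterMap.mp this
          obtain ⟨x', hx', heq⟩ := Option.map_eq_some_iff.mp hmap
          obtain ⟨rfl, rfl⟩ := Prod.mk.inj heq
          exact hal hu
      | some x => cases hqa : q a with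
        | none =>
          rw [hpa, hqa] at h
          simp only [Option.map_none, Option.map_some] at h
          exfalso
          have : (a, x) ∈ l.filterMap fun v => (q v).map fun x => (v, x) := by
            rw [← h]; exact List.mem_cons_self
          obtain ⟨u, hu, hmap⟩ := List.mem_filterMap.mp this
          obtain ⟨x', hx', heq⟩ := Option.map_eq_some_iff.mp hmap
          obtain ⟨rfl, rfl⟩ := Prod.mk.inj heq
          exact hal hu
        | some y =>
          rw [hpa, hqa] at h
          simp only [Option.map_some, List.cons.injEq, Prod.mk.injEq] at h
          have hxy : x = y := h.1.2
          subst hxy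
          exact ⟨rfl, h.2⟩
    intro v hv
    rcases List.mem_cons.mp hv with rfl | hv'
    · exact key.1
    · exact ih hnd key.2 v hv'

lemma filterMap_pair_length (l : List α) (p : α → Option β) :
    (l.filterMap fun v => (p v).map fun x => (v, x)).length
      = (l.filter fun v => (p v).isSome).length := by
  induction l with
  | nil => simp
  | cons a l ih =>
    rw [List.filterMap_cons, List.filter_cons]
    cases hpa : p a <;> simp [hpa, ih]

lemma sep_append_inj : ∀ (a b : List α) (X Y : List (Option α)),
    (X = [] ∨ X.head? = some none) → (Y = [] ∨ Y.head? = some none) →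
    a.map some ++ X = b.map some ++ Y → a = b ∧ X = Y := by
  intro a
  induction a with
  | nil =>
    intro b X Y hX hY h
    cases b with
    | nil => simpa using h
    | cons y b =>
      exfalso
      simp only [List.map_nil, List.nil_append, List.map_cons, List.cons_append] at h
      rcases hX with rfl | hX
      · simp at h
      · rw [h] at hX; simp at hX
  | cons x a ih =>
    intro b X Y hX hY h
    cases b with
    | nil =>
      exfalso
      simp only [List.map_nil, List.nil_append, List.map_cons, List.cons_append] at h
      rcases hY with rfl | hY
      · simp at h
      · rw [← h] at hY; simp at hY
    | cons y b =>
      simp only [List.map_cons, List.cons_append, List.cons.injEq, Option.some.injEq] at h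
      obtain ⟨h1, h2⟩ := ih b X Y hX hY h.2
      exact ⟨by rw [h.1, h1], h2⟩

def sepFlatten (l : List (List α)) : List (Option α) :=
  (l.map fun x => (none : Option α) :: x.map some).flatten

lemma sepFlatten_head (l : List (List α)) :
    sepFlatten l = [] ∨ (sepFlatten l).head? = some none := by
  cases l with
  | nil => left; rfl
  | cons x l => right; rfl

lemma sepFlatten_inj : ∀ l₁ l₂ : List (List α), sepFlatten l₁ = sepFlatten l₂ → l₁ = l₂ := by
  intro l₁
  induction l₁ with
  | nil =>
    intro l₂ h
    cases l₂ with
    | nil => rfl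
    | cons y l₂ => exact absurd h.symm (by simp [sepFlatten])
  | cons x l₁ ih =>
    intro l₂ h
    cases l₂ with
    | nil => exact absurd h (by simp [sepFlatten])
    | cons y l₂ =>
      have h' : x.map some ++ sepFlatten l₁ = y.map some ++ sepFlatten l₂ := by
        have : (none : Option α) :: (x.map some ++ sepFlatten l₁)
             = (none : Option α) :: (y.map some ++ sepFlatten l₂) := h
        exact (List.cons.inj this).2
      obtain ⟨h1, h2⟩ := sep_append_inj x y _ _ (sepFlatten_head l₁) (sepFlatten_head l₂) h'
      rw [h1, ih l₂ h2]

lemma list_ext_of_bounded_get {L : ℕ} (l₁ l₂ : List α) (h₁ : l₁.length ≤ L) (h₂ : l₂.length ≤ L)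
    (h : ∀ i : Fin (L+1), l₁[(i:ℕ)]? = l₂[(i:ℕ)]?) : l₁ = l₂ := by
  apply List.ext_getElem?
  intro m
  by_cases hm : m < L + 1
  · exact h ⟨m, hm⟩
  · rw [List.getElem?_eq_none (by omega), List.getElem?_eq_none (by omega)]

end Lists

noncomputable def encPiece {n : ℕ} (p : Piece n) : List (Fin n × (Fin (2*n) × Fin (2*n))) :=
  (List.finRange n).filterMap fun v => (p v).map fun x => (v, x)

lemma encPiece_injective {n : ℕ} : Function.Injective (encPiece (n := n)) := by
  intro p q h
  funext v
  exact filterMap_pair_eq _ (List.nodup_finRange n) p q h v (List.mem_finRange v)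

lemma encPiece_length {n : ℕ} (p : Piece n) : (encPiece p).length = wt p := by
  rw [encPiece, wt]; refine (filterMap_pair_length (List.finRange n) p).trans ?_
  have h1 : (Finset.univ.filter fun v => (p v).isSome)
      = ((List.finRange n).filter fun v => (p v).isSome).toFinset := by
    ext v; simp [List.mem_filter]
  rw [h1, List.toFinset_card_of_nodup ((List.nodup_finRange n).filter _)]

noncomputable def encSet {n : ℕ} (P : Finset (Piece n)) :
    List (Option (Fin n × (Fin (2*n) × Fin (2*n)))) :=
  sepFlatten (P.toList.map encPiece)

lemma encSet_injective {n : ℕ} : Function.Injective (encSet (n := n)) := by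
  intro P Q h
  have h1 := sepFlatten_inj _ _ h
  have h2 := List.map_injective_iff.mpr (encPiece_injective (n := n)) h1
  rw [← Finset.toList_toFinset P, ← Finset.toList_toFinset Q, h2]

lemma encSet_length {n : ℕ} (P : Finset (Piece n)) :
    (encSet P).length = P.card + ∑ p ∈ P, wt p := by
  rw [encSet, sepFlatten, List.length_flatten, List.map_map, List.map_map]
  have h1 : ((List.length ∘ fun x => (none : Option (Fin n × (Fin (2*n) × Fin (2*n)))) ::
      List.map some x) ∘ encPiece) = fun p => wt p + 1 := by
    funext p
    simp [encPiece_length]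
  rw [h1]
  have h2 := Finset.sum_map_toList P (fun p => wt p + 1)
  rw [h2, Finset.sum_add_distrib, Finset.sum_const, smul_eq_mul, mul_one]
  omega

lemma wt_eq_zero {n : ℕ} {p : Piece n} (h : wt p = 0) : p = fun _ => none := by
  funext v
  rw [wt, Finset.card_eq_zero] at h
  have : v ∉ Finset.univ.filter fun v => (p v).isSome := by rw [h]; exact Finset.notMem_empty v
  rw [Finset.mem_filter] at this
  push_neg at this
  have h2 := this (Finset.mem_univ v)
  exact Option.not_isSome_iff_eq_none.mp (by simpa using h2)

lemma card_le_sum_wt {n : ℕ} (P : Finset (Piece n)) : P.card ≤ ∑ p ∈ P, wt p + 1 := by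
  classical
  have hsplit := Finset.card_filter_add_card_filter_not
    (s := P) (p := fun p => wt p = 0)
  have hZ : (P.filter fun p => wt p = 0).card ≤ 1 := by
    apply Finset.card_le_one.mpr
    intro p hp q hq
    rw [Finset.mem_filter] at hp hq
    rw [wt_eq_zero hp.2, wt_eq_zero hq.2]
  have hN : (P.filter fun p => ¬ wt p = 0).card ≤ ∑ p ∈ P, wt p := by
    calc (P.filter fun p => ¬ wt p = 0).card
        = ∑ _p ∈ (P.filter fun p => ¬ wt p = 0), 1 := by simp
      _ ≤ ∑ p ∈ (P.filter fun p => ¬ wt p = 0), wt p := by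
          apply Finset.sum_le_sum
          intro p hp
          rw [Finset.mem_filter] at hp
          omega
      _ ≤ ∑ p ∈ P, wt p := Finset.sum_le_sum_of_subset (Finset.filter_subset _ _)
  omega

noncomputable def encOf {n t : ℕ} (G : {G : SimpleGraph (Fin n) // LocalBoxRep G t}) :
    List (Option (Fin n × (Fin (2*n) × Fin (2*n)))) :=
  encSet (Classical.choose (exists_pieces G.2))

set_option maxHeartbeats 1000000 in
lemma card_lbr_le (n t : ℕ) :
    Nat.card {G : SimpleGraph (Fin n) // LocalBoxRep G t} ≤ (4*n^3+2)^(2*(t*n)+2) := by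
  classical
  have key : Nat.card {G : SimpleGraph (Fin n) // LocalBoxRep G t}
      ≤ Nat.card (Fin (2*(t*n)+2) → Option (Option (Fin n × (Fin (2*n) × Fin (2*n))))) := by
    apply Nat.card_le_card_of_injective
      (f := fun G : {G : SimpleGraph (Fin n) // LocalBoxRep G t} =>
        fun i : Fin (2*(t*n)+2) => (encOf G)[(i:ℕ)]?)
    intro G₁ G₂ h
    have hlen : ∀ (G : {G : SimpleGraph (Fin n) // LocalBoxRep G t}),
        (encOf G).length ≤ 2*(t*n)+1 := by
      intro G
      have hs := (Classical.choose_spec (exists_pieces G.2)).2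
      have := card_le_sum_wt (Classical.choose (exists_pieces G.2))
      rw [encOf, encSet_length]
      omega
    have hlists : encOf G₁ = encOf G₂ := by
      apply list_ext_of_bounded_get (L := 2*(t*n)+1) _ _ (hlen G₁) (hlen G₂)
      intro i
      exact congrFun h i
    have hP := encSet_injective (n := n) hlists
    apply Subtype.ext
    ext u v
    by_cases huv : u = v
    · subst huv
      simp
    · rw [(Classical.choose_spec (exists_pieces G₁.2)).1 u v huv,
          (Classical.choose_spec (exists_pieces G₂.2)).1 u v huv, hP]
  have hcard : Nat.card (Fin (2*(t*n)+2) → Option (Option (Fin n × (Fin (2*n) × Fin (2*n)))))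
      = (4*n^3+2)^(2*(t*n)+2) := by
    rw [Nat.card_eq_fintype_card, Fintype.card_fun]
    congr 1
    · simp only [Fintype.card_option, Fintype.card_prod, Fintype.card_fin]
      ring
    · exact Fintype.card_fin _
  omega

def boolGraph (n m : ℕ) (f : Fin m → Fin m → Bool) : SimpleGraph (Fin n) where
  Adj u v := (∃ i j : Fin m, f i j ∧ (u:ℕ) = (i:ℕ) ∧ (v:ℕ) = m + (j:ℕ))
           ∨ (∃ i j : Fin m, f i j ∧ (v:ℕ) = (i:ℕ) ∧ (u:ℕ) = m + (j:ℕ))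
  symm := by
    constructor
    intro u v h
    rcases h with h | h
    · exact Or.inr h
    · exact Or.inl h
  loopless := by
    constructor
    rintro u (⟨i, j, _, h1, h2⟩ | ⟨i, j, _, h1, h2⟩) <;>
      · have := i.isLt; omega

lemma boolGraph_adj (n m : ℕ) (hm : 2*m ≤ n) (f : Fin m → Fin m → Bool) (i j : Fin m) :
    (boolGraph n m f).Adj ⟨(i:ℕ), by have := i.isLt; omega⟩ ⟨m + (j:ℕ), by have := j.isLt; omega⟩
      ↔ f i j := by
  constructor
  · rintro (⟨i', j', hf, h1, h2⟩ | ⟨i', j', hf, h1, h2⟩)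
    · simp only at h1 h2
      have : i' = i := Fin.ext h1.symm
      have : j' = j := Fin.ext (by omega)
      subst this; subst ‹i' = i›
      exact hf
    · exfalso
      simp only at h1 h2
      have := i'.isLt
      omega
  · intro hf
    exact Or.inl ⟨i, j, hf, rfl, rfl⟩

lemma boolGraph_injective (n m : ℕ) (hm : 2*m ≤ n) :
    Function.Injective (boolGraph n m) := by
  intro f g h
  funext i j
  have h1 := boolGraph_adj n m hm f i j
  have h2 := boolGraph_adj n m hm g i j
  rw [h] at h1
  have := h1.symm.trans h2
  cases hf : f i j <;> cases hg : g i j <;> simp_all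

lemma card_graphs_lower (n : ℕ) :
    2^((n/2)*(n/2)) ≤ Nat.card (SimpleGraph (Fin n)) := by
  have hm : 2*(n/2) ≤ n := by omega
  have h1 := Nat.card_le_card_of_injective _ (boolGraph_injective n (n/2) hm)
  have h2 : Nat.card (Fin (n/2) → Fin (n/2) → Bool) = 2^((n/2)*(n/2)) := by
    simp [Nat.card_eq_fintype_card, pow_mul]
  omega

lemma lbr_exists {n : ℕ} (G : SimpleGraph (Fin n)) : LocalBoxRep G (n*n) := by
  classical
  set e := finProdFinEquiv (m := n) (n := n) with he
  refine ⟨n*n, fun i => if G.Adj (e.symm i).1 (e.symm i).2 ∨ (e.symm i).1 = (e.symm i).2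
    then ⊤ else oneNonEdge (e.symm i).1 (e.symm i).2, ?_, ?_, ?_⟩
  · intro i
    beta_reduce
    by_cases h : G.Adj (e.symm i).1 (e.symm i).2 ∨ (e.symm i).1 = (e.symm i).2
    · rw [if_pos h]; exact top_interval
    · rw [if_neg h]
      push_neg at h
      exact oneNonEdge_interval h.2
  · intro u v huv
    constructor
    · intro hadj i
      beta_reduce
      by_cases h : G.Adj (e.symm i).1 (e.symm i).2 ∨ (e.symm i).1 = (e.symm i).2
      · rw [if_pos h]; exact huv
      · rw [if_neg h]
        push_neg at h
        refine ⟨huv, ?_, ?_⟩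
        · rintro ⟨rfl, rfl⟩; exact h.1 hadj
        · rintro ⟨rfl, rfl⟩; exact h.1 hadj.symm
    · intro hall
      by_contra hnadj
      have hi := hall (e (u, v))
      beta_reduce at hi
      have hsymm : e.symm (e (u, v)) = (u, v) := Equiv.symm_apply_apply e _
      rw [hsymm] at hi
      rw [if_neg (by push_neg; exact ⟨hnadj, huv⟩)] at hi
      exact hi.2.1 ⟨rfl, rfl⟩
  · intro v
    calc {i : Fin (n*n) | ¬ IsUniversal _ v}.ncard
        ≤ (Set.univ : Set (Fin (n*n))).ncard :=
          Set.ncard_le_ncard (Set.subset_univ _) Set.finite_univ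
      _ = n*n := by rw [Set.ncard_univ]; simp

lemma exists_bad_graph (n t : ℕ)
    (hcount : (4*n^3+2)^(2*(t*n)+2) < 2^((n/2)*(n/2))) :
    ∃ G : SimpleGraph (Fin n), t < lbox G := by
  classical
  have h1 : Nat.card {G : SimpleGraph (Fin n) // LocalBoxRep G t}
      < Nat.card (SimpleGraph (Fin n)) :=
    lt_of_le_of_lt (card_lbr_le n t) (lt_of_lt_of_le hcount (card_graphs_lower n))
  have h2 : ∃ G : SimpleGraph (Fin n), ¬ LocalBoxRep G t := by
    by_contra hc
    push_neg at hc
    have hinj : Function.Injective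
        (fun G : SimpleGraph (Fin n) => (⟨G, hc G⟩ : {G : SimpleGraph (Fin n) // LocalBoxRep G t})) := by
      intro a b hab
      simpa using congrArg Subtype.val hab
    have := Nat.card_le_card_of_injective _ hinj
    omega
  obtain ⟨G, hG⟩ := h2
  refine ⟨G, ?_⟩
  by_contra hle
  push_neg at hle
  have hne : {s : ℕ | LocalBoxRep G s}.Nonempty := ⟨n*n, lbr_exists G⟩
  have hmem := Nat.sInf_mem hne
  exact hG (lbr_mono hmem hle)

lemma arith_main (Δ : ℕ) (hΔ : 1000000 ≤ Δ) :
    (4*(Δ+1)^3+2)^(2*((Δ/(400*Nat.log 2 Δ))*(Δ+1))+2) < 2^(((Δ+1)/2)*((Δ+1)/2)) := by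
  set n := Δ+1 with hn
  set L := Nat.log 2 Δ with hLdef
  set t := Δ/(400*L) with htdef
  set m := n/2 with hmdef
  have hL1 : 1 ≤ L := Nat.log_pos (by norm_num) (by omega)
  have hLΔ : L ≤ Δ := Nat.log_le_self 2 Δ
  have hmΔ : Δ ≤ 2*m := by omega
  have h400 : 400*(L*t) ≤ Δ := by
    have h := Nat.div_mul_le_self Δ (400*L)
    calc 400*(L*t) = Δ/(400*L)*(400*L) := by rw [htdef]; ring
      _ ≤ Δ := h
  have hexp : (L+1)*(4*(2*(t*n)+2)) < m*m := by
    have f1 : (L+1)*(4*(2*(t*n)+2)) ≤ (2*L)*(16*(t*n)+16) :=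
      Nat.mul_le_mul (by omega) (by omega)
    have f1' : (2*L)*(16*(t*n)+16) = 32*((L*t)*n) + 32*L := by ring
    have f2 : 400*((L*t)*n) ≤ Δ*Δ + Δ := by
      calc 400*((L*t)*n) = (400*(L*t))*n := by ring
        _ ≤ Δ*n := Nat.mul_le_mul_right n h400
        _ = Δ*Δ + Δ := by rw [hn]; ring
    have f3 : Δ*Δ ≤ 4*(m*m) := by
      calc Δ*Δ ≤ (2*m)*(2*m) := Nat.mul_le_mul hmΔ hmΔ
        _ = 4*(m*m) := by ring
    have f5 : 1000000*Δ ≤ Δ*Δ := Nat.mul_le_mul_right Δ hΔ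
    have f6 : Δ ≤ m*m := by nlinarith
    nlinarith [f1, f1', f2, f3, f5, f6, hLΔ, hΔ]
  have hbase : 4*n^3+2 ≤ 2^(4*(L+1)) := by
    have g1 : 4*n^3+2 ≤ n^4 := by
      have g2 : n^4 = n*n^3 := by ring
      have g3 : 5*n^3 ≤ n*n^3 := Nat.mul_le_mul_right _ (by omega)
      have g4 : (8:ℕ) ≤ n^3 := by
        calc (8:ℕ) = 2^3 := by norm_num
          _ ≤ n^3 := Nat.pow_le_pow_left (by omega) 3
      linarith
    have g5 : n ≤ 2^(L+1) := by
      have h6 := Nat.lt_pow_succ_log_self (b := 2) (by norm_num) Δ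
      rw [← hLdef] at h6
      omega
    calc 4*n^3+2 ≤ n^4 := g1
      _ ≤ (2^(L+1))^4 := Nat.pow_le_pow_left g5 4
      _ = 2^(4*(L+1)) := by rw [← pow_mul]; ring_nf
  calc (4*n^3+2)^(2*(t*n)+2)
      ≤ (2^(4*(L+1)))^(2*(t*n)+2) := Nat.pow_le_pow_left hbase _
    _ = 2^((L+1)*(4*(2*(t*n)+2))) := by rw [← pow_mul]; ring_nf
    _ < 2^(m*m) := Nat.pow_lt_pow_right (by norm_num) hexp


/-- ∃ c > 0 such that for every sufficiently large Δ there is a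
finite simple graph with maximum degree ≤ Δ and lbox ≥ c·Δ/log₂ Δ. -/
theorem stmt4 : ∃ c : ℝ, 0 < c ∧ ∃ Δ₀ : ℕ, ∀ Δ : ℕ, Δ₀ ≤ Δ →
    ∃ (V : Type) (_ : Fintype V) (G : SimpleGraph V),
      (∀ v : V, (G.neighborSet v).ncard ≤ Δ) ∧
      c * (Δ : ℝ) / Real.logb 2 (Δ : ℝ) ≤ (lbox G : ℝ) := by
  refine ⟨1/400, by norm_num, 1000000, fun Δ hΔ => ?_⟩
  classical
  obtain ⟨G, hG⟩ := exists_bad_graph (Δ+1) (Δ/(400*Nat.log 2 Δ)) (arith_main Δ hΔ)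
  refine ⟨Fin (Δ+1), inferInstance, G, ?_, ?_⟩
  · intro v
    have h1 : G.neighborSet v ⊆ {v}ᶜ := by
      intro u hu
      simp only [Set.mem_compl_iff, Set.mem_singleton_iff]
      rintro rfl
      exact G.irrefl hu
    calc (G.neighborSet v).ncard ≤ ({v}ᶜ : Set (Fin (Δ+1))).ncard :=
          Set.ncard_le_ncard h1 (Set.toFinite _)
      _ ≤ Δ := by
          have h2 : ({v}ᶜ : Set (Fin (Δ+1))) = Set.univ \ {v} := by ext u; simp
          rw [h2, Set.ncard_diff_singleton_of_mem (Set.mem_univ v), Set.ncard_univ,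
            Nat.card_eq_fintype_card, Fintype.card_fin]
          omega
  · have hL1 : 1 ≤ Nat.log 2 Δ := Nat.log_pos (by norm_num) (by omega)
    have h400L : 0 < 400*Nat.log 2 Δ := by omega
    have hdm := Nat.div_add_mod Δ (400*Nat.log 2 Δ)
    have hmod := Nat.mod_lt Δ h400L
    have hΔlt : Δ < (Δ/(400*Nat.log 2 Δ)+1)*(400*Nat.log 2 Δ) := by
      have hexpand : (Δ/(400*Nat.log 2 Δ)+1)*(400*Nat.log 2 Δ)
          = 400*Nat.log 2 Δ*(Δ/(400*Nat.log 2 Δ)) + 400*Nat.log 2 Δ := by ring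
      omega
    have hlbR : ((Δ/(400*Nat.log 2 Δ) : ℕ):ℝ) + 1 ≤ (lbox G : ℝ) := by exact_mod_cast hG
    have hlogb : ((Nat.log 2 Δ : ℕ):ℝ) ≤ Real.logb 2 (Δ:ℝ) := Real.natLog_le_logb Δ 2
    have hL1R : (1:ℝ) ≤ ((Nat.log 2 Δ : ℕ):ℝ) := by exact_mod_cast hL1
    have hlogpos : (0:ℝ) < Real.logb 2 (Δ:ℝ) := by linarith
    rw [div_le_iff₀ hlogpos]
    have hΔR : (Δ:ℝ) < (((Δ/(400*Nat.log 2 Δ) : ℕ):ℝ)+1)*(400*((Nat.log 2 Δ : ℕ):ℝ)) := by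
      exact_mod_cast hΔlt
    have hlbpos : (0:ℝ) ≤ (lbox G : ℝ) := Nat.cast_nonneg _
    have hprod : (((Δ/(400*Nat.log 2 Δ) : ℕ):ℝ)+1)*(400*((Nat.log 2 Δ : ℕ):ℝ))
        ≤ (lbox G : ℝ)*(400*Real.logb 2 (Δ:ℝ)) := by
      apply mul_le_mul hlbR (by linarith) (by linarith) hlbpos
    linarith
end

section
/- Let G be a finite simple claw-free graph with chromatic number χ(G) ≥ 2. Then lbox(G) ≤ 3(χ(G) − 1). -/
open Classical

namespace Stmt6Aux

variable {V : Type} [Fintype V]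

noncomputable def idx (x : V) : ℕ := ((Fintype.equivFin V) x : ℕ)

lemma idx_inj {x y : V} (h : idx x = idx y) : x = y := by
  have := (Fintype.equivFin V).injective (Fin.val_injective h)
  exact this

lemma idx_lt (x : V) : idx x < Fintype.card V := by
  simpa [idx] using ((Fintype.equivFin V) x).isLt

def mkIG (l r : V → ℝ) : SimpleGraph V where
  Adj u v := u ≠ v ∧ (Set.Icc (l u) (r u) ∩ Set.Icc (l v) (r v)).Nonempty
  symm := by
    constructor
    intro u v ⟨h1, h2⟩
    exact ⟨h1.symm, by rwa [Set.inter_comm]⟩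
  loopless := ⟨fun u h => h.1 rfl⟩

lemma mkIG_interval (l r : V → ℝ) : IsIntervalGraph (mkIG l r) :=
  ⟨l, r, fun u v h => by simp [mkIG, h]⟩

lemma mkIG_adj {l r : V → ℝ} {u v : V} :
    (mkIG l r).Adj u v ↔ u ≠ v ∧ (Set.Icc (l u) (r u) ∩ Set.Icc (l v) (r v)).Nonempty :=
  Iff.rfl

lemma mkIG_univ {l r : V → ℝ} {v : V}
    (h : ∀ u : V, (Set.Icc (l v) (r v) ∩ Set.Icc (l u) (r u)).Nonempty) :
    IsUniversal (mkIG l r) v :=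
  fun u hu => ⟨hu.symm, h u⟩

/-- greedy 3-coloring of a graph in which every vertex has at most 2 neighbors -/
lemma greedy3 (R : V → V → Prop) (hne : ∀ {x y}, R x y → x ≠ y)
    (hsym : ∀ {x y}, R x y → R y x)
    (hdeg : ∀ y, ∃ u w, ∀ z, R y z → z = u ∨ z = w) :
    ∃ τ : V → Fin 3, ∀ y z, R y z → τ y ≠ τ z := by
  suffices h : ∀ s : Finset V, ∃ τ : V → Fin 3, ∀ y ∈ s, ∀ z ∈ s, R y z → τ y ≠ τ z by
    obtain ⟨τ, hτ⟩ := h Finset.univ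
    exact ⟨τ, fun y z h => hτ y (Finset.mem_univ y) z (Finset.mem_univ z) h⟩
  intro s
  induction s using Finset.induction_on with
  | empty => exact ⟨fun _ => 0, by simp⟩
  | @insert a s' ha ih =>
    obtain ⟨τ, hτ⟩ := ih
    obtain ⟨u, w, huw⟩ := hdeg a
    have hex : ∃ c : Fin 3, c ∉ ({τ u, τ w} : Finset (Fin 3)) := by
      by_contra hcon
      push_neg at hcon
      have h1 : (Finset.univ : Finset (Fin 3)) ⊆ {τ u, τ w} := fun c _ => hcon c
      have h2 := Finset.card_le_card h1
      have h3 : ({τ u, τ w} : Finset (Fin 3)).card ≤ 2 := by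
        apply Finset.card_insert_le _ _ |>.trans
        simp
      simp at h2
      omega
    obtain ⟨c, hc⟩ := hex
    simp only [Finset.mem_insert, Finset.mem_singleton, not_or] at hc
    refine ⟨Function.update τ a c, ?_⟩
    intro y hy z hz hR
    have hyz := hne hR
    rcases Finset.mem_insert.1 hy with rfl | hy' <;>
      rcases Finset.mem_insert.1 hz with rfl | hz'
    · exact absurd rfl hyz
    · have hza : z ≠ y := fun h => ha (h ▸ hz')
      rw [Function.update_self, Function.update_of_ne hza]
      rcases huw z hR with rfl | rfl
      · exact fun h => hc.1 h
      · exact fun h => hc.2 h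
    · have hya : y ≠ z := fun h => ha (h ▸ hy')
      rw [Function.update_self, Function.update_of_ne hya]
      rcases huw y (hsym hR) with rfl | rfl
      · exact fun h => hc.1 h.symm
      · exact fun h => hc.2 h.symm
    · have hya : y ≠ a := fun h => ha (h ▸ hy')
      have hza : z ≠ a := fun h => ha (h ▸ hz')
      rw [Function.update_of_ne hya, Function.update_of_ne hza]
      exact hτ y hy' z hz' hR
section Pair

variable {n : ℕ} (G : SimpleGraph V) (C : V → Fin n) (i j : Fin n) (τ : V → Fin 3)
    (t : Fin 3) {a b : V → V}

def Matched (x w : V) : Prop :=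
  x ≠ w ∧ C x = i ∧ C w = i ∧ ∃ y, C y = j ∧ τ y = t ∧ G.Adj y x ∧ G.Adj y w

noncomputable def q (x : V) : ℕ :=
  if h : ∃ w, Matched G C i j τ t x w then
    2 * min (idx x) (idx h.choose) + if idx x < idx h.choose then 0 else 1
  else 2 * idx x

variable {G C i j τ t}

lemma matched_symm {x w : V} (h : Matched G C i j τ t x w) : Matched G C i j τ t w x :=
  ⟨h.1.symm, h.2.2.1, h.2.1, by obtain ⟨y, h1, h2, h3, h4⟩ := h.2.2.2; exact ⟨y, h1, h2, h4, h3⟩⟩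

variable (Hab : ∀ y x, G.Adj y x → C x = i → x = a y ∨ x = b y)
variable (Hτ : ∀ {y z : V}, C y = j → C z = j → y ≠ z →
    (∃ x, G.Adj y x ∧ G.Adj z x ∧ C x = i) → τ y ≠ τ z)

include Hab Hτ

lemma matched_unique {x w w' : V} (h : Matched G C i j τ t x w)
    (h' : Matched G C i j τ t x w') : w = w' := by
  obtain ⟨hxw, hxi, hwi, y, hyj, hyt, hyx, hyw⟩ := h
  obtain ⟨hxw', _, hw'i, y', hy'j, hy't, hy'x, hy'w'⟩ := h'
  by_cases hyy : y = y'
  · subst hyy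
    rcases Hab y x hyx hxi with hx1 | hx1 <;>
      rcases Hab y w hyw hwi with hw1 | hw1 <;>
        rcases Hab y w' hy'w' hw'i with hw2 | hw2 <;>
          first
            | exact hw1.trans hw2.symm
            | exact absurd (hx1.trans hw1.symm) hxw
            | exact absurd (hx1.trans hw2.symm) hxw'
  · exact absurd (hyt.trans hy't.symm) (Hτ hyj hy'j hyy ⟨x, hyx, hy'x, hxi⟩)

lemma q_matched {x w : V} (h : Matched G C i j τ t x w) :
    q G C i j τ t x = 2 * min (idx x) (idx w) + if idx x < idx w then 0 else 1 := by
  have hex : ∃ w', Matched G C i j τ t x w' := ⟨w, h⟩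
  rw [q, dif_pos hex]
  rw [matched_unique Hab Hτ hex.choose_spec h]

omit Hab Hτ

lemma q_unmatched {x : V} (h : ¬ ∃ w, Matched G C i j τ t x w) :
    q G C i j τ t x = 2 * idx x := dif_neg h

lemma q_lt (x : V) : q G C i j τ t x < 2 * Fintype.card V := by
  have h1 := idx_lt x
  unfold q
  split
  · next h =>
    have h2 : min (idx x) (idx h.choose) ≤ idx x := min_le_left _ _
    split <;> omega
  · omega

include Hab Hτ

lemma q_inj {x z : V} (h : q G C i j τ t x = q G C i j τ t z) : x = z := by
  by_cases hmx : ∃ w, Matched G C i j τ t x w <;>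
    by_cases hmz : ∃ w, Matched G C i j τ t z w
  · obtain ⟨wx, hwx⟩ := hmx
    obtain ⟨wz, hwz⟩ := hmz
    rw [q_matched Hab Hτ hwx, q_matched Hab Hτ hwz] at h
    by_contra hxz
    have hnxz : idx x ≠ idx z := fun hh => hxz (idx_inj hh)
    have hnxwx : idx x ≠ idx wx := fun hh => hwx.1 (idx_inj hh)
    have hnzwz : idx z ≠ idx wz := fun hh => hwz.1 (idx_inj hh)
    by_cases h1 : wx = z
    · subst h1
      have hwzx : wz = x := (matched_unique Hab Hτ (matched_symm hwx) hwz).symm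
      rw [hwzx, min_comm (idx wx) (idx x)] at h
      split_ifs at h <;> omega
    · by_cases h2 : wz = x
      · subst h2
        exact h1 (matched_unique Hab Hτ hwx (matched_symm hwz))
      · have h3 : wx ≠ wz := by
          intro hh
          subst hh
          exact hxz (matched_unique Hab Hτ (matched_symm hwx) (matched_symm hwz))
        have hne : min (idx x) (idx wx) ≠ min (idx z) (idx wz) := by
          rcases min_choice (idx x) (idx wx) with hc1 | hc1 <;>
            rcases min_choice (idx z) (idx wz) with hc2 | hc2 <;> rw [hc1, hc2]
          · exact fun hh => hxz (idx_inj hh)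
          · exact fun hh => h2 (idx_inj hh).symm
          · exact fun hh => h1 (idx_inj hh)
          · exact fun hh => h3 (idx_inj hh)
        split_ifs at h <;> omega
  · obtain ⟨w, hw⟩ := hmx
    rw [q_matched Hab Hτ hw, q_unmatched hmz] at h
    have hne : idx x ≠ idx w := fun hh => hw.1 (idx_inj hh)
    split_ifs at h with hlt
    · rw [min_eq_left hlt.le] at h
      exact idx_inj (by omega)
    · rw [min_eq_right (by omega)] at h
      omega
  · obtain ⟨w, hw⟩ := hmz
    rw [q_unmatched hmx, q_matched Hab Hτ hw] at h
    have hne : idx z ≠ idx w := fun hh => hw.1 (idx_inj hh)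
    split_ifs at h with hlt
    · rw [min_eq_left hlt.le] at h
      exact idx_inj (by omega)
    · rw [min_eq_right (by omega)] at h
      omega
  · rw [q_unmatched hmx, q_unmatched hmz] at h
    exact idx_inj (by omega)

lemma q_pair {x w : V} (h : Matched G C i j τ t x w) :
    min (q G C i j τ t x) (q G C i j τ t w) = 2 * min (idx x) (idx w) ∧
      max (q G C i j τ t x) (q G C i j τ t w) = 2 * min (idx x) (idx w) + 1 := by
  have h1 := q_matched Hab Hτ h
  have h2 := q_matched Hab Hτ (matched_symm h)
  have hne : idx x ≠ idx w := fun hh => h.1 (idx_inj hh)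
  rw [h1, h2, min_comm (idx w) (idx x)]
  split_ifs <;> constructor <;> omega

lemma q_outside {x w z : V} (h : Matched G C i j τ t x w) (hzx : z ≠ x) (hzw : z ≠ w) :
    q G C i j τ t z < min (q G C i j τ t x) (q G C i j τ t w) ∨
      max (q G C i j τ t x) (q G C i j τ t w) < q G C i j τ t z := by
  obtain ⟨hp1, hp2⟩ := q_pair Hab Hτ h
  have n1 : q G C i j τ t z ≠ q G C i j τ t x := fun hh => hzx (q_inj Hab Hτ hh)
  have n2 : q G C i j τ t z ≠ q G C i j τ t w := fun hh => hzw (q_inj Hab Hτ hh)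
  rcases min_choice (q G C i j τ t x) (q G C i j τ t w) with hc1 | hc1 <;>
    rcases max_choice (q G C i j τ t x) (q G C i j τ t w) with hc2 | hc2 <;> omega

end Pair


section Graphs

variable {n : ℕ} (G : SimpleGraph V) (C : V → Fin n) (i j : Fin n) (τ : V → Fin 3)
    (a b : V → V) (t : Fin 3)

noncomputable def Mr (V : Type) [Fintype V] : ℝ := (2 * Fintype.card V + 2 : ℕ)

noncomputable def lo (x : V) : ℝ :=
  if C x = i then (q G C i j τ t x : ℝ)
  else if C x = j ∧ τ x = t then
    (if ∃ z, G.Adj x z ∧ C z = i then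
      ((min (q G C i j τ t (a x)) (q G C i j τ t (b x)) : ℕ) : ℝ) else -1)
  else -1

noncomputable def hi (x : V) : ℝ :=
  if C x = i then (q G C i j τ t x : ℝ)
  else if C x = j ∧ τ x = t then
    (if ∃ z, G.Adj x z ∧ C z = i then
      ((max (q G C i j τ t (a x)) (q G C i j τ t (b x)) : ℕ) : ℝ) else -1)
  else Mr V

noncomputable def Jg : SimpleGraph V :=
  mkIG (lo G C i j τ a b t) (hi G C i j τ a b t)

lemma cast_le_Mr (m : ℕ) (h : m ≤ 2 * Fintype.card V + 2) : (m : ℝ) ≤ Mr V := by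
  rw [Mr]
  exact_mod_cast h

lemma lo_hi_bounds (x : V) :
    -1 ≤ lo G C i j τ a b t x ∧ lo G C i j τ a b t x ≤ hi G C i j τ a b t x ∧
      hi G C i j τ a b t x ≤ Mr V := by
  unfold lo hi
  split_ifs with h1 h2 h3
  · have := q_lt (G := G) (C := C) (i := i) (j := j) (τ := τ) (t := t) x
    refine ⟨le_trans (by norm_num) (Nat.cast_nonneg _), le_refl _, cast_le_Mr _ (by omega)⟩
  · have ha := q_lt (G := G) (C := C) (i := i) (j := j) (τ := τ) (t := t) (a x)
    have hb := q_lt (G := G) (C := C) (i := i) (j := j) (τ := τ) (t := t) (b x)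
    refine ⟨le_trans (by norm_num) (Nat.cast_nonneg _), ?_, cast_le_Mr _ ?_⟩
    · exact_mod_cast min_le_max
    · rcases max_choice (q G C i j τ t (a x)) (q G C i j τ t (b x)) with h | h <;> omega
  · exact ⟨le_refl _, le_refl _, le_trans (by norm_num) (Nat.cast_nonneg _)⟩
  · refine ⟨le_refl _, ?_, le_refl _⟩
    have : (0:ℝ) ≤ Mr V := Nat.cast_nonneg _
    linarith

/-- intersection with a "huge" interval `[-1, Mr]` is nonempty -/
lemma huge_inter {l r : V → ℝ} (hb : ∀ x, -1 ≤ l x ∧ l x ≤ r x ∧ r x ≤ Mr V) {v : V}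
    (hv1 : l v = -1) (hv2 : r v = Mr V) (u : V) :
    (Set.Icc (l v) (r v) ∩ Set.Icc (l u) (r u)).Nonempty :=
  ⟨l u, ⟨hv1 ▸ (hb u).1, hv2 ▸ ((hb u).2.1.trans (hb u).2.2)⟩, le_refl _, (hb u).2.1⟩

lemma mkIG_univ_huge {l r : V → ℝ} (hb : ∀ x, -1 ≤ l x ∧ l x ≤ r x ∧ r x ≤ Mr V) {v : V}
    (hv1 : l v = -1) (hv2 : r v = Mr V) : IsUniversal (mkIG l r) v :=
  mkIG_univ (huge_inter hb hv1 hv2)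

lemma Jg_univ_other {v : V} (hvi : C v ≠ i) (hvj : C v ≠ j) :
    IsUniversal (Jg G C i j τ a b t) v := by
  apply mkIG_univ_huge (lo_hi_bounds G C i j τ a b t)
  · rw [lo, if_neg hvi, if_neg (fun h => hvj h.1)]
  · rw [hi, if_neg hvi, if_neg (fun h => hvj h.1)]

lemma Jg_univ_inactive {v : V} (hij : i ≠ j) (hvj : C v = j) (hvt : τ v ≠ t) :
    IsUniversal (Jg G C i j τ a b t) v := by
  have hvi : C v ≠ i := fun h => hij (h.symm.trans hvj)
  apply mkIG_univ_huge (lo_hi_bounds G C i j τ a b t)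
  · rw [lo, if_neg hvi, if_neg (fun h => hvt h.2)]
  · rw [hi, if_neg hvi, if_neg (fun h => hvt h.2)]

end Graphs

section Graphs2

variable {n : ℕ} (G : SimpleGraph V) (C : V → Fin n) (i j : Fin n) (τ : V → Fin 3)
    (a b : V → V) (t : Fin 3)

variable {G C i j τ a b t}

variable (HC : ∀ {u v : V}, G.Adj u v → C u ≠ C v)
    (Hab : ∀ y x, G.Adj y x → C x = i → x = a y ∨ x = b y)
    (Hmem : ∀ y, (∃ x, G.Adj y x ∧ C x = i) →
      G.Adj y (a y) ∧ C (a y) = i ∧ G.Adj y (b y) ∧ C (b y) = i)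
    (Hτ : ∀ {y z : V}, C y = j → C z = j → y ≠ z →
      (∃ x, G.Adj y x ∧ G.Adj z x ∧ C x = i) → τ y ≠ τ z)

include HC Hab Hmem in
lemma Jg_adj_of_adj {u v : V} (h : G.Adj u v) : (Jg G C i j τ a b t).Adj u v := by
  have hb := lo_hi_bounds G C i j τ a b t
  refine ⟨h.ne, ?_⟩
  have key : ∀ u v : V, G.Adj u v → C u = i →
      (Set.Icc (lo G C i j τ a b t u) (hi G C i j τ a b t u) ∩
        Set.Icc (lo G C i j τ a b t v) (hi G C i j τ a b t v)).Nonempty := by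
    intro u v h hu
    have hv : C v ≠ i := fun hv => HC h (hu.trans hv.symm)
    have hqu : lo G C i j τ a b t u = (q G C i j τ t u : ℝ) := by rw [lo, if_pos hu]
    have hqu' : hi G C i j τ a b t u = (q G C i j τ t u : ℝ) := by rw [hi, if_pos hu]
    refine ⟨(q G C i j τ t u : ℝ),
      Set.mem_inter (Set.mem_Icc.2 ⟨hqu ▸ le_refl _, hqu' ▸ le_refl _⟩) ?_⟩
    rw [Set.mem_Icc]
    by_cases hva : C v = j ∧ τ v = t
    · have hex : ∃ z, G.Adj v z ∧ C z = i := ⟨u, h.symm, hu⟩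
      have hlov : lo G C i j τ a b t v =
          ((min (q G C i j τ t (a v)) (q G C i j τ t (b v)) : ℕ) : ℝ) := by
        rw [lo, if_neg hv, if_pos hva, if_pos hex]
      have hhiv : hi G C i j τ a b t v =
          ((max (q G C i j τ t (a v)) (q G C i j τ t (b v)) : ℕ) : ℝ) := by
        rw [hi, if_neg hv, if_pos hva, if_pos hex]
      rw [hlov, hhiv]
      rcases Hab v u h.symm hu with h' | h'
      · rw [← h']
        exact ⟨by exact_mod_cast min_le_left _ _, by exact_mod_cast le_max_left _ _⟩
      · rw [← h']
        exact ⟨by exact_mod_cast min_le_right _ _, by exact_mod_cast le_max_right _ _⟩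
    · have hlov : lo G C i j τ a b t v = -1 := by rw [lo, if_neg hv, if_neg hva]
      have hhiv : hi G C i j τ a b t v = Mr V := by rw [hi, if_neg hv, if_neg hva]
      rw [hlov, hhiv]
      have := q_lt (G := G) (C := C) (i := i) (j := j) (τ := τ) (t := t) u
      exact ⟨le_trans (by norm_num) (Nat.cast_nonneg _), cast_le_Mr _ (by omega)⟩
  by_cases hu : C u = i
  · exact key u v h hu
  · by_cases hv : C v = i
    · rw [Set.inter_comm]
      exact key v u h.symm hv
    · -- neither endpoint has color i : at least one is huge
      by_cases hua : C u = j ∧ τ u = t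
      · have hva : ¬ (C v = j ∧ τ v = t) := fun hva => HC h (hua.1.trans hva.1.symm)
        have hlov : lo G C i j τ a b t v = -1 := by rw [lo, if_neg hv, if_neg hva]
        have hhiv : hi G C i j τ a b t v = Mr V := by rw [hi, if_neg hv, if_neg hva]
        rw [Set.inter_comm]
        exact huge_inter hb hlov hhiv u
      · have hlou : lo G C i j τ a b t u = -1 := by rw [lo, if_neg hu, if_neg hua]
        have hhiu : hi G C i j τ a b t u = Mr V := by rw [hi, if_neg hu, if_neg hua]
        exact huge_inter hb hlou hhiu v

include Hab Hτ in
lemma Jg_kill_X {u v : V} (hu : C u = i) (hv : C v = i) (hne : u ≠ v) :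
    ¬ (Jg G C i j τ a b t).Adj u v := by
  rintro ⟨-, p, ⟨hpu1, hpu2⟩, ⟨hpv1, hpv2⟩⟩
  rw [lo, if_pos hu] at hpu1
  rw [hi, if_pos hu] at hpu2
  rw [lo, if_pos hv] at hpv1
  rw [hi, if_pos hv] at hpv2
  have h1 : p = (q G C i j τ t u : ℝ) := le_antisymm hpu2 hpu1
  have h2 : p = (q G C i j τ t v : ℝ) := le_antisymm hpv2 hpv1
  have : q G C i j τ t u = q G C i j τ t v := by exact_mod_cast h1.symm.trans h2
  exact hne (q_inj Hab Hτ this)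

include HC Hab Hmem Hτ in
lemma Jg_kill_cross {u v : V} (hij : i ≠ j) (hu : C u = i) (hv : C v = j) (hvt : τ v = t)
    (hnadj : ¬ G.Adj u v) : ¬ (Jg G C i j τ a b t).Adj u v := by
  rintro ⟨-, p, ⟨hpu1, hpu2⟩, ⟨hpv1, hpv2⟩⟩
  rw [lo, if_pos hu] at hpu1
  rw [hi, if_pos hu] at hpu2
  have hp : p = (q G C i j τ t u : ℝ) := le_antisymm hpu2 hpu1
  subst hp
  have hvi : C v ≠ i := fun h => hij (h.symm.trans hv)
  have hva : C v = j ∧ τ v = t := ⟨hv, hvt⟩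
  have hnadj' : ¬ G.Adj v u := fun h => hnadj h.symm
  by_cases hex : ∃ z, G.Adj v z ∧ C z = i
  · rw [lo, if_neg hvi, if_pos hva, if_pos hex] at hpv1
    rw [hi, if_neg hvi, if_pos hva, if_pos hex] at hpv2
    obtain ⟨hadja, hca, hadjb, hcb⟩ := Hmem v hex
    have hua : u ≠ a v := fun h => hnadj' (h ▸ hadja)
    have hub : u ≠ b v := fun h => hnadj' (h ▸ hadjb)
    by_cases heq : a v = b v
    · -- single neighbor
      rw [heq] at hpv1
      rw [min_self] at hpv1
      rw [heq, max_self] at hpv2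
      have : q G C i j τ t u = q G C i j τ t (b v) := by
        exact_mod_cast le_antisymm hpv2 hpv1
      exact hub (q_inj Hab Hτ this)
    · have hM : Matched G C i j τ t (a v) (b v) :=
        ⟨heq, hca, hcb, v, hv, hvt, hadja, hadjb⟩
      have hout := q_outside Hab Hτ hM hua hub
      have c1 : (min (q G C i j τ t (a v)) (q G C i j τ t (b v)) : ℕ) ≤ q G C i j τ t u := by
        exact_mod_cast hpv1
      have c2 : q G C i j τ t u ≤ (max (q G C i j τ t (a v)) (q G C i j τ t (b v)) : ℕ) := by
        exact_mod_cast hpv2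
      omega
  · rw [hi, if_neg hvi, if_pos hva, if_neg hex] at hpv2
    have : ((q G C i j τ t u : ℕ) : ℝ) ≥ 0 := Nat.cast_nonneg _
    linarith

end Graphs2

section KJunk

variable {n : ℕ} (G : SimpleGraph V) (C : V → Fin n) (m : Fin n)

noncomputable def Kg : SimpleGraph V :=
  mkIG (fun x => if C x = m then (idx x : ℝ) else -1)
    (fun x => if C x = m then (idx x : ℝ) else Mr V)

lemma Kg_bounds (x : V) :
    -1 ≤ (if C x = m then (idx x : ℝ) else -1) ∧
    (if C x = m then (idx x : ℝ) else -1) ≤ (if C x = m then (idx x : ℝ) else Mr V) ∧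
    (if C x = m then (idx x : ℝ) else Mr V) ≤ Mr V := by
  split_ifs with h
  · have := idx_lt x
    exact ⟨le_trans (by norm_num) (Nat.cast_nonneg _), le_refl _, cast_le_Mr _ (by omega)⟩
  · exact ⟨le_refl _, le_trans (by norm_num) (Nat.cast_nonneg _), le_refl _⟩

lemma Kg_univ {v : V} (hv : C v ≠ m) : IsUniversal (Kg C m) v :=
  mkIG_univ_huge (Kg_bounds C m) (by simp [hv]) (by simp [hv])

lemma Kg_adj_of_adj (HC : ∀ {u v : V}, G.Adj u v → C u ≠ C v) {u v : V} (h : G.Adj u v) :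
    (Kg C m).Adj u v := by
  refine ⟨h.ne, ?_⟩
  by_cases hu : C u = m
  · have hv : C v ≠ m := fun hv => HC h (hu.trans hv.symm)
    rw [Set.inter_comm]
    exact huge_inter (Kg_bounds C m) (by simp [hv]) (by simp [hv]) u
  · exact huge_inter (Kg_bounds C m) (by simp [hu]) (by simp [hu]) v

lemma Kg_kill {u v : V} (hu : C u = m) (hv : C v = m) (hne : u ≠ v) :
    ¬ (Kg C m).Adj u v := by
  rintro ⟨-, p, ⟨hpu1, hpu2⟩, ⟨hpv1, hpv2⟩⟩
  simp only [hu, hv, if_pos] at hpu1 hpu2 hpv1 hpv2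
  have h1 : p = (idx u : ℝ) := le_antisymm hpu2 hpu1
  have h2 : p = (idx v : ℝ) := le_antisymm hpv2 hpv1
  exact hne (idx_inj (by exact_mod_cast h1.symm.trans h2))

def junk : SimpleGraph V := mkIG (fun _ => 0) (fun _ => 1)

lemma junk_univ (v : V) : IsUniversal (junk (V := V)) v :=
  mkIG_univ fun u => ⟨0, by norm_num⟩

lemma junk_adj {u v : V} (h : u ≠ v) : (junk (V := V)).Adj u v :=
  ⟨h, 0, by norm_num⟩

end KJunk

section Assemble

variable {n : ℕ}

lemma exists_tau (G : SimpleGraph V) (C : V → Fin n) (a b : Fin n → V → V)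
    (Hab : ∀ i y x, G.Adj y x → C x = i → x = a i y ∨ x = b i y) (i j : Fin n) :
    ∃ τ : V → Fin 3, ∀ y z, C y = j → C z = j → y ≠ z →
      (∃ x, G.Adj y x ∧ G.Adj z x ∧ C x = i) → τ y ≠ τ z := by
  have hdeg : ∀ y, ∃ u w, ∀ z,
      (y ≠ z ∧ C y = j ∧ C z = j ∧ ∃ x, G.Adj y x ∧ G.Adj z x ∧ C x = i) →
        z = u ∨ z = w := by
    intro y
    refine ⟨(if a j (a i y) = y then b j (a i y) else a j (a i y)),
            (if a j (b i y) = y then b j (b i y) else a j (b i y)), ?_⟩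
    rintro z ⟨hne, hyj, hzj, x, hyx, hzx, hxi⟩
    have hkey : ∀ w : V, G.Adj y w → G.Adj z w → C w = i →
        z = (if a j w = y then b j w else a j w) := by
      intro w hyw hzw hwi
      have hy' := Hab j w y hyw.symm hyj
      have hz' := Hab j w z hzw.symm hzj
      by_cases hya : a j w = y
      · rw [if_pos hya]
        rcases hz' with hz'' | hz''
        · exact absurd (hz''.trans hya).symm hne
        · exact hz''
      · rw [if_neg hya]
        have hyb : y = b j w := by
          rcases hy' with h | h
          · exact absurd h.symm hya
          · exact h
        rcases hz' with hz'' | hz''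
        · exact hz''
        · exact absurd (hz''.trans hyb.symm).symm hne
    rcases Hab i y x hyx hxi with h | h
    · subst h
      exact Or.inl (hkey _ hyx hzx hxi)
    · subst h
      exact Or.inr (hkey _ hyx hzx hxi)
  obtain ⟨τ, hτ⟩ := greedy3
    (fun y z => y ≠ z ∧ C y = j ∧ C z = j ∧ ∃ x, G.Adj y x ∧ G.Adj z x ∧ C x = i)
    (fun h => h.1)
    (fun h => ⟨h.1.symm, h.2.2.1, h.2.1, by
      obtain ⟨x, h1, h2, h3⟩ := h.2.2.2; exact ⟨x, h2, h1, h3⟩⟩)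
    hdeg
  exact ⟨τ, fun y z h1 h2 h3 h4 => hτ y z ⟨h3, h1, h2, h4⟩⟩

lemma exists_pair (G : SimpleGraph V) (hclaw : ClawFree G) (C : V → Fin n)
    (HC : ∀ {u v : V}, G.Adj u v → C u ≠ C v) (i : Fin n) (y : V) :
    ∃ p : V × V, (∀ x, G.Adj y x → C x = i → x = p.1 ∨ x = p.2) ∧
      ((∃ x, G.Adj y x ∧ C x = i) →
        G.Adj y p.1 ∧ C p.1 = i ∧ G.Adj y p.2 ∧ C p.2 = i) := by
  by_cases hN : ∃ x, G.Adj y x ∧ C x = i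
  · obtain ⟨a0, ha1, ha2⟩ := hN
    by_cases h2 : ∃ x, G.Adj y x ∧ C x = i ∧ x ≠ a0
    · obtain ⟨b0, hb1, hb2, hb3⟩ := h2
      refine ⟨(a0, b0), ?_, fun _ => ⟨ha1, ha2, hb1, hb2⟩⟩
      intro x hx hcx
      by_contra hcon
      push_neg at hcon
      obtain ⟨hxa, hxb⟩ := hcon
      refine hclaw y a0 b0 x hb3.symm hxa.symm hxb.symm
        ⟨ha1, hb1, hx, ?_, ?_, ?_⟩
      · exact fun h => HC h (by rw [ha2, hb2])
      · exact fun h => HC h (by rw [ha2, hcx])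
      · exact fun h => HC h (by rw [hb2, hcx])
    · push_neg at h2
      exact ⟨(a0, a0), fun x hx hc => Or.inl (h2 x hx hc),
        fun _ => ⟨ha1, ha2, ha1, ha2⟩⟩
  · exact ⟨(y, y), fun x hx hc => (hN ⟨x, hx, hc⟩).elim, fun h => (hN h).elim⟩

noncomputable def famGraph (G : SimpleGraph V) (C : V → Fin n)
    (τf : Fin n → Fin n → V → Fin 3) (a b : Fin n → V → V) (top : Fin n) :
    (((Fin n × Fin n) × Fin 3) ⊕ Unit) → SimpleGraph V :=
  Sum.elim
    (fun p => if p.1.1 < p.1.2 then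
      Jg G C p.1.1 p.1.2 (τf p.1.1 p.1.2) (a p.1.1) (b p.1.1) p.2 else junk)
    (fun _ => Kg C top)

lemma famGraph_inl (G : SimpleGraph V) (C : V → Fin n)
    (τf : Fin n → Fin n → V → Fin 3) (a b : Fin n → V → V) (top : Fin n)
    (p : (Fin n × Fin n) × Fin 3) :
    famGraph G C τf a b top (Sum.inl p) = if p.1.1 < p.1.2 then
      Jg G C p.1.1 p.1.2 (τf p.1.1 p.1.2) (a p.1.1) (b p.1.1) p.2 else junk := rfl

lemma famGraph_inr (G : SimpleGraph V) (C : V → Fin n)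
    (τf : Fin n → Fin n → V → Fin 3) (a b : Fin n → V → V) (top : Fin n) (u : Unit) :
    famGraph G C τf a b top (Sum.inr u) = Kg C top := rfl

theorem main_aux (G : SimpleGraph V) (hn : 2 ≤ n)
    (C : V → Fin n) (HC : ∀ {u v : V}, G.Adj u v → C u ≠ C v)
    (a b : Fin n → V → V)
    (Hab : ∀ i y x, G.Adj y x → C x = i → x = a i y ∨ x = b i y)
    (Hmem : ∀ i y, (∃ x, G.Adj y x ∧ C x = i) →
      G.Adj y (a i y) ∧ C (a i y) = i ∧ G.Adj y (b i y) ∧ C (b i y) = i)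
    (τf : Fin n → Fin n → V → Fin 3)
    (Hτ : ∀ i j y z, C y = j → C z = j → y ≠ z →
      (∃ x, G.Adj y x ∧ G.Adj z x ∧ C x = i) → τf i j y ≠ τf i j z) :
    LocalBoxRep G (3 * (n - 1)) := by
  have hn0 : 0 < n := by omega
  set top : Fin n := ⟨n - 1, by omega⟩ with htop
  set T := (((Fin n × Fin n) × Fin 3) ⊕ Unit) with hT
  let e := Fintype.equivFin T
  refine ⟨Fintype.card T, fun κ => famGraph G C τf a b top (e.symm κ), ?_, ?_, ?_⟩
  · -- all are interval graphs
    intro κ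
    rcases hs : e.symm κ with p | u
    · simp only [hs, famGraph_inl]
      split_ifs
      · exact mkIG_interval _ _
      · exact mkIG_interval _ _
    · simp only [hs, famGraph_inr]
      exact mkIG_interval _ _
  · -- adjacency
    intro u v hne
    constructor
    · intro hadj κ
      rcases hs : e.symm κ with p | u'
      · simp only [hs, famGraph_inl]
        split_ifs
        · exact Jg_adj_of_adj HC (Hab p.1.1) (Hmem p.1.1) hadj
        · exact junk_adj hne
      · simp only [hs, famGraph_inr]
        exact Kg_adj_of_adj G C top HC hadj
    · intro hall
      by_contra hnadj
      rcases lt_trichotomy (C u) (C v) with hlt | heq | hlt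
      · have hx := hall (e (Sum.inl ((C u, C v), τf (C u) (C v) v)))
        simp only [Equiv.symm_apply_apply, famGraph_inl] at hx
        rw [if_pos hlt] at hx
        exact Jg_kill_cross HC (Hab (C u)) (Hmem (C u))
          (fun {y z} h1 h2 h3 h4 => Hτ (C u) (C v) y z h1 h2 h3 h4)
          (ne_of_lt hlt) rfl rfl rfl hnadj hx
      · by_cases hctop : C u = top
        · have hx := hall (e (Sum.inr ()))
          simp only [Equiv.symm_apply_apply, famGraph_inr] at hx
          exact Kg_kill C top hctop (heq.symm.trans hctop) hne hx
        · have hlt2 : C u < top := by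
            have h1 : (C u).val ≤ n - 1 := by omega
            have h2 : (C u).val ≠ n - 1 := fun hh => hctop (Fin.ext hh)
            exact Fin.lt_def.2 (by simp only [htop]; omega)
          have hx := hall (e (Sum.inl ((C u, top), 0)))
          simp only [Equiv.symm_apply_apply, famGraph_inl] at hx
          rw [if_pos hlt2] at hx
          exact Jg_kill_X (Hab (C u))
            (fun {y z} h1 h2 h3 h4 => Hτ (C u) top y z h1 h2 h3 h4)
            rfl heq.symm hne hx
      · have hx := hall (e (Sum.inl ((C v, C u), τf (C v) (C u) u)))
        simp only [Equiv.symm_apply_apply, famGraph_inl] at hx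
        rw [if_pos hlt] at hx
        exact Jg_kill_cross HC (Hab (C v)) (Hmem (C v))
          (fun {y z} h1 h2 h3 h4 => Hτ (C v) (C u) y z h1 h2 h3 h4)
          (ne_of_lt hlt) rfl rfl rfl (fun h => hnadj h.symm) hx.symm
  · -- counting
    intro v
    have hchar : ∀ p : (Fin n × Fin n) × Fin 3,
        ¬ IsUniversal (famGraph G C τf a b top (Sum.inl p)) v →
        p.1.1 < p.1.2 ∧ (p.1.1 = C v ∨
          (p.1.2 = C v ∧ p.1.1 ≠ C v ∧ p.2 = τf p.1.1 p.1.2 v)) := by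
      rintro ⟨⟨i1, j1⟩, s⟩ hbad
      rw [famGraph_inl] at hbad
      by_cases hlt : i1 < j1
      · rw [if_pos hlt] at hbad
        refine ⟨hlt, ?_⟩
        by_cases h1 : i1 = C v
        · exact Or.inl h1
        · right
          by_cases h2 : j1 = C v
          · refine ⟨h2, h1, ?_⟩
            by_contra hs
            exact hbad (Jg_univ_inactive G C i1 j1 (τf i1 j1) (a i1) (b i1) s
              (ne_of_lt hlt) h2.symm (fun hh => hs hh.symm))
          · exact absurd (Jg_univ_other G C i1 j1 (τf i1 j1) (a i1) (b i1) s
              (fun hh => h1 hh.symm) (fun hh => h2 hh.symm)) hbad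
      · rw [if_neg hlt] at hbad
        exact absurd (junk_univ v) hbad
    have hcharr : ∀ u : Unit,
        ¬ IsUniversal (famGraph G C τf a b top (Sum.inr u)) v → C v = top := by
      intro u hbad
      rw [famGraph_inr] at hbad
      by_contra hh
      exact hbad (Kg_univ C top (fun h => hh h))
    have hcard : ({p : Fin 3 × Fin n | p.2 ≠ C v}).ncard = 3 * (n - 1) := by
      have hset : {p : Fin 3 × Fin n | p.2 ≠ C v} =
          ↑((Finset.univ : Finset (Fin 3)) ×ˢ (Finset.univ.erase (C v))) := by
        ext p
        simp [Finset.mem_erase]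
      rw [hset, Set.ncard_coe_finset, Finset.card_product,
        Finset.card_erase_of_mem (Finset.mem_univ _)]
      simp
    rw [← hcard]
    apply Set.ncard_le_ncard_of_injOn
      (fun κ => Sum.elim
        (fun p : (Fin n × Fin n) × Fin 3 =>
          if p.1.1 = C v then (p.2, p.1.2) else ((0 : Fin 3), p.1.1))
        (fun _ => ((1 : Fin 3), (⟨0, hn0⟩ : Fin n))) (e.symm κ))
    · -- maps to
      intro κ hκ
      simp only [Set.mem_setOf_eq] at hκ ⊢
      rcases hs : e.symm κ with p | u'
      · simp only [hs] at hκ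
        obtain ⟨hlt, hcase⟩ := hchar p hκ
        simp only [hs, Sum.elim_inl]
        by_cases h1 : p.1.1 = C v
        · rw [if_pos h1]
          exact fun hh => absurd (h1 ▸ hh ▸ hlt) (lt_irrefl _)
        · rw [if_neg h1]
          exact fun hh => h1 hh
      · simp only [hs] at hκ
        have hcv := hcharr u' hκ
        simp only [hs, Sum.elim_inr]
        intro hh
        rw [hcv, htop] at hh
        have hval : (0 : ℕ) = n - 1 := congrArg Fin.val hh
        omega
    · -- injective on the bad set
      intro κ1 hκ1 κ2 hκ2 hf
      simp only [Set.mem_setOf_eq] at hκ1 hκ2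
      apply e.symm.injective
      rcases hs1 : e.symm κ1 with p1 | u1 <;> rcases hs2 : e.symm κ2 with p2 | u2 <;>
        (try simp only [hs1] at hκ1 hf) <;> (try simp only [hs2] at hκ2 hf) <;>
        (try simp only [Sum.elim_inl, Sum.elim_inr] at hf)
      · obtain ⟨⟨i1, j1⟩, s1⟩ := p1
        obtain ⟨⟨i2, j2⟩, s2⟩ := p2
        obtain ⟨hlt1, hcase1⟩ := hchar _ hκ1
        obtain ⟨hlt2, hcase2⟩ := hchar _ hκ2
        dsimp only at hlt1 hcase1 hlt2 hcase2 hf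
        congr 1
        simp only [Prod.mk.injEq]
        split_ifs at hf with d1 d2 d2 <;> simp only [Prod.mk.injEq] at hf
        · exact ⟨⟨d1.trans d2.symm, hf.2⟩, hf.1⟩
        · exfalso
          have hj2 : j2 = C v := by
            rcases hcase2 with h | h
            · exact absurd h d2
            · exact h.1
          have l1 := Fin.lt_def.1 hlt1
          have l2 := Fin.lt_def.1 hlt2
          have e1 : i1.val = (C v).val := congrArg Fin.val d1
          have e2 : j2.val = (C v).val := congrArg Fin.val hj2
          have e3 : j1.val = i2.val := congrArg Fin.val hf.2
          omega
        · exfalso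
          have hj1 : j1 = C v := by
            rcases hcase1 with h | h
            · exact absurd h d1
            · exact h.1
          have l1 := Fin.lt_def.1 hlt1
          have l2 := Fin.lt_def.1 hlt2
          have e1 : i2.val = (C v).val := congrArg Fin.val d2
          have e2 : j1.val = (C v).val := congrArg Fin.val hj1
          have e3 : i1.val = j2.val := congrArg Fin.val hf.2
          omega
        · obtain ⟨hj1, -, hs1'⟩ := hcase1.resolve_left d1
          obtain ⟨hj2, -, hs2'⟩ := hcase2.resolve_left d2
          have hii : i1 = i2 := hf.2
          have hjj : j1 = j2 := hj1.trans hj2.symm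
          refine ⟨⟨hii, hjj⟩, ?_⟩
          rw [hs1', hs2', hii, hjj]
      · obtain ⟨⟨i1, j1⟩, s1⟩ := p1
        obtain ⟨hlt1, hcase1⟩ := hchar _ hκ1
        dsimp only at hlt1 hcase1 hf
        exfalso
        split_ifs at hf with d1 <;> simp only [Prod.mk.injEq] at hf
        · have h0 := congrArg Fin.val hf.2
          simp at h0
          have := Fin.lt_def.1 hlt1
          omega
        · have : (0 : Fin 3) = 1 := hf.1
          simp at this
      · obtain ⟨⟨i2, j2⟩, s2⟩ := p2
        obtain ⟨hlt2, hcase2⟩ := hchar _ hκ2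
        dsimp only at hlt2 hcase2 hf
        exfalso
        split_ifs at hf with d1 <;> simp only [Prod.mk.injEq] at hf
        · have h0 := congrArg Fin.val hf.2
          simp at h0
          have := Fin.lt_def.1 hlt2
          omega
        · have : (1 : Fin 3) = 0 := hf.1
          simp at this
      · exact congrArg Sum.inr (Subsingleton.elim u1 u2)

end Assemble

end Stmt6Aux

/-- claw-free G with chromatic number χ(G) ≥ 2 satisfies
lbox(G) ≤ 3(χ(G) − 1). -/
theorem stmt6 {V : Type} [Fintype V] (G : SimpleGraph V) (hclaw : ClawFree G)
    (n : ℕ) (hchrom : G.chromaticNumber = n) (hn : 2 ≤ n) :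
    lbox G ≤ 3 * (n - 1) := by
  classical
  have hcol : G.Colorable n := by
    rw [← SimpleGraph.chromaticNumber_le_iff_colorable]
    exact le_of_eq hchrom
  obtain ⟨C0⟩ := hcol
  set C : V → Fin n := fun x => C0 x with hC
  have HC : ∀ {u v : V}, G.Adj u v → C u ≠ C v := fun h => C0.valid h
  choose P hP using fun (i : Fin n) (y : V) =>
    Stmt6Aux.exists_pair G hclaw C (fun {u v} h => HC h) i y
  set A : Fin n → V → V := fun i y => (P i y).1 with hA
  set B : Fin n → V → V := fun i y => (P i y).2 with hB
  have Hab : ∀ i y x, G.Adj y x → C x = i → x = A i y ∨ x = B i y :=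
    fun i y x h1 h2 => (hP i y).1 x h1 h2
  have Hmem : ∀ i y, (∃ x, G.Adj y x ∧ C x = i) →
      G.Adj y (A i y) ∧ C (A i y) = i ∧ G.Adj y (B i y) ∧ C (B i y) = i :=
    fun i y hx => (hP i y).2 hx
  choose τf hτf using fun (i j : Fin n) => Stmt6Aux.exists_tau G C A B Hab i j
  have hrep : LocalBoxRep G (3 * (n - 1)) :=
    Stmt6Aux.main_aux G hn C (fun {u v} h => HC h) A B Hab Hmem τf hτf
  exact Nat.sInf_le hrep
end

section
/- Let G be a finite simple claw-free graph with maximum degree Δ ≥ 1. Then lbox(G) ≤ 3Δ. -/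
open Classical

namespace Stmt7Aux

/-- interval overlap -/
def ov (p q : ℝ × ℝ) : Prop := (Set.Icc p.1 p.2 ∩ Set.Icc q.1 q.2).Nonempty

lemma ov_iff {p q : ℝ × ℝ} : ov p q ↔ max p.1 q.1 ≤ min p.2 q.2 := by
  rw [ov, Set.Icc_inter_Icc, Set.nonempty_Icc]

lemma ov_comm {p q : ℝ × ℝ} : ov p q ↔ ov q p := by
  rw [ov_iff, ov_iff, max_comm, min_comm]

lemma not_ov_of_lt {p q : ℝ × ℝ} (h : p.2 < q.1) : ¬ ov p q := by
  rw [ov_iff]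
  intro hc
  have h1 : q.1 ≤ max p.1 q.1 := le_max_right _ _
  have h2 : min p.2 q.2 ≤ p.2 := min_le_left _ _
  linarith

lemma ov_of_both {p q : ℝ × ℝ} (x : ℝ) (h1 : p.1 ≤ x) (h2 : x ≤ p.2) (h3 : q.1 ≤ x) (h4 : x ≤ q.2) :
    ov p q := ⟨x, ⟨h1, h2⟩, ⟨h3, h4⟩⟩

/-- the interval graph of an interval assignment -/
def IGof {V : Type} (p : V → ℝ × ℝ) : SimpleGraph V where
  Adj u v := u ≠ v ∧ ov (p u) (p v)
  symm := by constructor; intro u v h; exact ⟨h.1.symm, ov_comm.mp h.2⟩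
  loopless := by constructor; intro v h; exact h.1 rfl

lemma IGof_adj {V : Type} (p : V → ℝ × ℝ) (u v : V) :
    (IGof p).Adj u v ↔ u ≠ v ∧ ov (p u) (p v) := Iff.rfl

lemma IGof_interval {V : Type} (p : V → ℝ × ℝ) : IsIntervalGraph (IGof p) := by
  refine ⟨fun v => (p v).1, fun v => (p v).2, fun u v huv => ?_⟩
  rw [IGof_adj]
  exact ⟨fun h => h.2, fun h => ⟨huv, h⟩⟩

lemma IGof_universal {V : Type} {p : V → ℝ × ℝ} {B : ℝ} {x : V}
    (hx : p x = (0, B)) (hall : ∀ v, 0 ≤ (p v).1 ∧ (p v).1 ≤ (p v).2 ∧ (p v).2 ≤ B) :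
    IsUniversal (IGof p) x := by
  intro u hu
  refine ⟨fun h => hu h.symm, ?_⟩
  obtain ⟨h1, h2, h3⟩ := hall u
  exact ov_of_both (p u).1 (by rw [hx]; exact h1) (by rw [hx]; exact le_trans h2 h3) le_rfl h2

end Stmt7Aux

namespace Stmt7Aux

set_option linter.unusedSectionVars false

variable {V : Type} [DecidableEq V] {R : V → V → Prop}

lemma indexOf_append_cons {s t : List V} {a : V} (h : a ∉ s) :
    (s ++ a :: t).idxOf a = s.length := by
  induction s with
  | nil => simp
  | cons b s ih =>
    have hba : b ≠ a := by rintro rfl; exact h (by simp)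
    have h2 : a ∉ s := fun hs => h (List.mem_cons_of_mem _ hs)
    have e : (b :: (s ++ a :: t)).idxOf a = ((s ++ a :: t).idxOf a).succ :=
      List.idxOf_cons_ne _ hba
    simp only [List.cons_append, List.length_cons]
    rw [e, ih h2]

lemma infix_pair {ℓ : List V} {a b : V} (hnd : ℓ.Nodup) (h : [a, b] <:+: ℓ) :
    ℓ.idxOf b = ℓ.idxOf a + 1 ∧ ℓ.idxOf a + 1 < ℓ.length := by
  obtain ⟨s, t, hst⟩ := h
  have hℓ : ℓ = s ++ a :: b :: t := by rw [← hst]; simp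
  subst hℓ
  have hnd2 := List.nodup_append'.mp hnd
  have hans : a ∉ s := fun hs => hnd2.2.2 hs (by simp)
  have hbns : b ∉ s := fun hs => hnd2.2.2 hs (by simp)
  have hab : a ≠ b := by
    have := hnd2.2.1
    rw [List.nodup_cons] at this
    exact fun e => this.1 (by rw [e]; simp)
  have e1 : (s ++ a :: b :: t).idxOf a = s.length := indexOf_append_cons hans
  have e2 : s ++ a :: b :: t = (s ++ [a]) ++ b :: t := by simp
  have hbns' : b ∉ s ++ [a] := by
    simp only [List.mem_append, List.mem_singleton]
    rintro (h | h)
    · exact hbns h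
    · exact hab h.symm
  have e3 : (s ++ a :: b :: t).idxOf b = s.length + 1 := by
    rw [e2, indexOf_append_cons hbns']; simp
  constructor
  · rw [e1, e3]
  · rw [e1]; simp only [List.length_append, List.length_cons]; omega

lemma getLast?_indexOf {ℓ : List V} {y : V} (hnd : ℓ.Nodup) (h : ℓ.getLast? = some y) :
    ℓ.idxOf y + 1 = ℓ.length := by
  have hne : ℓ ≠ [] := by rintro rfl; simp at h
  have hlen : 0 < ℓ.length := List.length_pos_iff.mpr hne
  rw [List.getLast?_eq_getElem?, List.getElem?_eq_getElem (by omega)] at h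
  have hy' : ℓ[ℓ.length - 1] = y := by injection h
  have hy : y ∈ ℓ := hy' ▸ List.getElem_mem _
  have hi : ℓ.idxOf y < ℓ.length := List.idxOf_lt_length_iff.mpr hy
  have he : ℓ[ℓ.idxOf y] = ℓ[ℓ.length - 1] := by
    rw [List.getElem_idxOf hi, hy']
  have := (hnd.getElem_inj_iff (hi := hi) (hj := by omega)).mp he
  omega

lemma head?_indexOf {ℓ : List V} {x : V} (h : ℓ.head? = some x) :
    ℓ.idxOf x = 0 ∧ x ∈ ℓ := by
  cases ℓ with
  | nil => simp at h
  | cons a t =>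
    have : a = x := by injection h
    subst this
    simp

lemma head?_getElem {ℓ : List V} {x : V} (h : ℓ.head? = some x) (hl : 0 < ℓ.length) :
    ℓ[0] = x := by
  rw [List.head?_eq_getElem?, List.getElem?_eq_getElem hl] at h
  injection h

lemma getLast?_getElem {ℓ : List V} {x : V} (h : ℓ.getLast? = some x) (hl : 0 < ℓ.length) :
    ℓ[ℓ.length - 1]'(by omega) = x := by
  rw [List.getLast?_eq_getElem?, List.getElem?_eq_getElem (by omega)] at h
  injection h

lemma chain'_getElem {ℓ : List V} (h : List.Chain' R ℓ) (i : ℕ) (hi : i + 1 < ℓ.length) :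
    R (ℓ[i]'(by omega)) (ℓ[i+1]'hi) := by
  have := List.isChain_iff_getElem.mp h i (by omega)
  simpa [List.get_eq_getElem] using this

/-- near pairs inside one component -/
def NearL (ℓ : List V) (flag : Bool) (x y : V) : Prop :=
  ([x, y] <:+: ℓ ∨ [y, x] <:+: ℓ) ∨
  (flag = true ∧ ((ℓ.head? = some x ∧ ℓ.getLast? = some y) ∨
                  (ℓ.head? = some y ∧ ℓ.getLast? = some x)))

lemma NearL.mem_left {ℓ : List V} {flag : Bool} {x y : V} (h : NearL ℓ flag x y) : x ∈ ℓ := by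
  rcases h with (h | h) | ⟨_, (⟨h, _⟩ | ⟨_, h⟩)⟩
  · exact h.mem (by simp)
  · exact h.mem (by simp)
  · exact (head?_indexOf h).2
  · exact List.mem_of_mem_getLast? h

lemma NearL.symm {ℓ : List V} {flag : Bool} {x y : V} (h : NearL ℓ flag x y) : NearL ℓ flag y x := by
  rcases h with (h | h) | ⟨hf, (h | h)⟩
  · exact Or.inl (Or.inr h)
  · exact Or.inl (Or.inl h)
  · exact Or.inr ⟨hf, Or.inr h⟩
  · exact Or.inr ⟨hf, Or.inl h⟩

lemma NearL.mem_right {ℓ : List V} {flag : Bool} {x y : V} (h : NearL ℓ flag x y) : y ∈ ℓ :=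
  h.symm.mem_left

def flatL (L : List (List V × Bool)) : List V := L.flatMap Prod.fst

lemma flatL_nil : flatL ([] : List (List V × Bool)) = [] := rfl

lemma flatL_cons (c : List V × Bool) (M : List (List V × Bool)) :
    flatL (c :: M) = c.1 ++ flatL M := by simp [flatL]

structure GoodL (R : V → V → Prop) (W : Finset V) (L : List (List V × Bool)) : Prop where
  mem : ∀ x, x ∈ W ↔ x ∈ flatL L
  nodup : (flatL L).Nodup
  nonempty : ∀ c ∈ L, c.1 ≠ ([] : List V)
  chain : ∀ c ∈ L, List.Chain' R c.1
  cyc : ∀ c ∈ L, c.2 = true →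
    3 ≤ c.1.length ∧ ∃ a b, c.1.head? = some a ∧ c.1.getLast? = some b ∧ R a b
  near : ∀ x y, x ∈ W → y ∈ W → R x y → ∃ c ∈ L, NearL c.1 c.2 x y

lemma Good_perm {W : Finset V} {L L' : List (List V × Bool)}
    (hP : L.Perm L') (h : GoodL R W L) : GoodL R W L' := by
  have hf : (flatL L).Perm (flatL L') := hP.flatMap_right Prod.fst
  refine ⟨fun x => (h.mem x).trans hf.mem_iff, hf.nodup_iff.mp h.nodup,
    fun c hc => h.nonempty c (hP.mem_iff.mpr hc),
    fun c hc => h.chain c (hP.mem_iff.mpr hc),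
    fun c hc => h.cyc c (hP.mem_iff.mpr hc),
    fun x y hx hy hr => ?_⟩
  obtain ⟨c, hc, hn⟩ := h.near x y hx hy hr
  exact ⟨c, hP.mem_iff.mp hc, hn⟩

end Stmt7Aux

namespace Stmt7Aux

set_option linter.unusedSectionVars false

variable {V : Type} [DecidableEq V] {R : V → V → Prop}

lemma getElem_idx_congr (ℓ : List V) {i j : ℕ} (hij : i = j) (hi : i < ℓ.length) :
    ℓ[i]'hi = ℓ[j]'(hij ▸ hi) := by subst hij; rfl

lemma Good_reverse (hsymm : Symmetric R) {W : Finset V} {ℓ : List V} {M : List (List V × Bool)}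
    (h : GoodL R W ((ℓ, false) :: M)) : GoodL R W ((ℓ.reverse, false) :: M) := by
  have hperm : (flatL ((ℓ.reverse, false) :: M)).Perm (flatL ((ℓ, false) :: M)) := by
    rw [flatL_cons, flatL_cons]
    exact (ℓ.reverse_perm).append_right _
  refine ⟨fun x => (h.mem x).trans hperm.mem_iff.symm, hperm.nodup_iff.mpr h.nodup, ?_, ?_, ?_, ?_⟩
  · intro c hc
    rcases List.mem_cons.mp hc with rfl | hc
    · simpa using h.nonempty (ℓ, false) (by simp)
    · exact h.nonempty c (List.mem_cons_of_mem _ hc)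
  · intro c hc
    rcases List.mem_cons.mp hc with rfl | hc
    · exact List.isChain_reverse.mpr (List.IsChain.imp (fun a b hab => hsymm hab) (h.chain (ℓ, false) (by simp)))
    · exact h.chain c (List.mem_cons_of_mem _ hc)
  · intro c hc hf
    rcases List.mem_cons.mp hc with rfl | hc
    · simp at hf
    · exact h.cyc c (List.mem_cons_of_mem _ hc) hf
  · intro x y hx hy hr
    obtain ⟨c, hc, hn⟩ := h.near x y hx hy hr
    rcases List.mem_cons.mp hc with rfl | hc
    · refine ⟨(ℓ.reverse, false), by simp, ?_⟩
      rcases hn with (hn | hn) | ⟨hf, _⟩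
      · exact Or.inl (Or.inr (by simpa using hn.reverse))
      · exact Or.inl (Or.inl (by simpa using hn.reverse))
      · simp at hf
    · exact ⟨c, List.mem_cons_of_mem _ hc, hn⟩

lemma Good_prepend {W : Finset V} {ℓ : List V} {M : List (List V × Bool)} {x u : V}
    (hsymm : Symmetric R) (hirr : ∀ z, ¬ R z z)
    (h : GoodL R W ((u :: ℓ, false) :: M)) (hx : x ∉ W)
    (hxu : R x u) (hnb : ∀ y, y ∈ W → R x y → y = u) :
    GoodL R (insert x W) ((x :: u :: ℓ, false) :: M) := by
  have hflat : flatL ((x :: u :: ℓ, false) :: M) = x :: flatL ((u :: ℓ, false) :: M) := by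
    rw [flatL_cons, flatL_cons]; rfl
  have hxf : x ∉ flatL ((u :: ℓ, false) :: M) := fun hc => hx ((h.mem x).mpr hc)
  refine ⟨?_, ?_, ?_, ?_, ?_, ?_⟩
  · intro z
    rw [hflat, Finset.mem_insert, List.mem_cons, h.mem]
  · rw [hflat, List.nodup_cons]; exact ⟨hxf, h.nodup⟩
  · intro c hc
    rcases List.mem_cons.mp hc with rfl | hc
    · simp
    · exact h.nonempty c (List.mem_cons_of_mem _ hc)
  · intro c hc
    rcases List.mem_cons.mp hc with rfl | hc
    · exact List.IsChain.cons_cons hxu (h.chain (u :: ℓ, false) (by simp))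
    · exact h.chain c (List.mem_cons_of_mem _ hc)
  · intro c hc hf
    rcases List.mem_cons.mp hc with rfl | hc
    · simp at hf
    · exact h.cyc c (List.mem_cons_of_mem _ hc) hf
  · intro a b ha hb hr
    rcases Finset.mem_insert.mp ha with hax | ha'
    · subst hax
      rcases Finset.mem_insert.mp hb with hbx | hb'
      · subst hbx; exact absurd hr (hirr _)
      · have hbu : b = u := hnb b hb' hr
        subst hbu
        exact ⟨(a :: b :: ℓ, false), by simp, Or.inl (Or.inl ⟨[], ℓ, rfl⟩)⟩
    rcases Finset.mem_insert.mp hb with hbx | hb'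
    · subst hbx
      have hau : a = u := hnb a ha' (hsymm hr)
      subst hau
      exact ⟨(b :: a :: ℓ, false), by simp, Or.inl (Or.inr ⟨[], ℓ, rfl⟩)⟩
    obtain ⟨c, hc, hn⟩ := h.near a b ha' hb' hr
    rcases List.mem_cons.mp hc with rfl | hc
    · refine ⟨(x :: u :: ℓ, false), by simp, ?_⟩
      rcases hn with (hn | hn) | ⟨hf, _⟩
      · exact Or.inl (Or.inl (List.infix_cons hn))
      · exact Or.inl (Or.inr (List.infix_cons hn))
      · simp at hf
    · exact ⟨c, List.mem_cons_of_mem _ hc, hn⟩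

lemma Good_close {W : Finset V} {ℓ : List V} {M : List (List V × Bool)} {x u v : V}
    (hsymm : Symmetric R) (hirr : ∀ z, ¬ R z z)
    (h : GoodL R W ((u :: ℓ, false) :: M)) (hx : x ∉ W)
    (hlast : (u :: ℓ).getLast? = some v) (huv : u ≠ v)
    (hxu : R x u) (hxv : R x v)
    (hnb : ∀ y, y ∈ W → R x y → y = u ∨ y = v) :
    GoodL R (insert x W) ((x :: u :: ℓ, true) :: M) := by
  have hℓne : ℓ ≠ [] := by
    rintro rfl
    have : u = v := by simpa using hlast
    exact huv this
  have hℓpos : 0 < ℓ.length := List.length_pos_iff.mpr hℓne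
  have hflat : flatL ((x :: u :: ℓ, true) :: M) = x :: flatL ((u :: ℓ, false) :: M) := by
    rw [flatL_cons, flatL_cons]; rfl
  have hxf : x ∉ flatL ((u :: ℓ, false) :: M) := fun hc => hx ((h.mem x).mpr hc)
  refine ⟨?_, ?_, ?_, ?_, ?_, ?_⟩
  · intro z
    rw [hflat, Finset.mem_insert, List.mem_cons, h.mem]
  · rw [hflat, List.nodup_cons]; exact ⟨hxf, h.nodup⟩
  · intro c hc
    rcases List.mem_cons.mp hc with rfl | hc
    · simp
    · exact h.nonempty c (List.mem_cons_of_mem _ hc)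
  · intro c hc
    rcases List.mem_cons.mp hc with rfl | hc
    · exact List.IsChain.cons_cons hxu (h.chain (u :: ℓ, false) (by simp))
    · exact h.chain c (List.mem_cons_of_mem _ hc)
  · intro c hc hf
    rcases List.mem_cons.mp hc with rfl | hc
    · refine ⟨by simp; omega, x, v, by simp, ?_, hxv⟩
      rw [List.getLast?_cons_cons]; exact hlast
    · exact h.cyc c (List.mem_cons_of_mem _ hc) hf
  · intro a b ha hb hr
    rcases Finset.mem_insert.mp ha with hax | ha'
    · subst hax
      rcases Finset.mem_insert.mp hb with hbx | hb'
      · subst hbx; exact absurd hr (hirr _)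
      · rcases hnb b hb' hr with hbu | hbv
        · subst hbu
          exact ⟨(a :: b :: ℓ, true), by simp, Or.inl (Or.inl ⟨[], ℓ, rfl⟩)⟩
        · subst hbv
          refine ⟨(a :: u :: ℓ, true), by simp, Or.inr ⟨rfl, Or.inl ⟨by simp, ?_⟩⟩⟩
          rw [List.getLast?_cons_cons]; exact hlast
    rcases Finset.mem_insert.mp hb with hbx | hb'
    · subst hbx
      rcases hnb a ha' (hsymm hr) with hau | hav
      · subst hau
        exact ⟨(b :: a :: ℓ, true), by simp, Or.inl (Or.inr ⟨[], ℓ, rfl⟩)⟩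
      · subst hav
        refine ⟨(b :: u :: ℓ, true), by simp, Or.inr ⟨rfl, Or.inr ⟨by simp, ?_⟩⟩⟩
        rw [List.getLast?_cons_cons]; exact hlast
    obtain ⟨c, hc, hn⟩ := h.near a b ha' hb' hr
    rcases List.mem_cons.mp hc with rfl | hc
    · refine ⟨(x :: u :: ℓ, true), by simp, ?_⟩
      rcases hn with (hn | hn) | ⟨hf, _⟩
      · exact Or.inl (Or.inl (List.infix_cons hn))
      · exact Or.inl (Or.inr (List.infix_cons hn))
      · simp at hf
    · exact ⟨c, List.mem_cons_of_mem _ hc, hn⟩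

end Stmt7Aux

namespace Stmt7Aux

set_option linter.unusedSectionVars false

variable {V : Type} [DecidableEq V] {R : V → V → Prop}

lemma Good_merge {W : Finset V} {ℓ₁ ℓ₂ : List V} {M : List (List V × Bool)} {x u v : V}
    (hsymm : Symmetric R) (hirr : ∀ z, ¬ R z z)
    (h : GoodL R W ((u :: ℓ₁, false) :: (v :: ℓ₂, false) :: M)) (hx : x ∉ W)
    (hxu : R x u) (hxv : R x v)
    (hnb : ∀ y, y ∈ W → R x y → y = u ∨ y = v) :
    GoodL R (insert x W) ((ℓ₁.reverse ++ u :: x :: v :: ℓ₂, false) :: M) := by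
  have hperm : (flatL ((ℓ₁.reverse ++ u :: x :: v :: ℓ₂, false) :: M)).Perm
      (x :: flatL ((u :: ℓ₁, false) :: (v :: ℓ₂, false) :: M)) := by
    rw [flatL_cons, flatL_cons, flatL_cons]
    have e1 : (ℓ₁.reverse ++ u :: x :: v :: ℓ₂) ++ flatL M
        = ℓ₁.reverse ++ u :: x :: v :: (ℓ₂ ++ flatL M) := by simp
    have e2 : (u :: ℓ₁) ++ ((v :: ℓ₂) ++ flatL M) = u :: (ℓ₁ ++ v :: (ℓ₂ ++ flatL M)) := by simp
    rw [e1, e2]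
    refine List.perm_middle.trans ?_
    refine (List.Perm.cons u List.perm_middle).trans ?_
    refine (List.Perm.swap x u _).trans ?_
    refine List.Perm.cons x ?_
    refine List.Perm.cons u ?_
    exact ℓ₁.reverse_perm.append_right _
  have hxf : x ∉ flatL ((u :: ℓ₁, false) :: (v :: ℓ₂, false) :: M) :=
    fun hc => hx ((h.mem x).mpr hc)
  have hm2 : ℓ₁.reverse ++ u :: x :: v :: ℓ₂ = (u :: ℓ₁).reverse ++ (x :: v :: ℓ₂) := by
    rw [List.reverse_cons]; simp
  have huinf : (u :: ℓ₁).reverse <:+: ℓ₁.reverse ++ u :: x :: v :: ℓ₂ := by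
    rw [hm2]; exact ⟨[], x :: v :: ℓ₂, by simp⟩
  have hvinf : v :: ℓ₂ <:+: ℓ₁.reverse ++ u :: x :: v :: ℓ₂ := by
    exact ⟨ℓ₁.reverse ++ [u, x], [], by simp⟩
  refine ⟨?_, ?_, ?_, ?_, ?_, ?_⟩
  · intro z
    rw [Finset.mem_insert, hperm.mem_iff, List.mem_cons, h.mem]
  · exact hperm.nodup_iff.mpr (List.nodup_cons.mpr ⟨hxf, h.nodup⟩)
  · intro c hc
    rcases List.mem_cons.mp hc with rfl | hc
    · simp
    · exact h.nonempty c (List.mem_cons_of_mem _ (List.mem_cons_of_mem _ hc))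
  · intro c hc
    rcases List.mem_cons.mp hc with rfl | hc
    · have hc1 : List.Chain' R ((u :: ℓ₁).reverse) :=
        List.isChain_reverse.mpr (List.IsChain.imp (fun a b hab => hsymm hab)
          (h.chain (u :: ℓ₁, false) (by simp)))
      have hc2 : List.Chain' R (x :: v :: ℓ₂) :=
        List.IsChain.cons_cons hxv (h.chain (v :: ℓ₂, false) (by simp))
      rw [hm2]
      refine List.isChain_append.mpr ⟨hc1, hc2, ?_⟩
      intro a ha b hb
      obtain rfl : u = a := by
        rw [List.getLast?_reverse] at ha
        simpa using ha
      obtain rfl : x = b := by simpa using hb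
      exact hsymm hxu
    · exact h.chain c (List.mem_cons_of_mem _ (List.mem_cons_of_mem _ hc))
  · intro c hc hf
    rcases List.mem_cons.mp hc with rfl | hc
    · simp at hf
    · exact h.cyc c (List.mem_cons_of_mem _ (List.mem_cons_of_mem _ hc)) hf
  · intro a b ha hb hr
    rcases Finset.mem_insert.mp ha with hax | ha'
    · subst hax
      rcases Finset.mem_insert.mp hb with hbx | hb'
      · subst hbx; exact absurd hr (hirr _)
      · rcases hnb b hb' hr with hbu | hbv
        · subst hbu
          refine ⟨_, List.mem_cons_self, Or.inl (Or.inr ⟨ℓ₁.reverse, v :: ℓ₂, by simp⟩)⟩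
        · subst hbv
          refine ⟨_, List.mem_cons_self, Or.inl (Or.inl ⟨ℓ₁.reverse ++ [u], ℓ₂, by simp⟩)⟩
    rcases Finset.mem_insert.mp hb with hbx | hb'
    · subst hbx
      rcases hnb a ha' (hsymm hr) with hau | hav
      · subst hau
        refine ⟨_, List.mem_cons_self, Or.inl (Or.inl ⟨ℓ₁.reverse, v :: ℓ₂, by simp⟩)⟩
      · subst hav
        refine ⟨_, List.mem_cons_self, Or.inl (Or.inr ⟨ℓ₁.reverse ++ [u], ℓ₂, by simp⟩)⟩
    obtain ⟨c, hc, hn⟩ := h.near a b ha' hb' hr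
    rcases List.mem_cons.mp hc with rfl | hc
    · -- comp1
      refine ⟨_, List.mem_cons_self, ?_⟩
      rcases hn with (hn | hn) | ⟨hf, _⟩
      · exact Or.inl (Or.inr (hn.reverse.trans huinf))
      · exact Or.inl (Or.inl (hn.reverse.trans huinf))
      · simp at hf
    rcases List.mem_cons.mp hc with rfl | hc
    · -- comp2
      refine ⟨_, List.mem_cons_self, ?_⟩
      rcases hn with (hn | hn) | ⟨hf, _⟩
      · exact Or.inl (Or.inl (hn.trans hvinf))
      · exact Or.inl (Or.inr (hn.trans hvinf))
      · simp at hf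
    · exact ⟨c, List.mem_cons_of_mem _ hc, hn⟩

end Stmt7Aux

namespace Stmt7Aux

set_option linter.unusedSectionVars false

variable {V : Type} [DecidableEq V] {R : V → V → Prop}

noncomputable def degW (R : V → V → Prop) (W : Finset V) (x : V) : ℕ :=
  (W.filter (fun y => R x y)).card

lemma degW_def (W : Finset V) (x : V) : degW R W x = (W.filter (fun y => R x y)).card := rfl

lemma two_le_degW {W : Finset V} {x y z : V} (hy : y ∈ W) (hz : z ∈ W) (hyz : y ≠ z)
    (h1 : R x y) (h2 : R x z) : 2 ≤ degW R W x := by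
  have hsub : ({y, z} : Finset V) ⊆ W.filter (fun w => R x w) := by
    intro a ha
    rcases Finset.mem_insert.mp ha with rfl | ha
    · exact Finset.mem_filter.mpr ⟨hy, h1⟩
    · rw [Finset.mem_singleton] at ha; subst ha
      exact Finset.mem_filter.mpr ⟨hz, h2⟩
  calc 2 = ({y, z} : Finset V).card := (Finset.card_pair hyz).symm
    _ ≤ _ := Finset.card_le_card hsub

lemma not_middle {W : Finset V} {ℓc : List V} {flag : Bool} {M : List (List V × Bool)} {u : V}
    (hsymm : Symmetric R)
    (hG : GoodL R W ((ℓc, flag) :: M)) (hu : u ∈ ℓc) (hdeg : degW R W u ≤ 1) :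
    flag = false ∧ (ℓc.idxOf u = 0 ∨ ℓc.idxOf u + 1 = ℓc.length) := by
  have hnd : ℓc.Nodup := by
    have := hG.nodup; rw [flatL_cons] at this
    exact (List.nodup_append'.mp this).1
  have hmemW : ∀ z ∈ ℓc, z ∈ W := fun z hz =>
    (hG.mem z).mpr (by rw [flatL_cons]; exact List.mem_append_left _ hz)
  have hchain : List.Chain' R ℓc := hG.chain (ℓc, flag) (by simp)
  have hik : ℓc.idxOf u < ℓc.length := List.idxOf_lt_length_iff.mpr hu
  have hgetu : ℓc[ℓc.idxOf u]'hik = u := List.getElem_idxOf hik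
  have key : ∀ (p q : ℕ) (hp : p < ℓc.length) (hq : q < ℓc.length), p ≠ q →
      R u (ℓc[p]'hp) → R u (ℓc[q]'hq) → False := by
    intro p q hp hq hpq h1 h2
    have hne : ℓc[p]'hp ≠ ℓc[q]'hq := fun e => hpq ((hnd.getElem_inj_iff).mp e)
    have h2le := two_le_degW (hmemW _ (List.getElem_mem _)) (hmemW _ (List.getElem_mem _)) hne h1 h2
    omega
  have hmid : ¬ (0 < ℓc.idxOf u ∧ ℓc.idxOf u + 1 < ℓc.length) := by
    rintro ⟨h1, h2⟩
    have hA : R (ℓc[ℓc.idxOf u - 1]'(by omega)) (ℓc[ℓc.idxOf u]'hik) := by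
      have := chain'_getElem hchain (ℓc.idxOf u - 1) (by omega)
      have e : ℓc.idxOf u - 1 + 1 = ℓc.idxOf u := by omega
      rwa [getElem_idx_congr ℓc e] at this
    have hB : R (ℓc[ℓc.idxOf u]'hik) (ℓc[ℓc.idxOf u + 1]'h2) :=
      chain'_getElem hchain (ℓc.idxOf u) h2
    rw [hgetu] at hA hB
    exact key _ _ _ _ (by omega) (hsymm hA) hB
  by_cases hfl : flag = true
  · exfalso
    obtain ⟨hk3, a, b, ha, hb, hab⟩ := hG.cyc (ℓc, flag) (by simp) hfl
    have hk3' : 3 ≤ ℓc.length := hk3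
    have hk0 : 0 < ℓc.length := by omega
    have ha0 : ℓc[0]'hk0 = a := head?_getElem ha hk0
    have hbk : ℓc[ℓc.length - 1]'(by omega) = b := getLast?_getElem hb hk0
    by_cases hi0 : ℓc.idxOf u = 0
    · -- u = a; neighbours at 1 and length - 1
      have hua : u = a := by rw [← hgetu, ← ha0]; exact getElem_idx_congr ℓc hi0 hik
      have hA : R u (ℓc[1]'(by omega)) := by
        have := chain'_getElem hchain 0 (by omega)
        rwa [← getElem_idx_congr ℓc hi0 hik, hgetu] at this
      have hB : R u (ℓc[ℓc.length - 1]'(by omega)) := by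
        rw [hbk, hua]; exact hab
      exact key _ _ _ _ (by omega) hA hB
    · have hik1 : ℓc.idxOf u + 1 = ℓc.length := by
        rcases Nat.lt_or_ge (ℓc.idxOf u + 1) ℓc.length with h | h
        · exact absurd ⟨by omega, h⟩ hmid
        · omega
      have hub : u = b := by
        rw [← hgetu, ← hbk]; exact getElem_idx_congr ℓc (by omega) hik
      have hA : R u (ℓc[ℓc.length - 2]'(by omega)) := by
        have := chain'_getElem hchain (ℓc.length - 2) (by omega)
        have e : ℓc.length - 2 + 1 = ℓc.idxOf u := by omega
        rw [getElem_idx_congr ℓc e, hgetu] at this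
        exact hsymm this
      have hB : R u (ℓc[0]'hk0) := by
        rw [ha0, hub]; exact hsymm hab
      exact key _ _ _ _ (by omega) hA hB
  · refine ⟨by simpa using hfl, ?_⟩
    by_cases hi0 : ℓc.idxOf u = 0
    · exact Or.inl hi0
    · right
      rcases Nat.lt_or_ge (ℓc.idxOf u + 1) ℓc.length with h | h
      · exact absurd ⟨by omega, h⟩ hmid
      · omega

lemma getLast?_of_indexOf {ℓ : List V} {v : V} (hv : v ∈ ℓ)
    (h : ℓ.idxOf v + 1 = ℓ.length) : ℓ.getLast? = some v := by
  have hik : ℓ.idxOf v < ℓ.length := List.idxOf_lt_length_iff.mpr hv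
  rw [List.getLast?_eq_getElem?, List.getElem?_eq_getElem (by omega)]
  have e : ℓ[ℓ.length - 1]'(by omega) = v := by
    rw [getElem_idx_congr ℓ (show ℓ.length - 1 = ℓ.idxOf v by omega)]
    exact List.getElem_idxOf hik
  rw [e]

lemma head_normalize {W : Finset V} {ℓc : List V} {flag : Bool} {M : List (List V × Bool)} {u : V}
    (hsymm : Symmetric R)
    (hG : GoodL R W ((ℓc, flag) :: M)) (hu : u ∈ ℓc) (hdeg : degW R W u ≤ 1) :
    ∃ ℓ, GoodL R W ((u :: ℓ, false) :: M) := by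
  obtain ⟨hfl, hend⟩ := not_middle hsymm hG hu hdeg
  subst hfl
  rcases hend with h0 | hlast
  · cases ℓc with
    | nil => exact absurd hu (by simp)
    | cons a t =>
      have hau : a = u := by
        by_contra hne
        have e := List.idxOf_cons_ne t (show a ≠ u from hne)
        rw [e] at h0
        exact Nat.succ_ne_zero _ h0
      subst hau
      exact ⟨t, hG⟩
  · have hlast? : ℓc.getLast? = some u := getLast?_of_indexOf hu hlast
    have hGr := Good_reverse hsymm hG
    have hhead : ℓc.reverse.head? = some u := by
      rw [List.head?_reverse]; exact hlast?
    rcases hrev : ℓc.reverse with _ | ⟨a, t⟩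
    · rw [hrev] at hhead; simp at hhead
    · rw [hrev] at hGr hhead
      have hau : a = u := by injection hhead
      subst hau
      exact ⟨t, hGr⟩

lemma exists_head {W : Finset V} {L : List (List V × Bool)} {u : V} (hsymm : Symmetric R)
    (h : GoodL R W L) (hu : u ∈ W) (hdeg : degW R W u ≤ 1) :
    ∃ ℓ M, GoodL R W ((u :: ℓ, false) :: M) := by
  have hf : u ∈ flatL L := (h.mem u).mp hu
  obtain ⟨c, hc, huc⟩ := List.mem_flatMap.mp hf
  obtain ⟨ℓc, flag⟩ := c
  have h2 := Good_perm (List.perm_cons_erase hc) h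
  obtain ⟨ℓ, hℓ⟩ := head_normalize hsymm h2 huc hdeg
  exact ⟨ℓ, _, hℓ⟩

lemma exists_second {W : Finset V} {c₀ : List V × Bool} {M : List (List V × Bool)} {v : V}
    (hsymm : Symmetric R)
    (h : GoodL R W (c₀ :: M)) (hv : v ∈ flatL M) (hdeg : degW R W v ≤ 1) :
    ∃ ℓ₂ M', GoodL R W (c₀ :: (v :: ℓ₂, false) :: M') := by
  obtain ⟨c, hc, hvc⟩ := List.mem_flatMap.mp hv
  obtain ⟨ℓc, flag⟩ := c
  have hp1 := ((List.perm_cons_erase hc).cons c₀).trans (List.Perm.swap (ℓc, flag) c₀ _)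
  have h2 := Good_perm hp1 h
  obtain ⟨ℓ₂, hℓ₂⟩ := head_normalize hsymm h2 hvc hdeg
  exact ⟨ℓ₂, _, Good_perm (List.Perm.swap c₀ (v :: ℓ₂, false) _) hℓ₂⟩

end Stmt7Aux

namespace Stmt7Aux

set_option linter.unusedSectionVars false

variable {V : Type} [DecidableEq V] {R : V → V → Prop}

theorem layout_exists (hsymm : Symmetric R) (hirr : ∀ z, ¬ R z z) (W : Finset V) :
    (∀ x ∈ W, degW R W x ≤ 2) → ∃ L, GoodL R W L := by
  induction W using Finset.strongInductionOn with
  | _ W IH =>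
    intro hdeg
    rcases W.eq_empty_or_nonempty with rfl | ⟨x0, hx0⟩
    · refine ⟨[], ?_, ?_, ?_, ?_, ?_, ?_⟩ <;> simp [flatL]
    by_cases hE : ∃ u ∈ W, degW R W u ≤ 1
    · obtain ⟨u, huW, hu1⟩ := hE
      have hss : W.erase u ⊂ W := Finset.erase_ssubset huW
      have hdeg' : ∀ x ∈ W.erase u, degW R (W.erase u) x ≤ 2 := by
        intro x hx
        refine le_trans (Finset.card_le_card ?_) (hdeg x (Finset.mem_of_mem_erase hx))
        exact Finset.filter_subset_filter _ (Finset.erase_subset _ _)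
      obtain ⟨L', hL'⟩ := IH (W.erase u) hss hdeg'
      have hxW' : u ∉ W.erase u := Finset.notMem_erase _ _
      by_cases h0 : degW R W u = 0
      · refine ⟨([u], false) :: L', ?_, ?_, ?_, ?_, ?_, ?_⟩
        · intro z
          rw [flatL_cons]
          simp only [List.singleton_append, List.mem_cons]
          rw [← hL'.mem z]
          constructor
          · intro hz
            by_cases hzu : z = u
            · exact Or.inl hzu
            · exact Or.inr (Finset.mem_erase.mpr ⟨hzu, hz⟩)
          · rintro (rfl | hz)
            · exact huW
            · exact Finset.mem_of_mem_erase hz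
        · rw [flatL_cons]
          simp only [List.singleton_append, List.nodup_cons]
          exact ⟨fun hc => hxW' ((hL'.mem u).mpr hc), hL'.nodup⟩
        · intro c hc
          rcases List.mem_cons.mp hc with rfl | hc
          · simp
          · exact hL'.nonempty c hc
        · intro c hc
          rcases List.mem_cons.mp hc with rfl | hc
          · exact List.IsChain.singleton _
          · exact hL'.chain c hc
        · intro c hc hf
          rcases List.mem_cons.mp hc with rfl | hc
          · simp at hf
          · exact hL'.cyc c hc hf
        · intro a b ha hb hr
          have hau : a ≠ u := by
            rintro rfl
            have : b ∈ W.filter (fun y => R a y) := Finset.mem_filter.mpr ⟨hb, hr⟩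
            rw [degW_def] at h0
            rw [Finset.card_eq_zero.mp h0] at this
            simp at this
          have hbu : b ≠ u := by
            rintro rfl
            have : a ∈ W.filter (fun y => R b y) := Finset.mem_filter.mpr ⟨ha, hsymm hr⟩
            rw [degW_def] at h0
            rw [Finset.card_eq_zero.mp h0] at this
            simp at this
          obtain ⟨c, hc, hn⟩ := hL'.near a b (Finset.mem_erase.mpr ⟨hau, ha⟩)
            (Finset.mem_erase.mpr ⟨hbu, hb⟩) hr
          exact ⟨c, List.mem_cons_of_mem _ hc, hn⟩
      · -- degW R W u = 1
        have h1 : (W.filter (fun y => R u y)).card = 1 := by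
          rw [degW_def] at hu1 h0; omega
        obtain ⟨u', hu'⟩ := Finset.card_eq_one.mp h1
        have hu'f : u' ∈ W.filter (fun y => R u y) := by rw [hu']; simp
        have hu'W : u' ∈ W := (Finset.mem_filter.mp hu'f).1
        have hRuu' : R u u' := (Finset.mem_filter.mp hu'f).2
        have huu' : u ≠ u' := fun e => hirr u' (e ▸ hRuu')
        have hu'W' : u' ∈ W.erase u := Finset.mem_erase.mpr ⟨huu'.symm, hu'W⟩
        have hdu' : degW R (W.erase u) u' ≤ 1 := by
          have he : (W.erase u).filter (fun y => R u' y) = (W.filter (fun y => R u' y)).erase u :=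
            Finset.filter_erase _ _ _
          have hmemf : u ∈ W.filter (fun y => R u' y) := Finset.mem_filter.mpr ⟨huW, hsymm hRuu'⟩
          have h2 := hdeg u' hu'W
          rw [degW_def] at h2 ⊢
          rw [he, Finset.card_erase_of_mem hmemf]
          omega
        obtain ⟨ℓ, M, hHM⟩ := exists_head hsymm hL' hu'W' hdu'
        have hnb : ∀ y, y ∈ W.erase u → R u y → y = u' := by
          intro y hy hr
          have : y ∈ W.filter (fun z => R u z) :=
            Finset.mem_filter.mpr ⟨Finset.mem_of_mem_erase hy, hr⟩
          rw [hu'] at this; simpa using this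
        have hfin := Good_prepend hsymm hirr hHM hxW' hRuu' hnb
        rw [Finset.insert_erase huW] at hfin
        exact ⟨_, hfin⟩
    · -- minimum degree 2
      push_neg at hE
      have hx2 : degW R W x0 = 2 := le_antisymm (hdeg x0 hx0) (hE x0 hx0)
      rw [degW_def] at hx2
      obtain ⟨u, v, huv, huv2⟩ := Finset.card_eq_two.mp hx2
      have humem : u ∈ W.filter (fun y => R x0 y) := by rw [huv2]; simp
      have hvmem : v ∈ W.filter (fun y => R x0 y) := by rw [huv2]; simp
      have huW : u ∈ W := (Finset.mem_filter.mp humem).1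
      have hvW : v ∈ W := (Finset.mem_filter.mp hvmem).1
      have hRu : R x0 u := (Finset.mem_filter.mp humem).2
      have hRv : R x0 v := (Finset.mem_filter.mp hvmem).2
      have hx0u : x0 ≠ u := fun e => hirr u (e ▸ hRu)
      have hx0v : x0 ≠ v := fun e => hirr v (e ▸ hRv)
      have hss : W.erase x0 ⊂ W := Finset.erase_ssubset hx0
      have hdeg' : ∀ x ∈ W.erase x0, degW R (W.erase x0) x ≤ 2 := by
        intro x hx
        refine le_trans (Finset.card_le_card ?_) (hdeg x (Finset.mem_of_mem_erase hx))
        exact Finset.filter_subset_filter _ (Finset.erase_subset _ _)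
      obtain ⟨L', hL'⟩ := IH (W.erase x0) hss hdeg'
      have hxW' : x0 ∉ W.erase x0 := Finset.notMem_erase _ _
      have huW' : u ∈ W.erase x0 := Finset.mem_erase.mpr ⟨fun e => hx0u e.symm, huW⟩
      have hvW' : v ∈ W.erase x0 := Finset.mem_erase.mpr ⟨fun e => hx0v e.symm, hvW⟩
      have hdrop : ∀ y, y ∈ W.filter (fun z => R x0 z) → degW R (W.erase x0) y ≤ 1 := by
        intro y hy
        have hyW : y ∈ W := (Finset.mem_filter.mp hy).1
        have hRy : R x0 y := (Finset.mem_filter.mp hy).2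
        have he : (W.erase x0).filter (fun z => R y z) = (W.filter (fun z => R y z)).erase x0 :=
          Finset.filter_erase _ _ _
        have hmemf : x0 ∈ W.filter (fun z => R y z) := Finset.mem_filter.mpr ⟨hx0, hsymm hRy⟩
        have h2 := hdeg y hyW
        rw [degW_def] at h2 ⊢
        rw [he, Finset.card_erase_of_mem hmemf]
        omega
      have hdu : degW R (W.erase x0) u ≤ 1 := hdrop u humem
      have hdv : degW R (W.erase x0) v ≤ 1 := hdrop v hvmem
      have hnb : ∀ y, y ∈ W.erase x0 → R x0 y → y = u ∨ y = v := by
        intro y hy hr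
        have : y ∈ W.filter (fun z => R x0 z) :=
          Finset.mem_filter.mpr ⟨Finset.mem_of_mem_erase hy, hr⟩
        rw [huv2] at this; simpa using this
      obtain ⟨ℓ₁, M, hH⟩ := exists_head hsymm hL' huW' hdu
      have hvflat : v ∈ flatL ((u :: ℓ₁, false) :: M) := (hH.mem v).mp hvW'
      rw [flatL_cons, List.mem_append] at hvflat
      rcases hvflat with hv1 | hv2
      · -- v in same component: must be the last element
        obtain ⟨_, hend⟩ := not_middle hsymm hH hv1 hdv
        have hne0 : (u :: ℓ₁).idxOf v ≠ 0 := by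
          intro e
          have hik : (u :: ℓ₁).idxOf v < (u :: ℓ₁).length := List.idxOf_lt_length_iff.mpr hv1
          have := List.getElem_idxOf hik
          rw [getElem_idx_congr _ e] at this
          simp at this
          exact huv this
        have hlast : (u :: ℓ₁).getLast? = some v :=
          getLast?_of_indexOf hv1 (hend.resolve_left hne0)
        have hfin := Good_close hsymm hirr hH hxW' hlast huv hRu hRv hnb
        rw [Finset.insert_erase hx0] at hfin
        exact ⟨_, hfin⟩
      · obtain ⟨ℓ₂, M', hH2⟩ := exists_second hsymm hH hv2 hdv
        have hfin := Good_merge hsymm hirr hH2 hxW' hRu hRv hnb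
        rw [Finset.insert_erase hx0] at hfin
        exact ⟨_, hfin⟩

end Stmt7Aux

namespace Stmt7Aux

set_option linter.unusedSectionVars false

variable {V : Type} [DecidableEq V] {R : V → V → Prop}

noncomputable def compF (o : ℝ) (ℓ : List V) (flag : Bool) (x : V) : ℝ × ℝ :=
  if flag = true ∧ ℓ.idxOf x + 1 = ℓ.length then (o, o + ((ℓ.length - 1 : ℕ) : ℝ))
  else (o + (ℓ.idxOf x : ℝ), o + (ℓ.idxOf x : ℝ) + 1)

noncomputable def compG (o : ℝ) (ℓ : List V) (flag : Bool) (x : V) : ℝ × ℝ :=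
  if flag = true ∧ ℓ.idxOf x = 0 then (o + 1, o + (ℓ.length : ℝ))
  else (o + (ℓ.idxOf x : ℝ), o + (ℓ.idxOf x : ℝ) + 1)

lemma ov_mk {a b c d : ℝ} (x : ℝ) (h1 : a ≤ x) (h2 : x ≤ b) (h3 : c ≤ x) (h4 : x ≤ d) :
    ov (a, b) (c, d) := ov_of_both x h1 h2 h3 h4

lemma not_ov_mk {a b c d : ℝ} (h : b < c) : ¬ ov (a, b) (c, d) := not_ov_of_lt h

lemma compF_pos {o : ℝ} {ℓ : List V} {flag : Bool} {x : V}
    (h : flag = true ∧ ℓ.idxOf x + 1 = ℓ.length) :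
    compF o ℓ flag x = (o, o + ((ℓ.length - 1 : ℕ) : ℝ)) := by
  unfold compF; rw [if_pos h]

lemma compF_neg {o : ℝ} {ℓ : List V} {flag : Bool} {x : V}
    (h : ¬ (flag = true ∧ ℓ.idxOf x + 1 = ℓ.length)) :
    compF o ℓ flag x = (o + (ℓ.idxOf x : ℝ), o + (ℓ.idxOf x : ℝ) + 1) := by
  unfold compF; rw [if_neg h]

lemma compG_pos {o : ℝ} {ℓ : List V} {flag : Bool} {x : V}
    (h : flag = true ∧ ℓ.idxOf x = 0) :
    compG o ℓ flag x = (o + 1, o + (ℓ.length : ℝ)) := by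
  unfold compG; rw [if_pos h]

lemma compG_neg {o : ℝ} {ℓ : List V} {flag : Bool} {x : V}
    (h : ¬ (flag = true ∧ ℓ.idxOf x = 0)) :
    compG o ℓ flag x = (o + (ℓ.idxOf x : ℝ), o + (ℓ.idxOf x : ℝ) + 1) := by
  unfold compG; rw [if_neg h]

lemma compF_bound (o : ℝ) (ℓ : List V) (flag : Bool) (x : V) (hx : x ∈ ℓ) :
    o ≤ (compF o ℓ flag x).1 ∧ (compF o ℓ flag x).1 ≤ (compF o ℓ flag x).2 ∧
      (compF o ℓ flag x).2 ≤ o + (ℓ.length : ℝ) := by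
  have hik : ℓ.idxOf x < ℓ.length := List.idxOf_lt_length_iff.mpr hx
  have h1 : ((ℓ.idxOf x : ℕ) : ℝ) + 1 ≤ (ℓ.length : ℝ) := by exact_mod_cast hik
  have h0 : (0 : ℝ) ≤ ((ℓ.idxOf x : ℕ) : ℝ) := Nat.cast_nonneg _
  have h2 : ((ℓ.length - 1 : ℕ) : ℝ) ≤ (ℓ.length : ℝ) := Nat.cast_le.mpr (by omega)
  have h3 : (0:ℝ) ≤ ((ℓ.length - 1 : ℕ) : ℝ) := Nat.cast_nonneg _
  by_cases h : flag = true ∧ ℓ.idxOf x + 1 = ℓ.length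
  · rw [compF_pos h]; dsimp only
    exact ⟨le_rfl, by linarith, by linarith⟩
  · rw [compF_neg h]; dsimp only
    exact ⟨by linarith, by linarith, by linarith⟩

lemma compG_bound (o : ℝ) (ℓ : List V) (flag : Bool) (x : V) (hx : x ∈ ℓ) :
    o ≤ (compG o ℓ flag x).1 ∧ (compG o ℓ flag x).1 ≤ (compG o ℓ flag x).2 ∧
      (compG o ℓ flag x).2 ≤ o + (ℓ.length : ℝ) := by
  have hik : ℓ.idxOf x < ℓ.length := List.idxOf_lt_length_iff.mpr hx
  have h1 : ((ℓ.idxOf x : ℕ) : ℝ) + 1 ≤ (ℓ.length : ℝ) := by exact_mod_cast hik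
  have h0 : (0 : ℝ) ≤ ((ℓ.idxOf x : ℕ) : ℝ) := Nat.cast_nonneg _
  have hl1 : (1 : ℝ) ≤ (ℓ.length : ℝ) := by
    have h1' : 1 ≤ ℓ.length := by omega
    exact_mod_cast h1'
  by_cases h : flag = true ∧ ℓ.idxOf x = 0
  · rw [compG_pos h]; dsimp only
    exact ⟨by linarith, by linarith, le_rfl⟩
  · rw [compG_neg h]; dsimp only
    exact ⟨by linarith, by linarith, by linarith⟩

lemma comp_consec {ℓ : List V} {x y : V} (o : ℝ) (flag : Bool) (hnd : ℓ.Nodup)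
    (h : [x, y] <:+: ℓ) :
    ov (compF o ℓ flag x) (compF o ℓ flag y) ∧ ov (compG o ℓ flag x) (compG o ℓ flag y) := by
  obtain ⟨hj, hlt⟩ := infix_pair hnd h
  have h0 : (0:ℝ) ≤ ((ℓ.idxOf x : ℕ) : ℝ) := Nat.cast_nonneg _
  constructor
  · rw [compF_neg (by rintro ⟨_, h2⟩; omega)]
    by_cases hys : flag = true ∧ ℓ.idxOf y + 1 = ℓ.length
    · rw [compF_pos hys]
      have hle : ((ℓ.idxOf x : ℕ) : ℝ) ≤ ((ℓ.length - 1 : ℕ) : ℝ) := Nat.cast_le.mpr (by omega)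
      exact ov_mk (o + (ℓ.idxOf x : ℝ)) le_rfl (by linarith) (by linarith) (by linarith)
    · rw [compF_neg hys, hj]
      push_cast
      exact ov_mk (o + (ℓ.idxOf x : ℝ) + 1) (by linarith) (by linarith) (by linarith) (by linarith)
  · rw [compG_neg (show ¬ (flag = true ∧ ℓ.idxOf y = 0) by rintro ⟨_, h2⟩; omega)]
    rw [hj]
    by_cases hxs : flag = true ∧ ℓ.idxOf x = 0
    · rw [compG_pos hxs]
      push_cast
      have hcast : ((ℓ.idxOf x : ℕ) : ℝ) + 1 + 1 ≤ (ℓ.length : ℝ) := by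
        exact_mod_cast (show ℓ.idxOf x + 1 + 1 ≤ ℓ.length by omega)
      exact ov_mk (o + (ℓ.idxOf x : ℝ) + 1) (by linarith) (by linarith) (by linarith) (by linarith)
    · rw [compG_neg hxs]
      push_cast
      exact ov_mk (o + (ℓ.idxOf x : ℝ) + 1) (by linarith) (by linarith) (by linarith) (by linarith)

lemma comp_wrap {ℓ : List V} {x y : V} (o : ℝ) (hnd : ℓ.Nodup) (hk3 : 3 ≤ ℓ.length)
    (hhead : ℓ.head? = some x) (hlast : ℓ.getLast? = some y) :
    ov (compF o ℓ true x) (compF o ℓ true y) ∧ ov (compG o ℓ true x) (compG o ℓ true y) := by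
  have hx0 : ℓ.idxOf x = 0 := (head?_indexOf hhead).1
  have hyk : ℓ.idxOf y + 1 = ℓ.length := getLast?_indexOf hnd hlast
  have hyc : ((ℓ.idxOf y : ℕ) : ℝ) + 1 = (ℓ.length : ℝ) := by exact_mod_cast hyk
  have h3 : (3:ℝ) ≤ (ℓ.length : ℝ) := by exact_mod_cast hk3
  have h0 : (0:ℝ) ≤ ((ℓ.length - 1 : ℕ) : ℝ) := Nat.cast_nonneg _
  constructor
  · rw [compF_neg (by rintro ⟨_, h2⟩; omega), compF_pos ⟨rfl, hyk⟩, hx0]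
    push_cast
    exact ov_mk o (by linarith) (by linarith) le_rfl (by linarith)
  · rw [compG_pos ⟨rfl, hx0⟩, compG_neg (by rintro ⟨_, h2⟩; omega)]
    exact ov_mk (o + (ℓ.length : ℝ)) (by linarith) le_rfl (by linarith) (by linarith)

lemma comp_cover_lt {ℓ : List V} {x y : V} (o : ℝ) (flag : Bool) (hnd : ℓ.Nodup)
    (hch : List.Chain' R ℓ)
    (hcyc : flag = true → 3 ≤ ℓ.length ∧
      ∃ a b, ℓ.head? = some a ∧ ℓ.getLast? = some b ∧ R a b)
    (hx : x ∈ ℓ) (hy : y ∈ ℓ) (hij : ℓ.idxOf x < ℓ.idxOf y) (hn : ¬ R x y) :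
    ¬ ov (compF o ℓ flag x) (compF o ℓ flag y) ∨
      ¬ ov (compG o ℓ flag x) (compG o ℓ flag y) := by
  have hiy : ℓ.idxOf y < ℓ.length := List.idxOf_lt_length_iff.mpr hy
  have hix : ℓ.idxOf x < ℓ.length := List.idxOf_lt_length_iff.mpr hx
  have hgx : ℓ[ℓ.idxOf x]'hix = x := List.getElem_idxOf hix
  have hgy : ℓ[ℓ.idxOf y]'hiy = y := List.getElem_idxOf hiy
  have hnotc : ℓ.idxOf y ≠ ℓ.idxOf x + 1 := by
    intro e
    apply hn
    have := chain'_getElem hch (ℓ.idxOf x) (by omega)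
    rwa [hgx, getElem_idx_congr ℓ e.symm, hgy] at this
  have hgap : ℓ.idxOf x + 2 ≤ ℓ.idxOf y := by omega
  by_cases hws : flag = true ∧ ℓ.idxOf y + 1 = ℓ.length
  · by_cases hx0 : ℓ.idxOf x = 0
    · -- would be the wrap pair, which is adjacent: contradiction
      exfalso
      obtain ⟨hk3, a, b, ha, hb, hab⟩ := hcyc hws.1
      have hax : a = x := by
        rw [← hgx, ← head?_getElem ha (by omega)]
        exact getElem_idx_congr ℓ hx0.symm (by omega)
      have hby : b = y := by
        rw [← hgy, ← getLast?_getElem hb (by omega)]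
        exact getElem_idx_congr ℓ (by omega) (by omega)
      exact hn (hax ▸ hby ▸ hab)
    · right
      rw [compG_neg (by rintro ⟨_, h2⟩; omega), compG_neg (by rintro ⟨_, h2⟩; omega)]
      apply not_ov_mk
      have : ((ℓ.idxOf x : ℕ) : ℝ) + 2 ≤ ((ℓ.idxOf y : ℕ) : ℝ) := by exact_mod_cast hgap
      linarith
  · left
    rw [compF_neg (by rintro ⟨_, h2⟩; omega), compF_neg (by rintro ⟨hf, h2⟩; exact hws ⟨hf, h2⟩)]
    apply not_ov_mk
    have : ((ℓ.idxOf x : ℕ) : ℝ) + 2 ≤ ((ℓ.idxOf y : ℕ) : ℝ) := by exact_mod_cast hgap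
    linarith

lemma comp_cover {ℓ : List V} {x y : V} (o : ℝ) (flag : Bool) (hsymm : Symmetric R)
    (hnd : ℓ.Nodup) (hch : List.Chain' R ℓ)
    (hcyc : flag = true → 3 ≤ ℓ.length ∧
      ∃ a b, ℓ.head? = some a ∧ ℓ.getLast? = some b ∧ R a b)
    (hx : x ∈ ℓ) (hy : y ∈ ℓ) (hxy : x ≠ y) (hn : ¬ R x y) :
    ¬ ov (compF o ℓ flag x) (compF o ℓ flag y) ∨
      ¬ ov (compG o ℓ flag x) (compG o ℓ flag y) := by
  have hne : ℓ.idxOf x ≠ ℓ.idxOf y := by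
    intro e
    apply hxy
    have hix : ℓ.idxOf x < ℓ.length := List.idxOf_lt_length_iff.mpr hx
    have hiy : ℓ.idxOf y < ℓ.length := List.idxOf_lt_length_iff.mpr hy
    rw [← List.getElem_idxOf hix, ← List.getElem_idxOf hiy]
    exact getElem_idx_congr ℓ e _
  rcases Nat.lt_or_ge (ℓ.idxOf x) (ℓ.idxOf y) with h | h
  · exact comp_cover_lt o flag hnd hch hcyc hx hy h hn
  · have h' : ℓ.idxOf y < ℓ.idxOf x := by omega
    refine (comp_cover_lt o flag hnd hch hcyc hy hx h' (fun hr => hn (hsymm hr))).imp ?_ ?_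
    · exact fun hc hov => hc (ov_comm.mp hov)
    · exact fun hc hov => hc (ov_comm.mp hov)

end Stmt7Aux

namespace Stmt7Aux

set_option linter.unusedSectionVars false

variable {V : Type} [DecidableEq V] {R : V → V → Prop}

noncomputable def layF (cm : ℝ → List V → Bool → V → ℝ × ℝ) (B : ℝ) :
    List (List V × Bool) → ℝ → V → ℝ × ℝ
  | [], _, _ => (0, B)
  | c :: M, o, x => if x ∈ c.1 then cm o c.1 c.2 x else layF cm B M (o + (c.1.length : ℝ) + 1) x

def totalN (M : List (List V × Bool)) : ℕ := (M.map (fun c => c.1.length + 1)).sum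

lemma totalN_cons (c : List V × Bool) (M : List (List V × Bool)) :
    totalN (c :: M) = c.1.length + 1 + totalN M := by
  simp [totalN]

lemma layF_nil (cm : ℝ → List V → Bool → V → ℝ × ℝ) (B : ℝ) (o : ℝ) (x : V) :
    layF cm B [] o x = (0, B) := rfl

lemma layF_cons_mem {cm : ℝ → List V → Bool → V → ℝ × ℝ} {B : ℝ} {c : List V × Bool}
    {M : List (List V × Bool)} {o : ℝ} {x : V} (hx : x ∈ c.1) :
    layF cm B (c :: M) o x = cm o c.1 c.2 x := by
  rw [layF, if_pos hx]

lemma layF_cons_not_mem {cm : ℝ → List V → Bool → V → ℝ × ℝ} {B : ℝ} {c : List V × Bool}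
    {M : List (List V × Bool)} {o : ℝ} {x : V} (hx : x ∉ c.1) :
    layF cm B (c :: M) o x = layF cm B M (o + (c.1.length : ℝ) + 1) x := by
  rw [layF, if_neg hx]

lemma layF_not_mem {cm : ℝ → List V → Bool → V → ℝ × ℝ} {B : ℝ} :
    ∀ (M : List (List V × Bool)) (o : ℝ) (x : V), x ∉ flatL M → layF cm B M o x = (0, B) := by
  intro M
  induction M with
  | nil => intro o x _; rfl
  | cons c M IH =>
    intro o x hx
    rw [flatL_cons, List.mem_append] at hx
    push_neg at hx
    rw [layF_cons_not_mem hx.1]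
    exact IH _ x hx.2

lemma layF_bound {cm : ℝ → List V → Bool → V → ℝ × ℝ} {B : ℝ}
    (hb : ∀ (o : ℝ) (ℓ : List V) (flag : Bool) (x : V), x ∈ ℓ →
      o ≤ (cm o ℓ flag x).1 ∧ (cm o ℓ flag x).1 ≤ (cm o ℓ flag x).2 ∧
        (cm o ℓ flag x).2 ≤ o + (ℓ.length : ℝ)) :
    ∀ (M : List (List V × Bool)) (o : ℝ) (x : V), x ∈ flatL M →
      o ≤ (layF cm B M o x).1 ∧ (layF cm B M o x).1 ≤ (layF cm B M o x).2 ∧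
        (layF cm B M o x).2 ≤ o + (totalN M : ℝ) := by
  intro M
  induction M with
  | nil => intro o x hx; simp [flatL] at hx
  | cons c M IH =>
    intro o x hx
    rw [flatL_cons, List.mem_append] at hx
    by_cases hxc : x ∈ c.1
    · rw [layF_cons_mem hxc]
      obtain ⟨b1, b2, b3⟩ := hb o c.1 c.2 x hxc
      refine ⟨b1, b2, le_trans b3 ?_⟩
      have : (c.1.length : ℝ) ≤ (totalN (c :: M) : ℝ) := by
        rw [totalN_cons]
        push_cast
        have : (0:ℝ) ≤ (totalN M : ℝ) := Nat.cast_nonneg _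
        linarith
      linarith
    · have hxm : x ∈ flatL M := by tauto
      rw [layF_cons_not_mem hxc]
      obtain ⟨b1, b2, b3⟩ := IH (o + (c.1.length : ℝ) + 1) x hxm
      have h0 : (0:ℝ) ≤ (c.1.length : ℝ) := Nat.cast_nonneg _
      refine ⟨by linarith, b2, ?_⟩
      rw [totalN_cons]
      push_cast
      linarith

end Stmt7Aux

namespace Stmt7Aux

set_option linter.unusedSectionVars false

variable {V : Type} [DecidableEq V] {R : V → V → Prop}

lemma layF_main (hsymm : Symmetric R) {B : ℝ} :
    ∀ (M : List (List V × Bool)) (o : ℝ),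
      (flatL M).Nodup →
      (∀ c ∈ M, List.Chain' R c.1) →
      (∀ c ∈ M, c.2 = true → 3 ≤ c.1.length ∧
        ∃ a b, c.1.head? = some a ∧ c.1.getLast? = some b ∧ R a b) →
      (∀ x y, x ∈ flatL M → y ∈ flatL M → R x y → ∃ c ∈ M, NearL c.1 c.2 x y) →
      (∀ x y, x ∈ flatL M → y ∈ flatL M → R x y →
        ov (layF compF B M o x) (layF compF B M o y) ∧
        ov (layF compG B M o x) (layF compG B M o y)) ∧
      (∀ x y, x ∈ flatL M → y ∈ flatL M → x ≠ y → ¬ R x y →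
        ¬ ov (layF compF B M o x) (layF compF B M o y) ∨
        ¬ ov (layF compG B M o x) (layF compG B M o y)) := by
  intro M
  induction M with
  | nil =>
    intro o _ _ _ _
    constructor
    · intro x y hx _ _; simp [flatL] at hx
    · intro x y hx _ _ _; simp [flatL] at hx
  | cons c M IH =>
    intro o hnd hch hcyc hnear
    rw [flatL_cons] at hnd
    have hnd1 : c.1.Nodup := (List.nodup_append'.mp hnd).1
    have hnd2 : (flatL M).Nodup := (List.nodup_append'.mp hnd).2.1
    have hdisj : ∀ z, z ∈ c.1 → z ∈ flatL M → False :=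
      fun z h1 h2 => (List.nodup_append'.mp hnd).2.2 h1 h2
    have hnear' : ∀ x y, x ∈ flatL M → y ∈ flatL M → R x y → ∃ c' ∈ M, NearL c'.1 c'.2 x y := by
      intro x y hx hy hr
      obtain ⟨c', hc', hn⟩ := hnear x y (by rw [flatL_cons]; exact List.mem_append_right _ hx)
        (by rw [flatL_cons]; exact List.mem_append_right _ hy) hr
      rcases List.mem_cons.mp hc' with rfl | hc'
      · exact absurd (hn.mem_left) (fun hm => hdisj x hm hx)
      · exact ⟨c', hc', hn⟩
    obtain ⟨IHs, IHc⟩ := IH (o + (c.1.length : ℝ) + 1) hnd2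
      (fun c' hc' => hch c' (List.mem_cons_of_mem _ hc'))
      (fun c' hc' => hcyc c' (List.mem_cons_of_mem _ hc'))
      hnear'
    have hchc : List.Chain' R c.1 := hch c (by simp)
    have hcycc := hcyc c (by simp)
    -- separation facts
    have hsepF : ∀ z1 z2, z1 ∈ c.1 → z2 ∈ flatL M →
        ¬ ov (layF compF B (c :: M) o z1) (layF compF B (c :: M) o z2) := by
      intro z1 z2 h1 h2
      rw [layF_cons_mem h1, layF_cons_not_mem (fun hm => hdisj z2 hm h2)]
      obtain ⟨_, _, b3⟩ := compF_bound o c.1 c.2 z1 h1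
      obtain ⟨b1', _, _⟩ := layF_bound (fun o ℓ fl x hx => compF_bound o ℓ fl x hx) M
        (o + (c.1.length : ℝ) + 1) z2 h2
      exact not_ov_of_lt (by linarith)
    have hsepG : ∀ z1 z2, z1 ∈ c.1 → z2 ∈ flatL M →
        ¬ ov (layF compG B (c :: M) o z1) (layF compG B (c :: M) o z2) := by
      intro z1 z2 h1 h2
      rw [layF_cons_mem h1, layF_cons_not_mem (fun hm => hdisj z2 hm h2)]
      obtain ⟨_, _, b3⟩ := compG_bound o c.1 c.2 z1 h1
      obtain ⟨b1', _, _⟩ := layF_bound (fun o ℓ fl x hx => compG_bound o ℓ fl x hx) M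
        (o + (c.1.length : ℝ) + 1) z2 h2
      exact not_ov_of_lt (by linarith)
    constructor
    · -- soundness
      intro x y hx hy hr
      rw [flatL_cons, List.mem_append] at hx hy
      rcases hx with hx | hx <;> rcases hy with hy | hy
      · -- both in c
        obtain ⟨c', hc', hn⟩ := hnear x y (by rw [flatL_cons]; exact List.mem_append_left _ hx)
          (by rw [flatL_cons]; exact List.mem_append_left _ hy) hr
        have hcc : c' = c := by
          rcases List.mem_cons.mp hc' with rfl | hc'
          · rfl
          · exact absurd (hn.mem_left) (fun hm => hdisj x hx (by
              exact List.mem_flatMap.mpr ⟨c', hc', hm⟩))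
        subst hcc
        rw [layF_cons_mem (cm := compF) hx, layF_cons_mem (cm := compF) hy,
          layF_cons_mem (cm := compG) hx, layF_cons_mem (cm := compG) hy]
        rcases hn with (hn | hn) | ⟨hf, hw⟩
        · exact comp_consec o c'.2 hnd1 hn
        · have := comp_consec (x := y) (y := x) o c'.2 hnd1 hn
          exact ⟨ov_comm.mp this.1, ov_comm.mp this.2⟩
        · obtain ⟨hk3, _, _, _, _, _⟩ := hcycc hf
          rcases hw with ⟨hh, hl⟩ | ⟨hh, hl⟩
          · have := comp_wrap o hnd1 hk3 hh hl
            rw [hf]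
            exact this
          · have := comp_wrap o hnd1 hk3 hh hl
            rw [hf]
            exact ⟨ov_comm.mp this.1, ov_comm.mp this.2⟩
      · -- split: impossible since R-pairs are within one component
        exfalso
        obtain ⟨c', hc', hn⟩ := hnear x y (by rw [flatL_cons]; exact List.mem_append_left _ hx)
          (by rw [flatL_cons]; exact List.mem_append_right _ hy) hr
        rcases List.mem_cons.mp hc' with rfl | hc'
        · exact hdisj y hn.mem_right hy
        · exact hdisj x hx (List.mem_flatMap.mpr ⟨c', hc', hn.mem_left⟩)
      · exfalso
        obtain ⟨c', hc', hn⟩ := hnear x y (by rw [flatL_cons]; exact List.mem_append_right _ hx)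
          (by rw [flatL_cons]; exact List.mem_append_left _ hy) hr
        rcases List.mem_cons.mp hc' with rfl | hc'
        · exact hdisj x hn.mem_left hx
        · exact hdisj y hy (List.mem_flatMap.mpr ⟨c', hc', hn.mem_right⟩)
      · -- both in M
        have hvx : layF compF B (c :: M) o x = layF compF B M (o + (c.1.length : ℝ) + 1) x :=
          layF_cons_not_mem (fun hm => hdisj x hm hx)
        have hvy : layF compF B (c :: M) o y = layF compF B M (o + (c.1.length : ℝ) + 1) y :=
          layF_cons_not_mem (fun hm => hdisj y hm hy)
        have hvx' : layF compG B (c :: M) o x = layF compG B M (o + (c.1.length : ℝ) + 1) x :=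
          layF_cons_not_mem (fun hm => hdisj x hm hx)
        have hvy' : layF compG B (c :: M) o y = layF compG B M (o + (c.1.length : ℝ) + 1) y :=
          layF_cons_not_mem (fun hm => hdisj y hm hy)
        rw [hvx, hvy, hvx', hvy']
        exact IHs x y hx hy hr
    · -- coverage
      intro x y hx hy hxy hn
      rw [flatL_cons, List.mem_append] at hx hy
      rcases hx with hx | hx <;> rcases hy with hy | hy
      · rw [layF_cons_mem (cm := compF) hx, layF_cons_mem (cm := compF) hy,
          layF_cons_mem (cm := compG) hx, layF_cons_mem (cm := compG) hy]
        exact comp_cover o c.2 hsymm hnd1 hchc hcycc hx hy hxy hn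
      · exact Or.inl (hsepF x y hx hy)
      · refine Or.inl (fun hov => hsepF y x hy hx (ov_comm.mp hov))
      · have hvx : layF compF B (c :: M) o x = layF compF B M (o + (c.1.length : ℝ) + 1) x :=
          layF_cons_not_mem (fun hm => hdisj x hm hx)
        have hvy : layF compF B (c :: M) o y = layF compF B M (o + (c.1.length : ℝ) + 1) y :=
          layF_cons_not_mem (fun hm => hdisj y hm hy)
        have hvx' : layF compG B (c :: M) o x = layF compG B M (o + (c.1.length : ℝ) + 1) x :=
          layF_cons_not_mem (fun hm => hdisj x hm hx)
        have hvy' : layF compG B (c :: M) o y = layF compG B M (o + (c.1.length : ℝ) + 1) y :=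
          layF_cons_not_mem (fun hm => hdisj y hm hy)
        rw [hvx, hvy, hvx', hvy']
        exact IHc x y hx hy hxy hn

end Stmt7Aux

namespace Stmt7Aux

set_option linter.unusedSectionVars false

noncomputable def BB (V : Type) [Fintype V] : ℝ := ((2 * Fintype.card V + 2 : ℕ) : ℝ)

lemma BB_nonneg (V : Type) [Fintype V] : (0 : ℝ) ≤ BB V := Nat.cast_nonneg _

variable {V : Type} [DecidableEq V]

lemma totalN_eq : ∀ (M : List (List V × Bool)), totalN M = (flatL M).length + M.length := by
  intro M
  induction M with
  | nil => simp [totalN, flatL]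
  | cons c M IH =>
    rw [totalN_cons, flatL_cons, List.length_append, IH, List.length_cons]
    omega

lemma length_le_flat : ∀ (M : List (List V × Bool)), (∀ c ∈ M, c.1 ≠ ([] : List V)) →
    M.length ≤ (flatL M).length := by
  intro M
  induction M with
  | nil => simp
  | cons c M IH =>
    intro h
    rw [flatL_cons, List.length_append, List.length_cons]
    have h1 : 1 ≤ c.1.length := by
      have := h c (by simp)
      have := List.length_pos_iff.mpr this
      omega
    have h2 := IH (fun c' hc' => h c' (List.mem_cons_of_mem _ hc'))
    omega

lemma ov_hull {B : ℝ} {p : ℝ × ℝ} (h1 : 0 ≤ p.1) (h2 : p.1 ≤ p.2) (h3 : p.2 ≤ B) :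
    ov ((0 : ℝ), B) p := by
  rcases p with ⟨l, r⟩
  exact ov_mk l h1 (by linarith) le_rfl (by linarith)

lemma pair_rep {V : Type} [Fintype V] (G : SimpleGraph V) (hclaw : ClawFree G) {m : ℕ}
    (col : V → Fin m) (hcol : ∀ u v, G.Adj u v → col u ≠ col v) (a b : Fin m) :
    ∃ f g : V → ℝ × ℝ,
      (∀ v, 0 ≤ (f v).1 ∧ (f v).1 ≤ (f v).2 ∧ (f v).2 ≤ BB V) ∧
      (∀ v, 0 ≤ (g v).1 ∧ (g v).1 ≤ (g v).2 ∧ (g v).2 ≤ BB V) ∧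
      (∀ v, ¬(col v = a ∨ col v = b) → f v = ((0:ℝ), BB V) ∧ g v = ((0:ℝ), BB V)) ∧
      (∀ u v, G.Adj u v → ov (f u) (f v) ∧ ov (g u) (g v)) ∧
      (∀ u v, (col u = a ∨ col u = b) → (col v = a ∨ col v = b) → u ≠ v → ¬ G.Adj u v →
        ¬ ov (f u) (f v) ∨ ¬ ov (g u) (g v)) := by
  classical
  have hsymm : Symmetric G.Adj := fun u v h => h.symm
  have hirr : ∀ z, ¬ G.Adj z z := fun z => G.loopless.irrefl z
  set W : Finset V := Finset.univ.filter (fun v => col v = a ∨ col v = b) with hW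
  have hmemW : ∀ v, v ∈ W ↔ (col v = a ∨ col v = b) := by
    intro v; rw [hW]; simp
  have hdeg2 : ∀ x ∈ W, degW G.Adj W x ≤ 2 := by
    intro x hx
    have hother : ∃ oth : Fin m, ∀ y, y ∈ W → G.Adj x y → col y = oth := by
      rcases (hmemW x).mp hx with hxa | hxb
      · refine ⟨b, fun y hy hadj => ?_⟩
        rcases (hmemW y).mp hy with hya | hyb
        · exact absurd (hxa ▸ hya : col y = col x) (fun e => hcol x y hadj e.symm)
        · exact hyb
      · refine ⟨a, fun y hy hadj => ?_⟩
        rcases (hmemW y).mp hy with hya | hyb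
        · exact hya
        · exact absurd (hxb ▸ hyb : col y = col x) (fun e => hcol x y hadj e.symm)
    obtain ⟨oth, hoth⟩ := hother
    rw [degW_def]
    by_contra hc
    push_neg at hc
    have h3 : 3 ≤ (W.filter (fun y => G.Adj x y)).card := hc
    obtain ⟨y1, hy1, y2, hy2, y3, hy3, h12, h13, h23⟩ :
        ∃ y1 ∈ W.filter (fun y => G.Adj x y), ∃ y2 ∈ W.filter (fun y => G.Adj x y),
          ∃ y3 ∈ W.filter (fun y => G.Adj x y), y1 ≠ y2 ∧ y1 ≠ y3 ∧ y2 ≠ y3 := by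
      set s := W.filter (fun y => G.Adj x y)
      have h1 : s.Nonempty := by rw [← Finset.card_pos]; omega
      obtain ⟨y1, hy1⟩ := h1
      have h2 : (s.erase y1).Nonempty := by
        rw [← Finset.card_pos, Finset.card_erase_of_mem hy1]; omega
      obtain ⟨y2, hy2⟩ := h2
      have h3' : ((s.erase y1).erase y2).Nonempty := by
        rw [← Finset.card_pos, Finset.card_erase_of_mem hy2,
          Finset.card_erase_of_mem hy1]; omega
      obtain ⟨y3, hy3⟩ := h3'
      have hy2' := Finset.mem_erase.mp hy2
      have hy3' := Finset.mem_erase.mp hy3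
      have hy3'' := Finset.mem_erase.mp hy3'.2
      exact ⟨y1, hy1, y2, hy2'.2, y3, hy3''.2, fun e => hy2'.1 e.symm,
        fun e => hy3''.1 e.symm, fun e => hy3'.1 e.symm⟩
    have hA1 : G.Adj x y1 := (Finset.mem_filter.mp hy1).2
    have hA2 : G.Adj x y2 := (Finset.mem_filter.mp hy2).2
    have hA3 : G.Adj x y3 := (Finset.mem_filter.mp hy3).2
    have hc1 : col y1 = oth := hoth y1 (Finset.mem_filter.mp hy1).1 hA1
    have hc2 : col y2 = oth := hoth y2 (Finset.mem_filter.mp hy2).1 hA2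
    have hc3 : col y3 = oth := hoth y3 (Finset.mem_filter.mp hy3).1 hA3
    have hn12 : ¬ G.Adj y1 y2 := fun hadj => hcol y1 y2 hadj (hc1.trans hc2.symm)
    have hn13 : ¬ G.Adj y1 y3 := fun hadj => hcol y1 y3 hadj (hc1.trans hc3.symm)
    have hn23 : ¬ G.Adj y2 y3 := fun hadj => hcol y2 y3 hadj (hc2.trans hc3.symm)
    exact hclaw x y1 y2 y3 h12 h13 h23 ⟨hA1, hA2, hA3, hn12, hn13, hn23⟩
  obtain ⟨L, hL⟩ := layout_exists hsymm hirr W hdeg2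
  have hflatW : ∀ v, v ∈ flatL L ↔ (col v = a ∨ col v = b) :=
    fun v => (hL.mem v).symm.trans (hmemW v)
  have htot : ((totalN L : ℕ) : ℝ) ≤ BB V := by
    have h1 : (flatL L).length ≤ Fintype.card V := List.Nodup.length_le_card hL.nodup
    have h2 : L.length ≤ (flatL L).length := length_le_flat L hL.nonempty
    have h3 : totalN L ≤ 2 * Fintype.card V + 2 := by
      rw [totalN_eq]; omega
    rw [BB]
    exact_mod_cast h3
  have hFbound : ∀ v, 0 ≤ (layF compF (BB V) L 0 v).1 ∧
      (layF compF (BB V) L 0 v).1 ≤ (layF compF (BB V) L 0 v).2 ∧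
      (layF compF (BB V) L 0 v).2 ≤ BB V := by
    intro v
    by_cases hv : v ∈ flatL L
    · obtain ⟨b1, b2, b3⟩ := layF_bound (fun o ℓ fl x hx => compF_bound o ℓ fl x hx) L 0 v hv
      exact ⟨b1, b2, by linarith⟩
    · rw [layF_not_mem L 0 v hv]
      exact ⟨le_rfl, BB_nonneg V, le_rfl⟩
  have hGbound : ∀ v, 0 ≤ (layF compG (BB V) L 0 v).1 ∧
      (layF compG (BB V) L 0 v).1 ≤ (layF compG (BB V) L 0 v).2 ∧
      (layF compG (BB V) L 0 v).2 ≤ BB V := by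
    intro v
    by_cases hv : v ∈ flatL L
    · obtain ⟨b1, b2, b3⟩ := layF_bound (fun o ℓ fl x hx => compG_bound o ℓ fl x hx) L 0 v hv
      exact ⟨b1, b2, by linarith⟩
    · rw [layF_not_mem L 0 v hv]
      exact ⟨le_rfl, BB_nonneg V, le_rfl⟩
  obtain ⟨hmain1, hmain2⟩ := layF_main hsymm L 0 hL.nodup hL.chain hL.cyc
    (fun x y hx hy hr => hL.near x y ((hL.mem x).mpr hx) ((hL.mem y).mpr hy) hr)
  refine ⟨layF compF (BB V) L 0, layF compG (BB V) L 0, hFbound, hGbound, ?_, ?_, ?_⟩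
  · intro v hv
    have : v ∉ flatL L := fun hm => hv ((hflatW v).mp hm)
    exact ⟨layF_not_mem L 0 v this, layF_not_mem L 0 v this⟩
  · intro u v hadj
    by_cases hu : u ∈ flatL L <;> by_cases hv : v ∈ flatL L
    · exact hmain1 u v hu hv hadj
    · have hvv : layF compF (BB V) L 0 v = ((0:ℝ), BB V) := layF_not_mem L 0 v hv
      have hvv' : layF compG (BB V) L 0 v = ((0:ℝ), BB V) := layF_not_mem L 0 v hv
      rw [hvv, hvv']
      obtain ⟨a1, a2, a3⟩ := hFbound u
      obtain ⟨b1, b2, b3⟩ := hGbound u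
      exact ⟨ov_comm.mp (ov_hull a1 a2 a3), ov_comm.mp (ov_hull b1 b2 b3)⟩
    · have huu : layF compF (BB V) L 0 u = ((0:ℝ), BB V) := layF_not_mem L 0 u hu
      have huu' : layF compG (BB V) L 0 u = ((0:ℝ), BB V) := layF_not_mem L 0 u hu
      rw [huu, huu']
      obtain ⟨a1, a2, a3⟩ := hFbound v
      obtain ⟨b1, b2, b3⟩ := hGbound v
      exact ⟨ov_hull a1 a2 a3, ov_hull b1 b2 b3⟩
    · have huu : layF compF (BB V) L 0 u = ((0:ℝ), BB V) := layF_not_mem L 0 u hu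
      have huu' : layF compG (BB V) L 0 u = ((0:ℝ), BB V) := layF_not_mem L 0 u hu
      obtain ⟨a1, a2, a3⟩ := hFbound v
      obtain ⟨b1, b2, b3⟩ := hGbound v
      rw [huu, huu']
      exact ⟨ov_hull a1 a2 a3, ov_hull b1 b2 b3⟩
  · intro u v hu hv huv hnadj
    exact hmain2 u v ((hflatW u).mpr hu) ((hflatW v).mpr hv) huv hnadj

end Stmt7Aux

namespace Stmt7Aux

set_option linter.unusedSectionVars false

lemma greedy_coloring {V : Type} [Fintype V] (G : SimpleGraph V) (Δ : ℕ)
    (hdeg : ∀ v : V, (G.neighborSet v).ncard ≤ Δ) :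
    ∃ col : V → Fin (Δ + 1), ∀ u v, G.Adj u v → col u ≠ col v := by
  classical
  suffices h : ∀ s : Finset V, ∃ col : V → Fin (Δ + 1),
      ∀ u v, u ∈ s → v ∈ s → G.Adj u v → col u ≠ col v by
    obtain ⟨col, hcol⟩ := h Finset.univ
    exact ⟨col, fun u v hadj => hcol u v (Finset.mem_univ _) (Finset.mem_univ _) hadj⟩
  intro s
  induction s using Finset.induction_on with
  | empty => exact ⟨fun _ => 0, by simp⟩
  | @insert x s hxs IH =>
    obtain ⟨col0, h0⟩ := IH
    have hcard : ((s.filter (fun y => G.Adj x y)).image col0).card ≤ Δ := by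
      refine le_trans (Finset.card_image_le)
        (le_trans (Finset.card_le_card (t := Finset.univ.filter (fun y => G.Adj x y)) ?_) ?_)
      · exact fun y hy => Finset.mem_filter.mpr
          ⟨Finset.mem_univ _, (Finset.mem_filter.mp hy).2⟩
      · have he : ((Finset.univ.filter (fun y => G.Adj x y) : Finset V) : Set V)
            = G.neighborSet x := by
          ext y; simp [SimpleGraph.mem_neighborSet]
        calc (Finset.univ.filter (fun y => G.Adj x y)).card
            = ((Finset.univ.filter (fun y => G.Adj x y) : Finset V) : Set V).ncard :=
              (Set.ncard_coe_finset _).symm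
          _ = (G.neighborSet x).ncard := by rw [he]
          _ ≤ Δ := hdeg x
    have hex : ∃ k : Fin (Δ + 1), k ∉ (s.filter (fun y => G.Adj x y)).image col0 := by
      by_contra hc
      push_neg at hc
      have hsub : (Finset.univ : Finset (Fin (Δ + 1))) ⊆
          (s.filter (fun y => G.Adj x y)).image col0 := fun k _ => hc k
      have := Finset.card_le_card hsub
      rw [Finset.card_univ, Fintype.card_fin] at this
      omega
    obtain ⟨k, hk⟩ := hex
    refine ⟨Function.update col0 x k, ?_⟩
    intro u v hu hv hadj
    rcases Finset.mem_insert.mp hu with rfl | hu'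
    · rcases Finset.mem_insert.mp hv with hvx | hv'
      · exact absurd (hvx ▸ hadj) (G.loopless.irrefl u)
      · have hvu : v ≠ u := fun e => hxs (e ▸ hv')
        rw [Function.update_self, Function.update_of_ne hvu]
        intro e
        exact hk (e ▸ Finset.mem_image_of_mem col0
          (Finset.mem_filter.mpr ⟨hv', hadj⟩))
    · rcases Finset.mem_insert.mp hv with rfl | hv'
      · have huv : u ≠ v := fun e => hxs (e ▸ hu')
        rw [Function.update_self, Function.update_of_ne huv]
        intro e
        exact hk (e.symm ▸ Finset.mem_image_of_mem col0
          (Finset.mem_filter.mpr ⟨hu', hadj.symm⟩))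
      · have hux : u ≠ x := fun e => hxs (e ▸ hu')
        have hvx : v ≠ x := fun e => hxs (e ▸ hv')
        rw [Function.update_of_ne hux, Function.update_of_ne hvx]
        exact h0 u v hu' hv' hadj

end Stmt7Aux

namespace Stmt7Aux

set_option linter.unusedSectionVars false

noncomputable def pmdef {V : Type} {m : ℕ} (F Gg : Fin m × Fin m → V → ℝ × ℝ) (B : ℝ)
    (t : Fin m × Fin m × Fin 2) : V → ℝ × ℝ :=
  if t.1 < t.2.1 then (if t.2.2 = 0 then F (t.1, t.2.1) else Gg (t.1, t.2.1))
  else (fun _ => ((0:ℝ), B))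

lemma pmdef_eqF {V : Type} {m : ℕ} {F Gg : Fin m × Fin m → V → ℝ × ℝ} {B : ℝ}
    {t : Fin m × Fin m × Fin 2} (h1 : t.1 < t.2.1) (h2 : t.2.2 = 0) :
    pmdef F Gg B t = F (t.1, t.2.1) := by
  unfold pmdef; rw [if_pos h1, if_pos h2]

lemma pmdef_eqG {V : Type} {m : ℕ} {F Gg : Fin m × Fin m → V → ℝ × ℝ} {B : ℝ}
    {t : Fin m × Fin m × Fin 2} (h1 : t.1 < t.2.1) (h2 : ¬ t.2.2 = 0) :
    pmdef F Gg B t = Gg (t.1, t.2.1) := by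
  unfold pmdef; rw [if_pos h1, if_neg h2]

lemma pmdef_eqC {V : Type} {m : ℕ} {F Gg : Fin m × Fin m → V → ℝ × ℝ} {B : ℝ}
    {t : Fin m × Fin m × Fin 2} (h1 : ¬ t.1 < t.2.1) :
    pmdef F Gg B t = (fun _ => ((0:ℝ), B)) := by
  unfold pmdef; rw [if_neg h1]

def idxEquiv (m : ℕ) : (Fin m × Fin m × Fin 2) ≃ Fin (m * (m * 2)) :=
  (Equiv.prodCongr (Equiv.refl (Fin m)) finProdFinEquiv).trans finProdFinEquiv

end Stmt7Aux

open Stmt7Aux in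
theorem stmt7' {V : Type} [Fintype V] (G : SimpleGraph V) (hclaw : ClawFree G)
    (Δ : ℕ) (hΔ : 1 ≤ Δ) (hdeg : ∀ v : V, (G.neighborSet v).ncard ≤ Δ) :
    lbox G ≤ 3 * Δ := by
  classical
  obtain ⟨col, hcol⟩ := greedy_coloring G Δ hdeg
  have hchoice := fun (p : Fin (Δ+1) × Fin (Δ+1)) => pair_rep G hclaw col hcol p.1 p.2
  choose F Gg hF hG hHull hSound hCover using hchoice
  apply Nat.sInf_le
  show LocalBoxRep G (3 * Δ)
  refine ⟨(Δ+1) * ((Δ+1) * 2),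
    fun i => IGof (pmdef F Gg (BB V) ((idxEquiv (Δ+1)).symm i)),
    fun i => IGof_interval _, ?_, ?_⟩
  · intro u v huv
    constructor
    · intro hadj i
      rw [IGof_adj]
      refine ⟨huv, ?_⟩
      set t := (idxEquiv (Δ+1)).symm i with ht
      by_cases h1 : t.1 < t.2.1
      · by_cases h2 : t.2.2 = 0
        · rw [pmdef_eqF h1 h2]
          exact (hSound (t.1, t.2.1) u v hadj).1
        · rw [pmdef_eqG h1 h2]
          exact (hSound (t.1, t.2.1) u v hadj).2
      · rw [pmdef_eqC h1]
        exact ov_hull le_rfl (BB_nonneg V) le_rfl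
    · intro hall
      by_contra hnadj
      obtain ⟨a, b, hab, hua, hvb⟩ : ∃ a b : Fin (Δ+1), a < b ∧
          (col u = a ∨ col u = b) ∧ (col v = a ∨ col v = b) := by
        rcases lt_trichotomy (col u) (col v) with h | h | h
        · exact ⟨col u, col v, h, Or.inl rfl, Or.inr rfl⟩
        · by_cases h0 : (col u : ℕ) = 0
          · refine ⟨col u, ⟨1, by omega⟩, ?_, Or.inl rfl, Or.inl h.symm⟩
            show (col u : ℕ) < 1; omega
          · refine ⟨⟨0, by omega⟩, col u, ?_, Or.inr rfl, Or.inr h.symm⟩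
            show 0 < (col u : ℕ); omega
        · exact ⟨col v, col u, h, Or.inr rfl, Or.inl rfl⟩
      rcases hCover (a, b) u v hua hvb huv hnadj with hbad | hbad
      · have h2 := hall ((idxEquiv (Δ+1)) (a, b, (0 : Fin 2)))
        rw [IGof_adj, Equiv.symm_apply_apply, pmdef_eqF hab rfl] at h2
        exact hbad h2.2
      · have h2 := hall ((idxEquiv (Δ+1)) (a, b, (1 : Fin 2)))
        rw [IGof_adj, Equiv.symm_apply_apply, pmdef_eqG hab (by simp)] at h2
        exact hbad h2.2
  · intro x
    have hsub : {i : Fin ((Δ+1) * ((Δ+1) * 2)) |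
        ¬ IsUniversal (IGof (pmdef F Gg (BB V) ((idxEquiv (Δ+1)).symm i))) x} ⊆
        (fun t => idxEquiv (Δ+1) t) '' {t : Fin (Δ+1) × Fin (Δ+1) × Fin 2 |
          t.1 < t.2.1 ∧ (col x = t.1 ∨ col x = t.2.1)} := by
      intro i hi
      simp only [Set.mem_setOf_eq] at hi
      refine ⟨(idxEquiv (Δ+1)).symm i, ?_, by simp⟩
      by_contra hT
      apply hi
      set t := (idxEquiv (Δ+1)).symm i with ht
      simp only [Set.mem_setOf_eq] at hT
      push_neg at hT
      by_cases h1 : t.1 < t.2.1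
      · have hcx : ¬ (col x = (t.1, t.2.1).1 ∨ col x = (t.1, t.2.1).2) := by
          rintro (hc | hc)
          · exact (hT h1).1 hc
          · exact (hT h1).2 hc
        obtain ⟨hhull1, hhull2⟩ := hHull (t.1, t.2.1) x hcx
        by_cases h2 : t.2.2 = 0
        · rw [pmdef_eqF h1 h2]
          exact IGof_universal hhull1 (hF (t.1, t.2.1))
        · rw [pmdef_eqG h1 h2]
          exact IGof_universal hhull2 (hG (t.1, t.2.1))
      · rw [pmdef_eqC h1]
        exact IGof_universal rfl (fun v => ⟨le_rfl, BB_nonneg V, le_rfl⟩)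
    have hfin : ((fun t => idxEquiv (Δ+1) t) '' {t : Fin (Δ+1) × Fin (Δ+1) × Fin 2 |
        t.1 < t.2.1 ∧ (col x = t.1 ∨ col x = t.2.1)}).Finite := Set.toFinite _
    refine le_trans (Set.ncard_le_ncard hsub hfin) ?_
    rw [Set.ncard_image_of_injective _ (Equiv.injective _)]
    have hTf : {t : Fin (Δ+1) × Fin (Δ+1) × Fin 2 |
        t.1 < t.2.1 ∧ (col x = t.1 ∨ col x = t.2.1)} =
        ↑(Finset.univ.filter (fun t : Fin (Δ+1) × Fin (Δ+1) × Fin 2 =>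
          t.1 < t.2.1 ∧ (col x = t.1 ∨ col x = t.2.1))) := by
      ext t; simp
    rw [hTf, Set.ncard_coe_finset]
    have hsub2 : Finset.univ.filter (fun t : Fin (Δ+1) × Fin (Δ+1) × Fin 2 =>
        t.1 < t.2.1 ∧ (col x = t.1 ∨ col x = t.2.1)) ⊆
        ((Finset.univ.erase (col x)) ×ˢ (Finset.univ : Finset (Fin 2))).image
          (fun q : Fin (Δ+1) × Fin 2 =>
            if q.1 < col x then (q.1, col x, q.2) else (col x, q.1, q.2)) := by
      rintro ⟨t1, t2, t3⟩ htf
      simp only [Finset.mem_filter] at htf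
      obtain ⟨-, hlt, hcx⟩ := htf
      rcases hcx with hcx | hcx
      · refine Finset.mem_image.mpr ⟨(t2, t3), ?_, ?_⟩
        · refine Finset.mem_product.mpr ⟨Finset.mem_erase.mpr ⟨?_, Finset.mem_univ _⟩,
            Finset.mem_univ _⟩
          intro e
          rw [← hcx] at hlt
          exact absurd (e ▸ hlt) (lt_irrefl _)
        · have hnlt : ¬ (t2 < col x) := by
            rw [← hcx] at hlt
            exact fun hc => absurd (lt_trans hlt hc) (lt_irrefl _)
          simp only [if_neg hnlt]
          rw [← hcx]
      · refine Finset.mem_image.mpr ⟨(t1, t3), ?_, ?_⟩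
        · refine Finset.mem_product.mpr ⟨Finset.mem_erase.mpr ⟨?_, Finset.mem_univ _⟩,
            Finset.mem_univ _⟩
          intro e
          rw [← hcx] at hlt
          exact absurd (e ▸ hlt) (lt_irrefl _)
        · have hlt' : t1 < col x := by rw [← hcx] at hlt; exact hlt
          simp only [if_pos hlt']
          rw [← hcx]
    refine le_trans (Finset.card_le_card hsub2) (le_trans Finset.card_image_le ?_)
    rw [Finset.card_product, Finset.card_erase_of_mem (Finset.mem_univ _),
      Finset.card_univ, Finset.card_univ, Fintype.card_fin, Fintype.card_fin]
    omega


/-- claw-free G with maximum degree Δ ≥ 1 satisfies lbox(G) ≤ 3Δ. -/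
theorem stmt7 {V : Type} [Fintype V] (G : SimpleGraph V) (hclaw : ClawFree G)
    (Δ : ℕ) (hΔ : 1 ≤ Δ) (hdeg : ∀ v : V, (G.neighborSet v).ncard ≤ Δ) :
    lbox G ≤ 3 * Δ := stmt7' G hclaw Δ hΔ hdeg
end

section
/- Let G be a finite simple graph and suppose the edge set of the complement of G can be partitioned into complete bipartite subgraphs B_1, …, B_k such that every vertex of G lies in (i.e., is incident to an edge of) at most t of the subgraphs B_1, …, B_k. Then lbox(G) ≤ t. -/
open Classical

/-- Complement of the complete bipartite graph between `A` and `B`. -/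
def bigraphCompl {V : Type} (A B : Finset V) : SimpleGraph V where
  Adj u v := u ≠ v ∧ ¬((u ∈ A ∧ v ∈ B) ∨ (v ∈ A ∧ u ∈ B))
  symm := by constructor; rintro u v ⟨h1, h2⟩; exact ⟨h1.symm, by tauto⟩
  loopless := by constructor; rintro v ⟨h, -⟩; exact h rfl

lemma bigraphCompl_interval {V : Type} (A B : Finset V) (h : Disjoint A B) :
    IsIntervalGraph (bigraphCompl A B) := by
  refine ⟨fun v => if v ∈ B then 1 else 0, fun v => if v ∈ A then 0 else 1, ?_⟩
  intro u v huv
  constructor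
  · rintro ⟨-, hcross⟩
    by_cases hu : u ∈ A
    · have hvB : v ∉ B := fun hv => hcross (Or.inl ⟨hu, hv⟩)
      have huB : u ∉ B := fun h' => Finset.disjoint_left.mp h hu h'
      refine ⟨0, ?_, ?_⟩ <;> simp only [Set.mem_Icc] <;> constructor <;>
        split_ifs <;> norm_num <;> tauto
    · by_cases hu' : u ∈ B
      · have hvA : v ∉ A := fun hv => hcross (Or.inr ⟨hv, hu'⟩)
        refine ⟨1, ?_, ?_⟩ <;> simp only [Set.mem_Icc] <;> constructor <;>
          split_ifs <;> norm_num <;> tauto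
      · by_cases hv : v ∈ B
        · have hvA : v ∉ A := fun h' => Finset.disjoint_left.mp h h' hv
          refine ⟨1, ?_, ?_⟩ <;> simp only [Set.mem_Icc] <;> constructor <;>
            split_ifs <;> norm_num <;> tauto
        · refine ⟨0, ?_, ?_⟩ <;> simp only [Set.mem_Icc] <;> constructor <;>
            split_ifs <;> norm_num <;> tauto
  · rintro ⟨x, hxu, hxv⟩
    refine ⟨huv, ?_⟩
    simp only [Set.mem_Icc] at hxu hxv
    rintro (⟨huA, hvB⟩ | ⟨hvA, huB⟩)
    · have huB : u ∉ B := fun h' => Finset.disjoint_left.mp h huA h'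
      simp only [if_pos huA, if_neg huB, if_pos hvB] at hxu hxv
      linarith [hxu.2, hxv.1]
    · have hvB : v ∉ B := fun h' => Finset.disjoint_left.mp h hvA h'
      simp only [if_pos hvA, if_neg hvB, if_pos huB] at hxu hxv
      linarith [hxv.2, hxu.1]

lemma bigraphCompl_universal {V : Type} (A B : Finset V) (v : V)
    (hA : v ∉ A) (hB : v ∉ B) : IsUniversal (bigraphCompl A B) v := by
  intro u hu
  exact ⟨fun h' => hu h'.symm, by tauto⟩

/-- if the edge set of the complement of G is partitioned into
complete bipartite subgraphs with parts A i, B i such that every vertex lies in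
at most t of them, then lbox(G) ≤ t. -/
theorem stmt8 {V : Type} [Fintype V] (G : SimpleGraph V) (k t : ℕ)
    (A B : Fin k → Finset V)
    (hdisj : ∀ i, Disjoint (A i) (B i))
    (hedge : ∀ i : Fin k, ∀ a ∈ A i, ∀ b ∈ B i, Gᶜ.Adj a b)
    (hpart : ∀ u v : V, Gᶜ.Adj u v →
      ∃! i : Fin k, (u ∈ A i ∧ v ∈ B i) ∨ (v ∈ A i ∧ u ∈ B i))
    (hfreq : ∀ v : V, {i : Fin k | v ∈ A i ∨ v ∈ B i}.ncard ≤ t) :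
    lbox G ≤ t := by
  have hrep : LocalBoxRep G t := by
    refine ⟨k, fun i => bigraphCompl (A i) (B i), fun i =>
      bigraphCompl_interval _ _ (hdisj i), ?_, ?_⟩
    · intro u v huv
      constructor
      · intro hG i
        refine ⟨huv, ?_⟩
        rintro (⟨ha, hb⟩ | ⟨ha, hb⟩)
        · exact (hedge i u ha v hb).2 hG
        · exact (hedge i v ha u hb).2 hG.symm
      · intro hI
        by_contra hn
        have hc : Gᶜ.Adj u v := ⟨huv, hn⟩
        obtain ⟨i, hi, -⟩ := hpart u v hc
        exact (hI i).2 hi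
    · intro v
      refine le_trans (Set.ncard_le_ncard ?_ (Set.toFinite _)) (hfreq v)
      intro i hi
      by_contra hcon
      simp only [Set.mem_setOf_eq] at hcon
      push_neg at hcon
      exact hi (bigraphCompl_universal _ _ v hcon.1 hcon.2)
  exact Nat.sInf_le hrep
end
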